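/- arXiv:0902.3762 — 7 statements merged into one kernel-verified Lean document; each statement's English description precedes it below -/
import Mathlib

section
/- The cellular automaton T_{f[l,r]} on Z_{p^k}^Z with linear local rule f(x_l,...,x_r) = Σ_{i=l}^{r} λ_i x_i (mod p^k), where p is prime, is invertible if and only if there exists a unique index j with l ≤ j ≤ r such that gcd(p, λ_j) = 1 (i.e., p | λ_i for all i ≠ j and gcd(p, λ_j) = 1). -/
open Finsupp

namespace CAux
variable {R : Type*} [CommRing R]

noncomputable def act (a : AddMonoidAlgebra R ℤ) (x : ℤ → R) : ℤ → R :=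
  fun n => a.coeff.sum fun i c => c * x (n + i)

lemma act_eq_sum (a : AddMonoidAlgebra R ℤ) (x : ℤ → R) (s : Finset ℤ)
    (hs : a.coeff.support ⊆ s) (n : ℤ) : act a x n = ∑ i ∈ s, a.coeff i * x (n + i) := by
  refine Finset.sum_subset hs ?_
  intro i _ hi
  simp [Finsupp.notMem_support_iff.mp hi]

lemma act_single (i : ℤ) (c : R) (x : ℤ → R) (n : ℤ) :
    act (AddMonoidAlgebra.single i c) x n = c * x (n + i) := by
  rw [act_eq_sum (AddMonoidAlgebra.single i c) _ {i} Finsupp.support_single_subset, Finset.sum_singleton, AddMonoidAlgebra.coeff_single,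
    Finsupp.single_eq_same]

lemma act_zero (x : ℤ → R) : act (0 : AddMonoidAlgebra R ℤ) x = 0 := by
  funext n; simp [act]

lemma act_add (a b : AddMonoidAlgebra R ℤ) (x : ℤ → R) (n : ℤ) :
    act (a + b) x n = act a x n + act b x n := by
  rw [act_eq_sum (a + b) _ (a.coeff.support ∪ b.coeff.support) Finsupp.support_add,
    act_eq_sum a x (a.coeff.support ∪ b.coeff.support) Finset.subset_union_left,
    act_eq_sum b x (a.coeff.support ∪ b.coeff.support) Finset.subset_union_right,
    ← Finset.sum_add_distrib]
  exact Finset.sum_congr rfl fun i _ => by rw [AddMonoidAlgebra.coeff_add, Finsupp.add_apply, add_mul]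

lemma act_one (x : ℤ → R) : act (1 : AddMonoidAlgebra R ℤ) x = x := by
  funext n
  rw [AddMonoidAlgebra.one_def, act_single, one_mul, add_zero]

lemma act_single_mul (i : ℤ) (c : R) (b : AddMonoidAlgebra R ℤ) (x : ℤ → R) (n : ℤ) :
    act (AddMonoidAlgebra.single i c * b) x n = c * act b x (n + i) := by
  have hsub : (AddMonoidAlgebra.single i c * b).coeff.support ⊆
      b.coeff.support.map (Equiv.toEmbedding (Equiv.addLeft i)) := by
    intro m hm
    rw [Finsupp.mem_support_iff, AddMonoidAlgebra.coeff_single_mul_apply] at hm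
    have : b.coeff (-i + m) ≠ 0 := fun h => hm (by rw [h, mul_zero])
    simp only [Finset.mem_map, Equiv.toEmbedding_apply, Equiv.coe_addLeft]
    exact ⟨-i + m, Finsupp.mem_support_iff.mpr this, by ring⟩
  rw [act_eq_sum _ _ _ hsub, Finset.sum_map, act, Finsupp.sum, Finset.mul_sum]
  refine Finset.sum_congr rfl fun j _ => ?_
  simp only [Equiv.toEmbedding_apply, Equiv.coe_addLeft, AddMonoidAlgebra.coeff_single_mul_apply]
  rw [neg_add_cancel_left, mul_assoc]
  ring_nf

lemma act_mul (a b : AddMonoidAlgebra R ℤ) (x : ℤ → R) :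
    act (a * b) x = act a (act b x) := by
  induction a using AddMonoidAlgebra.induction with
  | zero => rw [zero_mul, act_zero, act_zero]
  | single_add i c f _ _ ih =>
    funext n
    rw [add_mul, act_add, act_add, ih, act_single_mul, act_single]

lemma act_sum {ι : Type*} [DecidableEq ι] (s : Finset ι) (f : ι → AddMonoidAlgebra R ℤ) (x : ℤ → R) (n : ℤ) :
    act (∑ i ∈ s, f i) x n = ∑ i ∈ s, act (f i) x n := by
  induction s using Finset.induction with
  | empty => simp [act_zero]
  | insert _ _ h ih => rw [Finset.sum_insert h, Finset.sum_insert h, act_add, ih]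

end CAux


namespace CAux2

lemma unit_iff {p k : ℕ} (hp : p.Prime) (hk : 1 ≤ k) (a : ZMod (p ^ k)) :
    IsUnit a ↔ ¬ (p ∣ a.val) := by
  haveI : NeZero (p ^ k) := ⟨pow_ne_zero _ hp.pos.ne'⟩
  conv_lhs => rw [show a = ((a.val : ℕ) : ZMod (p ^ k)) by
    rw [ZMod.natCast_val, ZMod.cast_id]]
  rw [ZMod.isUnit_iff_coprime, Nat.coprime_pow_right_iff (by omega),
    Nat.coprime_comm, Nat.Prime.coprime_iff_not_dvd hp]

lemma eq_p_mul {p k : ℕ} (hp : p.Prime) (hk : 1 ≤ k) (a : ZMod (p ^ k)) (h : ¬ IsUnit a) :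
    ∃ c : ZMod (p ^ k), a = (p : ZMod (p ^ k)) * c := by
  rw [unit_iff hp hk a, not_not] at h
  obtain ⟨m, hm⟩ := h
  refine ⟨(m : ZMod (p ^ k)), ?_⟩
  haveI : NeZero (p ^ k) := ⟨pow_ne_zero _ hp.pos.ne'⟩
  rw [show a = ((a.val : ℕ) : ZMod (p ^ k)) by rw [ZMod.natCast_val, ZMod.cast_id], hm]
  push_cast; ring

lemma rho_eq_zero_iff {p k : ℕ} (hp : p.Prime) (hk : 1 ≤ k) (a : ZMod (p ^ k)) :
    ZMod.castHom (dvd_pow_self p (by omega : k ≠ 0)) (ZMod p) a = 0 ↔ p ∣ a.val := by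
  haveI : NeZero (p ^ k) := ⟨pow_ne_zero _ hp.pos.ne'⟩
  rw [ZMod.castHom_apply, ← ZMod.natCast_val, ZMod.natCast_eq_zero_iff]

lemma pk1_mul_eq {p k : ℕ} (hp : p.Prime) (hk : 1 ≤ k) (a b : ZMod (p ^ k))
    (h : ZMod.castHom (dvd_pow_self p (by omega : k ≠ 0)) (ZMod p) a
       = ZMod.castHom (dvd_pow_self p (by omega : k ≠ 0)) (ZMod p) b) :
    (p : ZMod (p ^ k)) ^ (k - 1) * a = (p : ZMod (p ^ k)) ^ (k - 1) * b := by
  have h0 : ZMod.castHom (dvd_pow_self p (by omega : k ≠ 0)) (ZMod p) (a - b) = 0 := by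
    rw [map_sub, h, sub_self]
  rw [rho_eq_zero_iff hp hk] at h0
  have hnu : ¬ IsUnit (a - b) := by rw [unit_iff hp hk, not_not]; exact h0
  obtain ⟨c, hc⟩ := eq_p_mul hp hk _ hnu
  have hz : (p : ZMod (p ^ k)) ^ (k - 1) * (a - b) = 0 := by
    rw [hc, ← mul_assoc, ← pow_succ, show k - 1 + 1 = k by omega,
      ← Nat.cast_pow, ZMod.natCast_self, zero_mul]
  rw [mul_sub] at hz
  exact sub_eq_zero.mp hz

lemma pk1_ne_zero {p k : ℕ} (hp : p.Prime) (hk : 1 ≤ k) :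
    (p : ZMod (p ^ k)) ^ (k - 1) ≠ 0 := by
  rw [← Nat.cast_pow, Ne, ZMod.natCast_eq_zero_iff]
  intro hdvd
  have h1 := Nat.le_of_dvd (pow_pos hp.pos _) hdvd
  have h2 : p ^ (k - 1) < p ^ k := Nat.pow_lt_pow_right hp.one_lt (by omega)
  omega

lemma rho_natval {p k : ℕ} (hp : p.Prime) (hk : 1 ≤ k) (d : ZMod p) :
    ZMod.castHom (dvd_pow_self p (by omega : k ≠ 0)) (ZMod p)
      ((d.val : ℕ) : ZMod (p ^ k)) = d := by
  haveI : NeZero p := ⟨hp.pos.ne'⟩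
  rw [map_natCast, ZMod.natCast_val, ZMod.cast_id]

lemma exists_ker {p k : ℕ} (hp : p.Prime) (hk : 1 ≤ k) (l r : ℤ)
    (lam : ℤ → ZMod (p ^ k)) (hsupp : ∀ i, i ∉ Finset.Icc l r → lam i = 0)
    (j1 j2 : ℤ) (h1 : IsUnit (lam j1)) (h2 : IsUnit (lam j2)) (hne12 : j1 ≠ j2) :
    ∃ x : ℤ → ZMod (p ^ k), x ≠ 0 ∧
      ∀ n : ℤ, ∑ i ∈ Finset.Icc l r, lam i * x (n + i) = 0 := by
  haveI : Fact p.Prime := ⟨hp⟩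
  haveI : NeZero p := ⟨hp.pos.ne'⟩
  haveI : Fact (1 < p) := ⟨hp.one_lt⟩
  haveI : Fact (1 < p ^ k) := ⟨Nat.one_lt_pow (by omega) hp.one_lt⟩
  set ρ : ZMod (p ^ k) →+* ZMod p :=
    ZMod.castHom (dvd_pow_self p (by omega : k ≠ 0)) (ZMod p) with hρdef
  -- the additive section Ψ
  have key : ∀ c d : ZMod (p ^ k), ρ c = ρ d →
      (p : ZMod (p ^ k)) ^ (k - 1) * c = (p : ZMod (p ^ k)) ^ (k - 1) * d :=
    fun c d h => pk1_mul_eq hp hk c d h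
  set Ψ : ZMod p →+ ZMod (p ^ k) :=
    { toFun := fun c => (p : ZMod (p ^ k)) ^ (k - 1) * ((c.val : ℕ) : ZMod (p ^ k))
      map_zero' := by simp
      map_add' := by
        intro c d
        show (p : ZMod (p ^ k)) ^ (k - 1) * (((c + d).val : ℕ) : ZMod (p ^ k)) = _
        have := key (((c + d).val : ℕ) : ZMod (p ^ k))
          (((c.val : ℕ) : ZMod (p ^ k)) + ((d.val : ℕ) : ZMod (p ^ k)))
          (by rw [map_add, rho_natval hp hk, rho_natval hp hk, rho_natval hp hk])
        rw [this, mul_add] } with hΨdef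
  have hΨmul : ∀ (c : ZMod (p ^ k)) (d : ZMod p), c * Ψ d = Ψ (ρ c * d) := by
    intro c d
    have := key (c * ((d.val : ℕ) : ZMod (p ^ k))) (((ρ c * d).val : ℕ) : ZMod (p ^ k))
      (by rw [map_mul, rho_natval hp hk, rho_natval hp hk])
    show c * ((p : ZMod (p ^ k)) ^ (k - 1) * _) = (p : ZMod (p ^ k)) ^ (k - 1) * _
    rw [← this]; ring
  -- unit indices
  have hmem : ∀ j, IsUnit (lam j) → j ∈ Finset.Icc l r := by
    intro j hj
    by_contra hmemr
    rw [hsupp j hmemr] at hj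
    exact not_isUnit_zero hj
  set S := (Finset.Icc l r).filter (fun i => IsUnit (lam i)) with hSdef
  have hj1S : j1 ∈ S := Finset.mem_filter.mpr ⟨hmem _ h1, h1⟩
  have hj2S : j2 ∈ S := Finset.mem_filter.mpr ⟨hmem _ h2, h2⟩
  have hSne : S.Nonempty := ⟨j1, hj1S⟩
  set a := S.min' hSne with hadef
  set b := S.max' hSne with hbdef
  have haS : a ∈ S := S.min'_mem hSne
  have hbS : b ∈ S := S.max'_mem hSne
  have hab : a < b := by
    have h1a := S.min'_le j1 hj1S
    have h1b := S.le_max' j1 hj1S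
    have h2a := S.min'_le j2 hj2S
    have h2b := S.le_max' j2 hj2S
    omega
  have hua : IsUnit (lam a) := (Finset.mem_filter.mp haS).2
  have hub : IsUnit (lam b) := (Finset.mem_filter.mp hbS).2
  have hbar_ne : ∀ i, IsUnit (lam i) → ρ (lam i) ≠ 0 := fun i hi h0 =>
    ((unit_iff hp hk _).mp hi) ((rho_eq_zero_iff hp hk _).mp h0)
  have hbar_zero : ∀ i, ¬ IsUnit (lam i) → ρ (lam i) = 0 := by
    intro i hi
    obtain ⟨c, hc⟩ := eq_p_mul hp hk _ hi
    rw [hc, map_mul, map_natCast, ZMod.natCast_self, zero_mul]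
  have hout : ∀ i ∈ Finset.Icc l r, i ∉ Finset.Icc a b → ρ (lam i) = 0 := by
    intro i hilr hiab
    refine hbar_zero i fun hu => hiab (Finset.mem_Icc.mpr ⟨?_, ?_⟩)
    · exact S.min'_le i (Finset.mem_filter.mpr ⟨hilr, hu⟩)
    · exact S.le_max' i (Finset.mem_filter.mpr ⟨hilr, hu⟩)
  -- the polynomial
  set g : Polynomial (ZMod p) :=
    ∑ i ∈ Finset.Icc a b, Polynomial.monomial (i - a).toNat (ρ (lam i)) with hgdef
  have hc0 : g.coeff 0 = ρ (lam a) := by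
    rw [hgdef, Polynomial.finset_sum_coeff]
    rw [Finset.sum_eq_single a]
    · rw [Polynomial.coeff_monomial, if_pos (by omega)]
    · intro i hi hia
      have hmi := Finset.mem_Icc.mp hi
      rw [Polynomial.coeff_monomial, if_neg (by omega)]
    · intro h; exact absurd (Finset.mem_Icc.mpr ⟨le_refl a, le_of_lt hab⟩) h
  have hcb : g.coeff (b - a).toNat = ρ (lam b) := by
    rw [hgdef, Polynomial.finset_sum_coeff]
    rw [Finset.sum_eq_single b]
    · rw [Polynomial.coeff_monomial, if_pos rfl]
    · intro i hi hib
      have hmi := Finset.mem_Icc.mp hi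
      rw [Polynomial.coeff_monomial, if_neg (by omega)]
    · intro h; exact absurd (Finset.mem_Icc.mpr ⟨le_of_lt hab, le_refl b⟩) h
  have hg_ne : g ≠ 0 := fun h =>
    hbar_ne a hua (by rw [← hc0, h, Polynomial.coeff_zero])
  have hg_nu : ¬ IsUnit g := by
    intro h
    have hd := Polynomial.natDegree_eq_zero_of_isUnit h
    have hle : (b - a).toNat ≤ g.natDegree :=
      Polynomial.le_natDegree_of_ne_zero (hcb ▸ hbar_ne b hub)
    omega
  obtain ⟨m, hm_irr, hm_dvd⟩ := WfDvdMonoid.exists_irreducible_factor hg_nu hg_ne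
  haveI : Fact (Irreducible m) := ⟨hm_irr⟩
  set α : AdjoinRoot m := AdjoinRoot.root m with hαdef
  have hmkg : AdjoinRoot.mk m g = 0 := AdjoinRoot.mk_eq_zero.mpr hm_dvd
  have hα : α ≠ 0 := by
    intro h0
    have hX0 : AdjoinRoot.mk m Polynomial.X = 0 := by rw [AdjoinRoot.mk_X, ← hαdef, h0]
    obtain ⟨t, ht⟩ := AdjoinRoot.mk_eq_zero.mp hX0
    rcases (Polynomial.irreducible_X (R := ZMod p)).isUnit_or_isUnit ht with hu | hu
    · exact hm_irr.not_isUnit hu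
    · have hXm : Polynomial.X ∣ m := by
        refine ⟨((hu.unit⁻¹ : (Polynomial (ZMod p))ˣ) : Polynomial (ZMod p)), ?_⟩
        rw [← IsUnit.unit_spec hu] at ht
        rw [ht, mul_assoc, Units.mul_inv, mul_one]
      exact hbar_ne a hua (hc0 ▸ Polynomial.X_dvd_iff.mp (hXm.trans hm_dvd))
  set uα : (AdjoinRoot m)ˣ := Units.mk0 α hα with huαdef
  -- the functional
  obtain ⟨φ, hφ⟩ := LinearMap.exists_leftInverse_of_injective
    (Algebra.linearMap (ZMod p) (AdjoinRoot m))
    (LinearMap.ker_eq_bot.mpr (algebraMap (ZMod p) (AdjoinRoot m)).injective)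
  have hφ1 : φ 1 = 1 := by
    have := LinearMap.congr_fun hφ 1
    simpa using this
  set y : ℤ → ZMod p := fun n => φ ((uα ^ n : (AdjoinRoot m)ˣ) : AdjoinRoot m) with hydef
  -- recurrence over the field
  have hrec : ∀ n : ℤ, ∑ i ∈ Finset.Icc l r, ρ (lam i) * y (n + i) = 0 := by
    intro n
    have hsub : Finset.Icc a b ⊆ Finset.Icc l r := by
      have hal := Finset.mem_Icc.mp (Finset.mem_filter.mp haS).1
      have hbl := Finset.mem_Icc.mp (Finset.mem_filter.mp hbS).1
      exact Finset.Icc_subset_Icc hal.1 hbl.2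
    rw [← Finset.sum_subset hsub (fun i hi hni => by rw [hout i hi hni, zero_mul])]
    have hterm : ∀ i ∈ Finset.Icc a b,
        ρ (lam i) * y (n + i) =
          φ (((uα ^ (n + a) : (AdjoinRoot m)ˣ) : AdjoinRoot m) *
            AdjoinRoot.mk m (Polynomial.monomial (i - a).toNat (ρ (lam i)))) := by
      intro i hi
      have hia := Finset.mem_Icc.mp hi
      have hzval : ((uα ^ (n + i) : (AdjoinRoot m)ˣ) : AdjoinRoot m)
          = ((uα ^ (n + a) : (AdjoinRoot m)ˣ) : AdjoinRoot m) * α ^ (i - a).toNat := by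
        rw [show n + i = (n + a) + ((i - a).toNat : ℤ) by omega, zpow_add, Units.val_mul,
          zpow_natCast, Units.val_pow_eq_pow_val, huαdef, Units.val_mk0]
      have hmono : AdjoinRoot.mk m (Polynomial.monomial (i - a).toNat (ρ (lam i)))
          = algebraMap (ZMod p) (AdjoinRoot m) (ρ (lam i)) * α ^ (i - a).toNat := by
        rw [← Polynomial.C_mul_X_pow_eq_monomial, map_mul, map_pow, AdjoinRoot.mk_X,
          AdjoinRoot.mk_C, AdjoinRoot.algebraMap_eq, hαdef]
      rw [hydef]
      show ρ (lam i) * φ _ = _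
      rw [← smul_eq_mul, ← map_smul, hzval, hmono, Algebra.smul_def, mul_left_comm]
    rw [Finset.sum_congr rfl hterm, ← map_sum, ← Finset.mul_sum, ← map_sum, ← hgdef, hmkg,
      mul_zero, map_zero]
  -- lift
  refine ⟨fun n => Ψ (y n), ?_, ?_⟩
  · intro hx
    have h0 : Ψ (y 0) = 0 := congrFun hx 0
    rw [hydef] at h0
    simp only [zpow_zero, Units.val_one, hφ1] at h0
    have : (p : ZMod (p ^ k)) ^ (k - 1) * (((1 : ZMod p).val : ℕ) : ZMod (p ^ k)) = 0 := h0
    rw [ZMod.val_one, Nat.cast_one, mul_one] at this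
    exact pk1_ne_zero hp hk this
  · intro n
    have : ∀ i ∈ Finset.Icc l r, lam i * Ψ (y (n + i)) = Ψ (ρ (lam i) * y (n + i)) :=
      fun i _ => hΨmul (lam i) (y (n + i))
    rw [Finset.sum_congr rfl this, ← map_sum, hrec n, map_zero]

lemma single_zero_pow {R : Type*} [CommRing R] (x : R) (n : ℕ) :
    (AddMonoidAlgebra.single (0 : ℤ) x) ^ n = AddMonoidAlgebra.single (0 : ℤ) (x ^ n) := by
  induction n with
  | zero => rw [pow_zero, pow_zero, AddMonoidAlgebra.one_def]
  | succ n ih =>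
      rw [pow_succ, pow_succ, ih, AddMonoidAlgebra.single_mul_single, add_zero]

lemma isUnit_aalg {p k : ℕ} (hp : p.Prime) (hk : 1 ≤ k) (l r : ℤ)
    (lam : ℤ → ZMod (p ^ k)) (j : ℤ) (hjmem : j ∈ Finset.Icc l r)
    (hj : IsUnit (lam j)) (huniq : ∀ i, IsUnit (lam i) → i = j) :
    IsUnit (∑ i ∈ Finset.Icc l r, AddMonoidAlgebra.single i (lam i)) := by
  obtain ⟨v, hv⟩ := hj
  set A := AddMonoidAlgebra (ZMod (p ^ k)) ℤ
  have pf1 : (AddMonoidAlgebra.single j (lam j) : A) *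
      AddMonoidAlgebra.single (-j) ((↑v⁻¹ : ZMod (p ^ k))) = 1 := by
    rw [AddMonoidAlgebra.single_mul_single, add_neg_cancel, ← hv, Units.mul_inv,
      AddMonoidAlgebra.one_def]
  have pf2 : (AddMonoidAlgebra.single (-j) ((↑v⁻¹ : ZMod (p ^ k))) : A) *
      AddMonoidAlgebra.single j (lam j) = 1 := by
    rw [AddMonoidAlgebra.single_mul_single, neg_add_cancel, ← hv, Units.inv_mul,
      AddMonoidAlgebra.one_def]
  set u : Aˣ := ⟨AddMonoidAlgebra.single j (lam j),
    AddMonoidAlgebra.single (-j) ((↑v⁻¹ : ZMod (p ^ k))), pf1, pf2⟩ with hudef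
  open Classical in
  set c : ℤ → ZMod (p ^ k) := fun i =>
    if h : IsUnit (lam i) then 0 else Classical.choose (eq_p_mul hp hk _ h) with hcdef
  set b : A := ∑ i ∈ (Finset.Icc l r).erase j, AddMonoidAlgebra.single i (lam i) with hbdef
  have hsplit : (∑ i ∈ Finset.Icc l r, AddMonoidAlgebra.single i (lam i) : A)
      = AddMonoidAlgebra.single j (lam j) + b :=
    (Finset.add_sum_erase _ _ hjmem).symm
  have hb : b = AddMonoidAlgebra.single (0 : ℤ) ((p : ZMod (p ^ k))) *
      ∑ i ∈ (Finset.Icc l r).erase j, AddMonoidAlgebra.single i (c i) := by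
    rw [Finset.mul_sum]
    refine Finset.sum_congr rfl fun i hi => ?_
    have hij : i ≠ j := (Finset.mem_erase.mp hi).1
    have hnu : ¬ IsUnit (lam i) := fun h => hij (huniq i h)
    have hci : lam i = (p : ZMod (p ^ k)) * c i := by
      rw [hcdef]; simp only [dif_neg hnu]
      exact Classical.choose_spec (eq_p_mul hp hk _ hnu)
    rw [AddMonoidAlgebra.single_mul_single, zero_add, ← hci]
  have hnil : IsNilpotent ((↑u⁻¹ : A) * b) := by
    refine ⟨k, ?_⟩
    rw [hb, show (↑u⁻¹ : A) * (AddMonoidAlgebra.single (0 : ℤ) ((p : ZMod (p ^ k))) * _)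
        = AddMonoidAlgebra.single (0 : ℤ) ((p : ZMod (p ^ k))) *
          ((↑u⁻¹ : A) * ∑ i ∈ (Finset.Icc l r).erase j, AddMonoidAlgebra.single i (c i))
      by ring, mul_pow, single_zero_pow, ← Nat.cast_pow, ZMod.natCast_self,
      AddMonoidAlgebra.single_zero, zero_mul]
  have hfin : (∑ i ∈ Finset.Icc l r, AddMonoidAlgebra.single i (lam i) : A)
      = ↑u * (1 + (↑u⁻¹ : A) * b) := by
    rw [mul_add, mul_one, ← mul_assoc, Units.mul_inv, one_mul, hsplit]
  rw [hfin]
  exact u.isUnit.mul hnil.isUnit_one_add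

end CAux2

/-- The linear cellular automaton `T_{f[l,r]}` on `(ZMod (p^k))^ℤ`, with local rule
`f(x_l,...,x_r) = Σ_{i=l}^r λ_i x_i (mod p^k)` (`p` prime, coefficients supported on
`[l,r]` and not all zero), is invertible (bijective) iff there is a unique index `j`
whose coefficient `λ_j` is coprime to `p`, i.e. a unit of `ZMod (p^k)`
(equivalently `p ∣ λ_i` for all `i ≠ j` and `gcd(p, λ_j) = 1`). -/
theorem stmt3 (p k : ℕ) (hp : p.Prime) (hk : 1 ≤ k) (l r : ℤ) (hlr : l ≤ r)
    (lam : ℤ → ZMod (p ^ k)) (hsupp : ∀ i, i ∉ Finset.Icc l r → lam i = 0)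
    (hne : ∃ i, lam i ≠ 0) :
    Function.Bijective
        (fun (x : ℤ → ZMod (p ^ k)) (n : ℤ) => ∑ i ∈ Finset.Icc l r, lam i * x (n + i)) ↔
    ∃! j : ℤ, IsUnit (lam j) := by
  haveI : Fact (1 < p ^ k) := ⟨Nat.one_lt_pow (by omega) hp.one_lt⟩
  constructor
  · intro hbij
    have hex : ∃ j, IsUnit (lam j) := by
      by_contra hno
      push_neg at hno
      obtain ⟨x, hx⟩ := hbij.surjective (fun _ => 1)
      have h1 : ∑ i ∈ Finset.Icc l r, lam i * x (0 + i) = 1 := congrFun hx 0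
      have hdvd : (p : ZMod (p ^ k)) ∣ ∑ i ∈ Finset.Icc l r, lam i * x (0 + i) := by
        refine Finset.dvd_sum fun i _ => ?_
        obtain ⟨c, hc⟩ := CAux2.eq_p_mul hp hk _ (hno i)
        exact ⟨c * x (0 + i), by rw [hc, mul_assoc]⟩
      rw [h1] at hdvd
      have hunit : IsUnit ((p : ZMod (p ^ k))) := isUnit_of_dvd_one hdvd
      rw [CAux2.unit_iff hp hk] at hunit
      apply hunit
      rw [ZMod.val_natCast]
      exact (Nat.dvd_mod_iff (dvd_pow_self p (by omega : k ≠ 0))).mpr dvd_rfl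
    obtain ⟨j, hj⟩ := hex
    refine ⟨j, hj, ?_⟩
    intro y hy
    by_contra hyj
    obtain ⟨x, hxne, hxker⟩ := CAux2.exists_ker hp hk l r lam hsupp y j hy hj hyj
    apply hxne
    have h0 : (fun (x : ℤ → ZMod (p ^ k)) (n : ℤ) => ∑ i ∈ Finset.Icc l r, lam i * x (n + i)) x
        = (fun (x : ℤ → ZMod (p ^ k)) (n : ℤ) => ∑ i ∈ Finset.Icc l r, lam i * x (n + i)) 0 := by
      funext n
      show ∑ i ∈ Finset.Icc l r, lam i * x (n + i) = ∑ i ∈ Finset.Icc l r, lam i * (0 : ZMod (p ^ k))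
      rw [hxker n, Finset.sum_congr rfl fun i _ => mul_zero (lam i), Finset.sum_const_zero]
    exact hbij.injective h0
  · rintro ⟨j, hj, huniq⟩
    have hjmem : j ∈ Finset.Icc l r := by
      by_contra h
      rw [hsupp j h] at hj
      exact not_isUnit_zero hj
    obtain ⟨w, hw⟩ := CAux2.isUnit_aalg hp hk l r lam j hjmem hj huniq
    have hTeq : (fun (x : ℤ → ZMod (p ^ k)) (n : ℤ) => ∑ i ∈ Finset.Icc l r, lam i * x (n + i))
        = CAux.act (∑ i ∈ Finset.Icc l r, AddMonoidAlgebra.single i (lam i)) := by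
      funext x n
      rw [CAux.act_sum]
      exact Finset.sum_congr rfl fun i _ => (CAux.act_single i (lam i) x n).symm
    rw [hTeq]
    rw [Function.bijective_iff_has_inverse]
    refine ⟨CAux.act ((↑w⁻¹ : AddMonoidAlgebra (ZMod (p ^ k)) ℤ)), ?_, ?_⟩
    · intro x
      have h1 : ((↑w⁻¹ : AddMonoidAlgebra (ZMod (p ^ k)) ℤ)) *
          (∑ i ∈ Finset.Icc l r, AddMonoidAlgebra.single i (lam i)) = 1 := by
        rw [← hw, Units.inv_mul]
      rw [← CAux.act_mul, h1, CAux.act_one]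
    · intro x
      have h1 : (∑ i ∈ Finset.Icc l r, AddMonoidAlgebra.single i (lam i)) *
          ((↑w⁻¹ : AddMonoidAlgebra (ZMod (p ^ k)) ℤ)) = 1 := by
        rw [← hw, Units.mul_inv]
      rw [← CAux.act_mul, h1, CAux.act_one]
end

section
/- Let p be prime and consider the invertible linear cellular automaton T on Z_{p²}^Z with local rule f(x_l,...,x_r) = p·Σ_{i=l}^{r-1} β_i x_i + λ_r x_r (mod p²) where gcd(p, λ_r) = 1. Then the inverse of T is the cellular automaton with a local rule g supported on coordinates -(2r-l),...,-r of the form g(x_{-(2r-l)},...,x_{-r}) = -p·Σ_{i=-(2r-l)}^{-r} γ_i x_i + λ_r^{-1} x_{-r} (mod p²), for suitable γ_i ∈ Z_{p²}; in particular the inverse of a right permutative invertible linear CA is again right permutative. -/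
/-- Let `p` be prime and `T` the invertible linear CA on `(ZMod p²)^ℤ` with right
permutative local rule `f(x_l,...,x_r) = p·Σ_{i=l}^{r-1} β_i x_i + λ_r x_r (mod p²)`,
where `λ_r` is a unit of `ZMod p²` with inverse `λ_r⁻¹`. Then the inverse of `T` is the CA
with local rule supported on coordinates `-(2r-l),...,-r` of the form
`g(x_{-(2r-l)},...,x_{-r}) = -p·Σ_{i=-(2r-l)}^{-r} γ_i x_i + λ_r⁻¹ x_{-r}` for suitable
`γ_i ∈ ZMod p²`; in particular the total coefficient of its rightmost variable `x_{-r}`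
is a unit, i.e. the inverse of a right permutative invertible linear CA is again right
permutative. -/
theorem stmt7 (p : ℕ) (hp : p.Prime) (l r : ℤ) (hlr : l < r)
    (β : ℤ → ZMod (p ^ 2)) (lamr lamrinv : ZMod (p ^ 2)) (hinv : lamrinv * lamr = 1)
    (T : (ℤ → ZMod (p ^ 2)) → ℤ → ZMod (p ^ 2))
    (hT : ∀ x n, T x n =
      (p : ZMod (p ^ 2)) * ∑ i ∈ Finset.Icc l (r - 1), β i * x (n + i) + lamr * x (n + r)) :
    ∃ γ : ℤ → ZMod (p ^ 2),
      (∀ x : ℤ → ZMod (p ^ 2), ∀ n : ℤ,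
        (fun (y : ℤ → ZMod (p ^ 2)) (k : ℤ) =>
            -((p : ZMod (p ^ 2)) * ∑ i ∈ Finset.Icc (-(2 * r - l)) (-r), γ i * y (k + i)) +
              lamrinv * y (k - r)) (T x) n = x n) ∧
      (∀ x : ℤ → ZMod (p ^ 2), ∀ n : ℤ,
        T (fun k =>
            -((p : ZMod (p ^ 2)) * ∑ i ∈ Finset.Icc (-(2 * r - l)) (-r), γ i * x (k + i)) +
              lamrinv * x (k - r)) n = x n) ∧
      IsUnit (lamrinv - (p : ZMod (p ^ 2)) * γ (-r)) := by
  have hp2 : (p : ZMod (p ^ 2)) * (p : ZMod (p ^ 2)) = 0 := by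
    rw [← Nat.cast_mul, ← pow_two, ZMod.natCast_self]
  set γ : ℤ → ZMod (p ^ 2) :=
    fun j => if j = -r then 0 else lamrinv * (lamrinv * β (j + 2 * r)) with hγ
  -- rewrite the γ-sum as a sum over Icc l (r-1)
  have hsum : ∀ (y : ℤ → ZMod (p ^ 2)) (m : ℤ),
      ∑ i ∈ Finset.Icc (-(2 * r - l)) (-r), γ i * y (m + i)
        = ∑ i ∈ Finset.Icc l (r - 1), lamrinv * (lamrinv * β i) * y (m + i - 2 * r) := by
    intro y m
    have hmap : Finset.Icc (-(2 * r - l)) (-r)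
        = (Finset.Icc l r).map (addRightEmbedding (-(2 * r))) := by
      rw [Finset.map_add_right_Icc]
      congr 1 <;> ring
    rw [hmap, Finset.sum_map]
    have hins : Finset.Icc l r = insert r (Finset.Icc l (r - 1)) := by
      ext i
      simp only [Finset.mem_Icc, Finset.mem_insert]
      omega
    rw [hins, Finset.sum_insert (by intro h; rw [Finset.mem_Icc] at h; omega)]
    have hr0 : γ (addRightEmbedding (-(2 * r)) r) * y (m + addRightEmbedding (-(2 * r)) r) = 0 := by
      have he : r + -(2 * r) = -r := by ring
      simp only [addRightEmbedding_apply, hγ, he, if_pos, zero_mul]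
    rw [hr0, zero_add]
    refine Finset.sum_congr rfl fun i hi => ?_
    simp only [Finset.mem_Icc] at hi
    simp only [addRightEmbedding_apply, hγ]
    rw [if_neg (by omega)]
    have h1 : i + -(2 * r) + 2 * r = i := by ring
    have h2 : m + (i + -(2 * r)) = m + i - 2 * r := by ring
    rw [h1, h2]
  -- key consequence of hT modulo p
  have hpT : ∀ (x : ℤ → ZMod (p ^ 2)) (m : ℤ),
      (p : ZMod (p ^ 2)) * T x m = (p : ZMod (p ^ 2)) * (lamr * x (m + r)) := by
    intro x m
    rw [hT]
    rw [mul_add, ← mul_assoc, hp2]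
    ring
  refine ⟨γ, ?_, ?_, ?_⟩
  · intro x n
    simp only
    rw [hsum, hT x (n - r)]
    have hmuls : (p : ZMod (p ^ 2)) *
          ∑ i ∈ Finset.Icc l (r - 1), lamrinv * (lamrinv * β i) * T x (n + i - 2 * r)
        = ∑ i ∈ Finset.Icc l (r - 1),
            (p : ZMod (p ^ 2)) * (lamrinv * (lamrinv * β i) * (lamr * x (n + i - r))) := by
      rw [Finset.mul_sum]
      refine Finset.sum_congr rfl fun i hi => ?_
      have := hpT x (n + i - 2 * r)
      have harg : n + i - 2 * r + r = n + i - r := by ring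
      rw [harg] at this
      calc (p : ZMod (p ^ 2)) * (lamrinv * (lamrinv * β i) * T x (n + i - 2 * r))
          = lamrinv * (lamrinv * β i) * ((p : ZMod (p ^ 2)) * T x (n + i - 2 * r)) := by ring
        _ = lamrinv * (lamrinv * β i) * ((p : ZMod (p ^ 2)) * (lamr * x (n + i - r))) := by
            rw [this]
        _ = (p : ZMod (p ^ 2)) * (lamrinv * (lamrinv * β i) * (lamr * x (n + i - r))) := by ring
    rw [hmuls]
    rw [mul_add, Finset.mul_sum, Finset.mul_sum]
    have hcancel : ∑ i ∈ Finset.Icc l (r - 1),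
          (p : ZMod (p ^ 2)) * (lamrinv * (lamrinv * β i) * (lamr * x (n + i - r)))
        = ∑ i ∈ Finset.Icc l (r - 1), lamrinv * ((p : ZMod (p ^ 2)) * (β i * x (n - r + i))) := by
      refine Finset.sum_congr rfl fun i hi => ?_
      have harg : n + i - r = n - r + i := by ring
      rw [harg]
      linear_combination ((p : ZMod (p ^ 2)) * lamrinv * β i * x (n - r + i)) * hinv
    rw [hcancel]
    have harg2 : n - r + r = n := by ring
    rw [harg2]
    linear_combination (x n) * hinv
  · intro x n
    rw [hT]
    rw [hsum x (n + r)]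
    have hpg : ∀ m : ℤ, (p : ZMod (p ^ 2)) *
          (-((p : ZMod (p ^ 2)) * ∑ i ∈ Finset.Icc (-(2 * r - l)) (-r), γ i * x (m + i)) +
            lamrinv * x (m - r))
        = (p : ZMod (p ^ 2)) * (lamrinv * x (m - r)) := by
      intro m
      rw [mul_add, mul_neg, ← mul_assoc, hp2]
      ring
    have hmuls : (p : ZMod (p ^ 2)) * ∑ i ∈ Finset.Icc l (r - 1),
          β i * (-((p : ZMod (p ^ 2)) *
              ∑ j ∈ Finset.Icc (-(2 * r - l)) (-r), γ j * x (n + i + j)) +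
            lamrinv * x (n + i - r))
        = ∑ i ∈ Finset.Icc l (r - 1),
            (p : ZMod (p ^ 2)) * (β i * (lamrinv * x (n + i - r))) := by
      rw [Finset.mul_sum]
      refine Finset.sum_congr rfl fun i hi => ?_
      have := hpg (n + i)
      calc (p : ZMod (p ^ 2)) * (β i * (-((p : ZMod (p ^ 2)) *
              ∑ j ∈ Finset.Icc (-(2 * r - l)) (-r), γ j * x (n + i + j)) +
            lamrinv * x (n + i - r)))
          = β i * ((p : ZMod (p ^ 2)) * (-((p : ZMod (p ^ 2)) *
              ∑ j ∈ Finset.Icc (-(2 * r - l)) (-r), γ j * x (n + i + j)) +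
            lamrinv * x (n + i - r))) := by ring
        _ = β i * ((p : ZMod (p ^ 2)) * (lamrinv * x (n + i - r))) := by rw [this]
        _ = (p : ZMod (p ^ 2)) * (β i * (lamrinv * x (n + i - r))) := by ring
    rw [hmuls]
    have hsum2 : ∀ i : ℤ, n + r + i - 2 * r = n + i - r := fun i => by ring
    simp only [hsum2]
    rw [mul_add, mul_neg, Finset.mul_sum, Finset.mul_sum]
    have harg : n + r - r = n := by ring
    rw [harg]
    have hcancel : ∑ i ∈ Finset.Icc l (r - 1),
          (p : ZMod (p ^ 2)) * (β i * (lamrinv * x (n + i - r)))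
        = ∑ i ∈ Finset.Icc l (r - 1),
            lamr * ((p : ZMod (p ^ 2)) * (lamrinv * (lamrinv * β i) * x (n + i - r))) := by
      refine Finset.sum_congr rfl fun i hi => ?_
      linear_combination (-((p : ZMod (p ^ 2)) * lamrinv * β i * x (n + i - r))) * hinv
    rw [hcancel]
    linear_combination (x n) * hinv
  · have h0 : γ (-r) = 0 := by rw [hγ]; simp
    rw [h0, mul_zero, sub_zero]
    exact IsUnit.of_mul_eq_one (a := lamrinv) lamr hinv
end

section
/- If the linear local rule f(x_l,...,x_r) = Σ_{i=l}^{r} λ_i x_i (mod p^k) over Z_{p^k} (p prime) satisfies gcd(p, λ_r) = 1 and p | λ_i for all i ≠ r, then f is right permutative and the cellular automaton T_{f[l,r]} is invertible. -/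
private def shiftMul (R : Type*) [CommRing R] (c : R) (d : ℤ) :
    Module.End R (ℤ → R) where
  toFun x n := c * x (n + d)
  map_add' x y := by funext n; simp [mul_add]
  map_smul' a x := by funext n; simp [mul_left_comm]

private lemma shiftMul_apply (R : Type*) [CommRing R] (c : R) (d : ℤ) (x : ℤ → R) (n : ℤ) :
    shiftMul R c d x n = c * x (n + d) := rfl

private lemma shiftMul_mul (R : Type*) [CommRing R] (c c' : R) (d d' : ℤ) :
    shiftMul R c d * shiftMul R c' d' = shiftMul R (c * c') (d + d') := by
  apply LinearMap.ext; intro x; funext n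
  simp only [Module.End.mul_apply, shiftMul_apply, mul_assoc, add_assoc]

private lemma shiftMul_one (R : Type*) [CommRing R] : shiftMul R 1 0 = 1 := by
  apply LinearMap.ext; intro x; funext n
  simp [shiftMul_apply]

private lemma shiftMul_smul (R : Type*) [CommRing R] (a c : R) (d : ℤ) :
    shiftMul R (a * c) d = a • shiftMul R c d := by
  apply LinearMap.ext; intro x; funext n
  simp [shiftMul_apply, mul_assoc]

private lemma ca_bijective (R : Type*) [CommRing R] (l r : ℤ) (hlr : l ≤ r)
    (lam : ℤ → R) (q : R) (k : ℕ) (hq : q ^ k = 0) (hr : IsUnit (lam r))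
    (hothers : ∀ i ∈ Finset.Icc l r, i ≠ r → q ∣ lam i) :
    Function.Bijective
      (fun (x : ℤ → R) (n : ℤ) => ∑ i ∈ Finset.Icc l r, lam i * x (n + i)) := by
  classical
  have hrIcc : r ∈ Finset.Icc l r := Finset.mem_Icc.mpr ⟨hlr, le_refl r⟩
  let c : ℤ → R := fun i => if h : q ∣ lam i then h.choose else 0
  have hc : ∀ i ∈ (Finset.Icc l r).erase r, lam i = q * c i := by
    intro i hi
    have h : q ∣ lam i :=
      hothers i (Finset.mem_of_mem_erase hi) (Finset.ne_of_mem_erase hi)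
    simp only [c, dif_pos h]
    exact h.choose_spec
  let T : Module.End R (ℤ → R) := ∑ i ∈ Finset.Icc l r, shiftMul R (lam i) i
  let S : Module.End R (ℤ → R) := shiftMul R (lam r) r
  let N' : Module.End R (ℤ → R) := ∑ i ∈ (Finset.Icc l r).erase r, shiftMul R (c i) i
  obtain ⟨u, hu⟩ := hr
  let Sinv : Module.End R (ℤ → R) := shiftMul R (↑u⁻¹ : R) (-r)
  have hSSinv : S * Sinv = 1 := by
    show shiftMul R (lam r) r * shiftMul R (↑u⁻¹ : R) (-r) = 1
    rw [shiftMul_mul, ← hu, u.mul_inv, add_neg_cancel, shiftMul_one]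
  have hSinvS : Sinv * S = 1 := by
    show shiftMul R (↑u⁻¹ : R) (-r) * shiftMul R (lam r) r = 1
    rw [shiftMul_mul, ← hu, u.inv_mul, neg_add_cancel, shiftMul_one]
  have hS : IsUnit S := ⟨⟨S, Sinv, hSSinv, hSinvS⟩, rfl⟩
  have hT : T = S + q • N' := by
    show (∑ i ∈ Finset.Icc l r, shiftMul R (lam i) i) = _
    rw [← Finset.add_sum_erase _ _ hrIcc, Finset.smul_sum]
    congr 1
    exact Finset.sum_congr rfl fun i hi => by rw [hc i hi, shiftMul_smul]
  let M : Module.End R (ℤ → R) := Sinv * N'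
  have hnil : IsNilpotent (q • M) := ⟨k, by rw [smul_pow, hq, zero_smul]⟩
  have hunit1 : IsUnit (1 + q • M) := hnil.isUnit_one_add
  have hfac : S * (1 + q • M) = S + q • N' := by
    show S * (1 + q • (Sinv * N')) = S + q • N'
    rw [mul_add, mul_one, mul_smul_comm, ← mul_assoc, hSSinv, one_mul]
  have hTfac : T = S * (1 + q • M) := by rw [hfac, hT]
  have hTunit : IsUnit T := hTfac ▸ hS.mul hunit1
  have hTbij : Function.Bijective (⇑T) := (Module.End.isUnit_iff T).mp hTunit
  have heq : (fun (x : ℤ → R) (n : ℤ) => ∑ i ∈ Finset.Icc l r, lam i * x (n + i)) = ⇑T := by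
    funext x n
    show _ = (∑ i ∈ Finset.Icc l r, shiftMul R (lam i) i) x n
    rw [LinearMap.coe_sum, Finset.sum_apply, Finset.sum_apply]
    exact Finset.sum_congr rfl fun i _ => rfl
  rw [heq]
  exact hTbij

/-- If the linear local rule `f(x_l,...,x_r) = Σ_{i=l}^r λ_i x_i (mod p^k)` over
`ZMod (p^k)` (`p` prime) satisfies `gcd(p, λ_r) = 1` (i.e. `λ_r` is a unit) and
`p ∣ λ_i` for all `i ≠ r`, then `f` is right permutative (the map in the last variable
is a bijection for each fixed choice of the other variables) and the cellular automaton
`T_{f[l,r]}` is invertible (bijective). -/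
theorem stmt8 (p k : ℕ) (hp : p.Prime) (hk : 1 ≤ k) (l r : ℤ) (hlr : l ≤ r)
    (lam : ℤ → ZMod (p ^ k)) (hr : IsUnit (lam r))
    (hothers : ∀ i ∈ Finset.Icc l r, i ≠ r → (p : ZMod (p ^ k)) ∣ lam i) :
    (∀ x : ℤ → ZMod (p ^ k),
      Function.Bijective fun a : ZMod (p ^ k) =>
        ∑ i ∈ Finset.Icc l r, lam i * Function.update x r a i) ∧
    Function.Bijective
      (fun (x : ℤ → ZMod (p ^ k)) (n : ℤ) => ∑ i ∈ Finset.Icc l r, lam i * x (n + i)) := by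
  classical
  have hrIcc : r ∈ Finset.Icc l r := Finset.mem_Icc.mpr ⟨hlr, le_refl r⟩
  constructor
  · intro x
    have key : ∀ a : ZMod (p ^ k), (∑ i ∈ Finset.Icc l r, lam i * Function.update x r a i)
        = lam r * a + ∑ i ∈ (Finset.Icc l r).erase r, lam i * x i := by
      intro a
      rw [← Finset.add_sum_erase _ _ hrIcc, Function.update_self]
      congr 1
      exact Finset.sum_congr rfl fun i hi => by
        rw [Function.update_of_ne (Finset.ne_of_mem_erase hi)]
    obtain ⟨u, hu⟩ := hr
    set C := ∑ i ∈ (Finset.Icc l r).erase r, lam i * x i with hC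
    constructor
    · intro a b hab
      simp only [key] at hab
      have h2 : lam r * a = lam r * b := add_right_cancel hab
      rw [← hu] at h2
      calc a = ↑u⁻¹ * (↑u * a) := (u.inv_mul_cancel_left a).symm
        _ = ↑u⁻¹ * (↑u * b) := by rw [h2]
        _ = b := u.inv_mul_cancel_left b
    · intro b
      refine ⟨(↑u⁻¹ : ZMod (p ^ k)) * (b - C), ?_⟩
      show (∑ i ∈ Finset.Icc l r,
          lam i * Function.update x r ((↑u⁻¹ : ZMod (p ^ k)) * (b - C)) i) = b
      rw [key, ← hu, ← mul_assoc, u.mul_inv, one_mul, sub_add_cancel]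
  · have hpk : ((p : ZMod (p ^ k))) ^ k = 0 := by
      have : ((p ^ k : ℕ) : ZMod (p ^ k)) = 0 := ZMod.natCast_self _
      rwa [Nat.cast_pow] at this
    exact ca_bijective (ZMod (p ^ k)) l r hlr lam (p : ZMod (p ^ k)) k hpk hr hothers
end

section
/- Any surjective cellular automaton T_{f[l,r]} on Z_m^Z preserves the uniform Bernoulli measure μ: for every Borel set A, μ(T^{-1}A) = μ(A). -/
open MeasureTheory
open scoped ENNReal

instance (m : ℕ) : MeasurableSpace (ZMod m) := ⊤

set_option linter.unusedSectionVars false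
set_option linter.unusedVariables false

namespace CAProof

variable {A : Type*}



/-- The word map of a local rule of width `w`. -/
def wmap (w : ℕ) (f : (Fin w → A) → A) (n : ℕ) (u : Fin (n + (w-1)) → A) : Fin n → A :=
  fun i => f fun t => u ⟨i + t, by omega⟩

lemma nat_aux (p : ℕ) : ∀ k, p^k * (p + k) ≤ (p+1)^k * p := by
  intro k
  induction k with
  | zero => simp
  | succ k ih =>
    have hpk : p ^ k * p ≤ (p+1)^k * p :=
      Nat.mul_le_mul_right _ (Nat.pow_le_pow_left (by omega) k)
    calc p ^ (k+1) * (p + (k+1)) = p * (p ^ k * (p + k)) + p ^ k * p := by ring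
      _ ≤ p * ((p+1)^k * p) + (p+1)^k * p :=
          Nat.add_le_add (Nat.mul_le_mul_left _ ih) hpk
      _ = (p+1)^(k+1) * p := by ring

lemma pow_le_forall (p q : ℕ) (hp : 1 ≤ p) (h : ∀ k, q ^ k ≤ p ^ k * q) : q ≤ p := by
  by_contra hlt
  push_neg at hlt
  set k := p * q with hk
  have h1 : q ^ k * p ≤ p ^ k * q * p := Nat.mul_le_mul_right _ (h k)
  have h2 : p ^ k * (p + k) ≤ (p+1)^k * p := nat_aux p k
  have h3 : (p+1)^k * p ≤ q ^ k * p :=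
    Nat.mul_le_mul_right _ (Nat.pow_le_pow_left (by omega) k)
  have h4 : p ^ k * q * p < p ^ k * (p + k) := by
    have hpk : 0 < p ^ k := Nat.pow_pos (by omega)
    have : q * p < p + k := by
      have : 1 * 1 ≤ p * q := Nat.mul_le_mul hp (by omega)
      calc q * p = p * q := Nat.mul_comm _ _
        _ < p + p * q := by omega
        _ = p + k := rfl
    calc p ^ k * q * p = p ^ k * (q * p) := by ring
      _ < p ^ k * (p + k) := Nat.mul_lt_mul_of_le_of_lt (le_refl _) this hpk
  omega




lemma gN_pos {n w k : ℕ} (c : Fin (k*(n+(w-1)))) : 0 < n + (w-1) :=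
  Nat.pos_of_ne_zero fun h => absurd (by simpa [h] using c.2) (Nat.not_lt_zero (c:ℕ))

lemma gdiv_lt {n w k : ℕ} (c : Fin (k*(n+(w-1)))) : (c : ℕ) / (n+(w-1)) < k :=
  (Nat.div_lt_iff_lt_mul (gN_pos c)).mpr c.2

/-- The target word used in the injection argument: `k` copies of `v` with free gaps. -/
def gword (n w k : ℕ) (v : Fin n → A) (g : Fin k → Fin (w-1) → A) :
    Fin (k*(n+(w-1))) → A := fun c =>
  if h : (c:ℕ) % (n+(w-1)) < n then v ⟨(c:ℕ) % (n+(w-1)), h⟩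
  else g ⟨(c:ℕ)/(n+(w-1)), gdiv_lt c⟩ ⟨(c:ℕ) % (n+(w-1)) - n, by
    have := Nat.mod_lt (c:ℕ) (gN_pos c); omega⟩

lemma gword_apply_v {n w k : ℕ} (v : Fin n → A) (g : Fin k → Fin (w-1) → A)
    (i : Fin k) (j : Fin n) (h : (i:ℕ)*(n+(w-1)) + (j:ℕ) < k*(n+(w-1))) :
    gword n w k v g ⟨(i:ℕ)*(n+(w-1)) + (j:ℕ), h⟩ = v j := by
  have hmod : ((i:ℕ)*(n+(w-1)) + (j:ℕ)) % (n+(w-1)) = (j:ℕ) := by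
    rw [Nat.mul_comm, Nat.mul_add_mod]
    exact Nat.mod_eq_of_lt (by have := j.2; omega)
  simp only [gword]
  rw [dif_pos (by rw [hmod]; exact j.2)]
  congr 1
  exact Fin.ext (by simpa using hmod)

lemma gword_apply_g {n w k : ℕ} (v : Fin n → A) (g : Fin k → Fin (w-1) → A)
    (i : Fin k) (j : Fin (w-1)) (h : (i:ℕ)*(n+(w-1)) + n + (j:ℕ) < k*(n+(w-1))) :
    gword n w k v g ⟨(i:ℕ)*(n+(w-1)) + n + (j:ℕ), h⟩ = g i j := by
  have hN0 : 0 < n + (w-1) := by have := j.2; omega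
  have hlt : n + (j:ℕ) < n + (w-1) := by have := j.2; omega
  have hmod : ((i:ℕ)*(n+(w-1)) + n + (j:ℕ)) % (n+(w-1)) = n + (j:ℕ) := by
    rw [Nat.add_assoc, Nat.mul_comm, Nat.mul_add_mod]
    exact Nat.mod_eq_of_lt hlt
  have hdivv : ((i:ℕ)*(n+(w-1)) + n + (j:ℕ)) / (n+(w-1)) = (i:ℕ) := by
    rw [Nat.add_assoc, Nat.mul_comm, Nat.mul_add_div hN0, Nat.div_eq_of_lt hlt, Nat.add_zero]
  simp only [gword]
  rw [dif_neg (by rw [hmod]; omega)]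
  congr 1
  · exact Fin.ext (by simpa using hdivv)
  · exact Fin.ext (by simp [hmod])




lemma balance_lower [Fintype A] [DecidableEq A] (w : ℕ) (f : (Fin w → A) → A)
    (hs : ∀ n, Function.Surjective (wmap w f n)) (n : ℕ) (hn : 1 ≤ n) (v : Fin n → A) :
    Fintype.card A ^ (w-1) ≤ Fintype.card {u // wmap w f n u = v} := by
  have hN0 : 0 < n + (w-1) := by omega
  haveI : Nonempty {u // wmap w f n u = v} := (hs n v).elim fun u hu => ⟨⟨u, hu⟩⟩
  apply pow_le_forall _ _ Fintype.card_pos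
  intro k
  choose X hX using fun g : Fin k → Fin (w-1) → A => hs (k*(n+(w-1))) (gword n w k v g)
  have hwin' : ∀ (i : Fin k) (j : ℕ), j < n + (w-1) →
      (i:ℕ)*(n+(w-1)) + j < k*(n+(w-1)) := by
    intro i j hj
    have h1 : ((i:ℕ)+1) * (n+(w-1)) ≤ k * (n+(w-1)) := Nat.mul_le_mul_right _ i.2
    have h2 : ((i:ℕ)+1) * (n+(w-1)) = (i:ℕ)*(n+(w-1)) + (n+(w-1)) := by ring
    omega
  have hwin : ∀ (i : Fin k) (j : ℕ), j < n + (w-1) →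
      (i:ℕ)*(n+(w-1)) + j < k*(n+(w-1)) + (w-1) := by
    intro i j hj
    have := hwin' i j hj
    omega
  have htlt : ∀ j : Fin (w-1), k*(n+(w-1)) + (j:ℕ) < k*(n+(w-1)) + (w-1) :=
    fun j => Nat.add_lt_add_left j.2 _
  have hwf : ∀ (g : Fin k → Fin (w-1) → A) (i : Fin k),
      wmap w f n (fun j : Fin (n+(w-1)) => X g ⟨(i:ℕ)*(n+(w-1)) + j, hwin i j j.2⟩) = v := by
    intro g i
    funext jj
    have hlt : (i:ℕ)*(n+(w-1)) + (jj:ℕ) < k*(n+(w-1)) := hwin' i jj (by have := jj.2; omega)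
    have h1 := congrFun (hX g) ⟨(i:ℕ)*(n+(w-1)) + (jj:ℕ), hlt⟩
    rw [gword_apply_v] at h1
    rw [← h1]
    simp only [wmap]
    congr 1
    funext t
    congr 1
    exact Fin.ext (by simp [Nat.add_assoc])
  have key : ∀ g1 g2 : Fin k → Fin (w-1) → A,
      (fun i : Fin k => (⟨fun j : Fin (n+(w-1)) => X g1 ⟨(i:ℕ)*(n+(w-1)) + j, hwin i j j.2⟩,
          hwf g1 i⟩ : {u // wmap w f n u = v}))
        = (fun i : Fin k => (⟨fun j : Fin (n+(w-1)) => X g2 ⟨(i:ℕ)*(n+(w-1)) + j, hwin i j j.2⟩,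
          hwf g2 i⟩ : {u // wmap w f n u = v})) →
      (fun j : Fin (w-1) => X g1 ⟨k*(n+(w-1)) + j, htlt j⟩)
        = (fun j : Fin (w-1) => X g2 ⟨k*(n+(w-1)) + j, htlt j⟩) →
      g1 = g2 := by
    intro g1 g2 hW hT
    have hxx : X g1 = X g2 := by
      funext c
      by_cases hc : (c:ℕ) < k*(n+(w-1))
      · have hi : (c:ℕ)/(n+(w-1)) < k := (Nat.div_lt_iff_lt_mul hN0).mpr hc
        have hj : (c:ℕ) % (n+(w-1)) < n+(w-1) := Nat.mod_lt _ hN0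
        have hval : ((c:ℕ)/(n+(w-1)))*(n+(w-1)) + (c:ℕ)%(n+(w-1)) = (c:ℕ) := by
          rw [Nat.mul_comm]; exact Nat.div_add_mod _ _
        have h2 := congrArg Subtype.val (congrFun hW ⟨_, hi⟩)
        have h3 := congrFun h2 ⟨_, hj⟩
        have e1 : X g1 c = X g1 ⟨((c:ℕ)/(n+(w-1)))*(n+(w-1)) + (c:ℕ)%(n+(w-1)),
            hwin ⟨(c:ℕ)/(n+(w-1)),hi⟩ ((c:ℕ)%(n+(w-1))) hj⟩ :=
          congrArg (X g1) (Fin.ext (by simpa using hval.symm))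
        have e2 : X g2 c = X g2 ⟨((c:ℕ)/(n+(w-1)))*(n+(w-1)) + (c:ℕ)%(n+(w-1)),
            hwin ⟨(c:ℕ)/(n+(w-1)),hi⟩ ((c:ℕ)%(n+(w-1))) hj⟩ :=
          congrArg (X g2) (Fin.ext (by simpa using hval.symm))
        rw [e1, e2]
        exact h3
      · have hge : k*(n+(w-1)) ≤ (c:ℕ) := Nat.le_of_not_lt hc
        have hcb : (c:ℕ) - k*(n+(w-1)) < w - 1 := by have := c.2; omega
        have h3 := congrFun hT ⟨(c:ℕ) - k*(n+(w-1)), hcb⟩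
        have e1 : X g1 c = X g1 ⟨k*(n+(w-1)) + ((c:ℕ) - k*(n+(w-1))), htlt ⟨_, hcb⟩⟩ :=
          congrArg (X g1) (Fin.ext (by simp; omega))
        have e2 : X g2 c = X g2 ⟨k*(n+(w-1)) + ((c:ℕ) - k*(n+(w-1))), htlt ⟨_, hcb⟩⟩ :=
          congrArg (X g2) (Fin.ext (by simp; omega))
        rw [e1, e2]
        exact h3
    have hvg : gword n w k v g1 = gword n w k v g2 := by rw [← hX g1, ← hX g2, hxx]
    funext i j
    have hb : (i:ℕ)*(n+(w-1)) + n + (j:ℕ) < k*(n+(w-1)) := by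
      rw [Nat.add_assoc]
      exact hwin' i (n + (j:ℕ)) (by have := j.2; omega)
    have h4 := congrFun hvg ⟨(i:ℕ)*(n+(w-1)) + n + (j:ℕ), hb⟩
    rw [gword_apply_g, gword_apply_g] at h4
    exact h4
  have hinj : Function.Injective (fun g : Fin k → Fin (w-1) → A =>
      ((fun i : Fin k => (⟨fun j : Fin (n+(w-1)) => X g ⟨(i:ℕ)*(n+(w-1)) + j, hwin i j j.2⟩,
          hwf g i⟩ : {u // wmap w f n u = v})),
       (fun j : Fin (w-1) => X g ⟨k*(n+(w-1)) + j, htlt j⟩))) := by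
    intro g1 g2 h
    exact key g1 g2 (congrArg Prod.fst h) (congrArg Prod.snd h)
  calc (Fintype.card A ^ (w-1))^k
      = Fintype.card (Fin k → Fin (w-1) → A) := by
        simp [Fintype.card_fun]
    _ ≤ Fintype.card ((Fin k → {u // wmap w f n u = v}) × (Fin (w-1) → A)) :=
        Fintype.card_le_of_injective _ hinj
    _ = Fintype.card {u // wmap w f n u = v} ^ k * Fintype.card A ^ (w-1) := by
        simp [Fintype.card_fun]

lemma balance [Fintype A] [DecidableEq A] (w : ℕ) (f : (Fin w → A) → A)
    (hs : ∀ n, Function.Surjective (wmap w f n)) (n : ℕ) (hn : 1 ≤ n) (v : Fin n → A) :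
    Fintype.card {u // wmap w f n u = v} = Fintype.card A ^ (w-1) := by
  by_contra hne
  have hgt : Fintype.card A ^ (w-1) < Fintype.card {u // wmap w f n u = v} :=
    lt_of_le_of_ne (balance_lower w f hs n hn v) (Ne.symm hne)
  have hsum : ∑ v' : Fin n → A, Fintype.card {u // wmap w f n u = v'}
      = Fintype.card A ^ (n + (w-1)) := by
    have h1 := Fintype.card_congr (Equiv.sigmaFiberEquiv (wmap w f n))
    rw [Fintype.card_sigma] at h1
    rw [h1]
    simp [Fintype.card_fun]
  have hlt : ∑ _v' : Fin n → A, Fintype.card A ^ (w-1)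
      < ∑ v' : Fin n → A, Fintype.card {u // wmap w f n u = v'} :=
    Finset.sum_lt_sum (fun i _ => balance_lower w f hs n hn i) ⟨v, Finset.mem_univ v, hgt⟩
  rw [hsum] at hlt
  have : ∑ _v' : Fin n → A, Fintype.card A ^ (w-1)
      = Fintype.card A ^ (n + (w-1)) := by
    simp [Finset.sum_const, Finset.card_univ, Fintype.card_fun, pow_add, mul_comm]
  omega




def cyl {A : Type*} (a : ℤ) (s : ℕ) (j : ℕ → A) : Set (ℤ → A) :=
  {x | ∀ t : ℕ, t ≤ s → x (a + (t:ℤ)) = j t}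

/-- Subset-constraint cylinder. -/
def cylP {A : Type*} (a : ℤ) (s : ℕ) (P : ℕ → Set A) : Set (ℤ → A) :=
  {x | ∀ t : ℕ, t ≤ s → x (a + (t:ℤ)) ∈ P t}

def Cfam (A : Type*) : Set (Set (ℤ → A)) := {S | ∃ a s P, S = cylP a s P}

def extF {A : Type*} [Inhabited A] (L : ℕ) (u : Fin L → A) : ℕ → A :=
  fun t => if h : t < L then u ⟨t, h⟩ else default

variable {A : Type*} [MeasurableSpace A]

lemma cyl_measurable (hms : ∀ s : Set A, MeasurableSet s) (a : ℤ) (s : ℕ) (j : ℕ → A) :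
    MeasurableSet (cyl a s j) := by
  have h : cyl a s j = ⋂ (t : ℕ), ⋂ (_ : t ≤ s), (fun x : ℤ → A => x (a + (t:ℤ))) ⁻¹' {j t} := by
    ext x; simp [cyl]
  rw [h]
  exact MeasurableSet.iInter fun t => MeasurableSet.iInter fun _ =>
    measurable_pi_apply _ (hms _)

lemma gen_cyl (hms : ∀ s : Set A, MeasurableSet s) :
    (inferInstance : MeasurableSpace (ℤ → A)) = MeasurableSpace.generateFrom (Cfam A) := by
  apply le_antisymm
  · have hev : ∀ i : ℤ, @Measurable (ℤ → A) A (MeasurableSpace.generateFrom (Cfam A)) _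
        (fun x => x i) := by
      intro i s _
      apply MeasurableSpace.measurableSet_generateFrom
      refine ⟨i, 0, fun _ => s, ?_⟩
      ext x
      simp only [cylP, Set.mem_preimage, Set.mem_setOf_eq]
      constructor
      · intro hx t ht
        have h0 : t = 0 := Nat.le_zero.mp ht
        subst h0
        simpa using hx
      · intro hx
        simpa using hx 0 le_rfl
    exact iSup_le fun i => measurable_iff_comap_le.mp (hev i)
  · apply MeasurableSpace.generateFrom_le
    rintro S ⟨a, s, P, rfl⟩
    have h : cylP a s P = ⋂ (t : ℕ), ⋂ (_ : t ≤ s), (fun x : ℤ → A => x (a + (t:ℤ))) ⁻¹' (P t) := by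
      ext x; simp [cylP]
    rw [h]
    exact MeasurableSet.iInter fun t => MeasurableSet.iInter fun _ =>
      measurable_pi_apply _ (hms _)

lemma piSystem_Cfam : IsPiSystem (Cfam A) := by
  rintro S1 ⟨a1, s1, P1, rfl⟩ S2 ⟨a2, s2, P2, rfl⟩ -
  refine ⟨min a1 a2, (max (a1+s1) (a2+s2) - min a1 a2).toNat,
    fun t => (if a1 ≤ min a1 a2 + (t:ℤ) ∧ min a1 a2 + (t:ℤ) ≤ a1 + s1
        then P1 (min a1 a2 + (t:ℤ) - a1).toNat else Set.univ) ∩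
      (if a2 ≤ min a1 a2 + (t:ℤ) ∧ min a1 a2 + (t:ℤ) ≤ a2 + s2
        then P2 (min a1 a2 + (t:ℤ) - a2).toNat else Set.univ), ?_⟩
  ext x
  simp only [cylP, Set.mem_inter_iff, Set.mem_setOf_eq]
  constructor
  · rintro ⟨hx1, hx2⟩ t ht
    constructor
    · by_cases hc : a1 ≤ min a1 a2 + (t:ℤ) ∧ min a1 a2 + (t:ℤ) ≤ a1 + s1
      · rw [if_pos hc]
        have ht1 : ((min a1 a2 + (t:ℤ) - a1).toNat) ≤ s1 := by omega
        have h3 := hx1 _ ht1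
        have hco : a1 + (((min a1 a2 + (t:ℤ) - a1).toNat : ℤ)) = min a1 a2 + (t:ℤ) := by omega
        rw [hco] at h3
        exact h3
      · rw [if_neg hc]; trivial
    · by_cases hc : a2 ≤ min a1 a2 + (t:ℤ) ∧ min a1 a2 + (t:ℤ) ≤ a2 + s2
      · rw [if_pos hc]
        have ht1 : ((min a1 a2 + (t:ℤ) - a2).toNat) ≤ s2 := by omega
        have h3 := hx2 _ ht1
        have hco : a2 + (((min a1 a2 + (t:ℤ) - a2).toNat : ℤ)) = min a1 a2 + (t:ℤ) := by omega
        rw [hco] at h3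
        exact h3
      · rw [if_neg hc]; trivial
  · intro hx
    constructor
    · intro t1 ht1
      have h1 : ((a1 + (t1:ℤ) - min a1 a2).toNat : ℕ) ≤ (max (a1+s1) (a2+s2) - min a1 a2).toNat := by
        omega
      have h2 := hx _ h1
      have hco : min a1 a2 + (((a1 + (t1:ℤ) - min a1 a2).toNat : ℕ) : ℤ) = a1 + (t1:ℤ) := by omega
      rw [hco] at h2
      have h2a := h2.1
      rw [if_pos ⟨by omega, by omega⟩] at h2a
      rw [show ((a1 + (t1:ℤ) - a1).toNat) = t1 by omega] at h2a
      exact h2a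
    · intro t2 ht2
      have h1 : ((a2 + (t2:ℤ) - min a1 a2).toNat : ℕ) ≤ (max (a1+s1) (a2+s2) - min a1 a2).toNat := by
        omega
      have h2 := hx _ h1
      have hco : min a1 a2 + (((a2 + (t2:ℤ) - min a1 a2).toNat : ℕ) : ℤ) = a2 + (t2:ℤ) := by omega
      rw [hco] at h2
      have h2a := h2.2
      rw [if_pos ⟨by omega, by omega⟩] at h2a
      rw [show ((a2 + (t2:ℤ) - a2).toNat) = t2 by omega] at h2a
      exact h2a

lemma eq_on_cylP [Fintype A] [DecidableEq A] [Inhabited A]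
    (hms : ∀ s : Set A, MeasurableSet s)
    (ν₁ ν₂ : Measure (ℤ → A)) (c : ℕ → ENNReal)
    (h1 : ∀ a s j, ν₁ (cyl a s j) = c s) (h2 : ∀ a s j, ν₂ (cyl a s j) = c s)
    (a : ℤ) (s : ℕ) (P : ℕ → Set A) : ν₁ (cylP a s P) = ν₂ (cylP a s P) := by
  haveI : Fintype {j : Fin (s+1) → A // ∀ t : Fin (s+1), j t ∈ P (t:ℕ)} := Fintype.ofFinite _
  have key : ∀ ν : Measure (ℤ → A), (∀ a' s' j, ν (cyl a' s' j) = c s') →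
      ν (cylP a s P) = (Fintype.card {j : Fin (s+1) → A // ∀ t : Fin (s+1), j t ∈ P (t:ℕ)} : ENNReal) * c s := by
    intro ν hν
    have hun : cylP a s P = ⋃ (j : {j : Fin (s+1) → A // ∀ t : Fin (s+1), j t ∈ P (t:ℕ)}),
        cyl a s (extF (s+1) j.val) := by
      ext x
      simp only [cylP, cyl, Set.mem_setOf_eq, Set.mem_iUnion]
      constructor
      · intro hx
        refine ⟨⟨fun t => x (a + ((t:ℕ):ℤ)), fun t => hx (t:ℕ) (Nat.lt_succ_iff.mp t.2)⟩, ?_⟩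
        intro t ht
        have hlt : t < s+1 := by omega
        simp only [extF, dif_pos hlt]
      · rintro ⟨⟨j, hj⟩, hx⟩ t ht
        have hlt : t < s+1 := by omega
        have h' := hx t ht
        rw [h']
        simp only [extF, dif_pos hlt]
        exact hj ⟨t, hlt⟩
    have hdisj : Pairwise (Function.onFun Disjoint
        (fun j : {j : Fin (s+1) → A // ∀ t : Fin (s+1), j t ∈ P (t:ℕ)} => cyl a s (extF (s+1) j.val))) := by
      intro j1 j2 hne
      rw [Function.onFun, Set.disjoint_left]
      intro x hx1 hx2
      apply hne
      apply Subtype.ext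
      funext i
      have e1 := hx1 (i:ℕ) (by omega)
      have e2 := hx2 (i:ℕ) (by omega)
      have e3 := e1.symm.trans e2
      simpa [extF, dif_pos i.2, Nat.lt_succ_iff.mp i.2] using e3
    rw [hun, measure_iUnion hdisj (fun j => cyl_measurable hms _ _ _), tsum_fintype]
    rw [Finset.sum_congr rfl (fun j _ => hν a s (extF (s+1) j.val))]
    rw [Finset.sum_const, Finset.card_univ, nsmul_eq_mul]
  rw [key ν₁ h1, key ν₂ h2]




lemma preimage_cyl [Inhabited A] (w : ℕ) (hw : 1 ≤ w) (f : (Fin w → A) → A)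
    (l : ℤ) (T : (ℤ → A) → ℤ → A) (hT : ∀ x n, T x n = f fun i => x (n + l + (i:ℤ)))
    (a : ℤ) (s : ℕ) (j : ℕ → A) :
    T ⁻¹' (cyl a s j) =
      ⋃ (u : {u : Fin ((s+1)+(w-1)) → A // wmap w f (s+1) u = fun t : Fin (s+1) => j (t:ℕ)}),
        cyl (a+l) (s+(w-1)) (extF ((s+1)+(w-1)) u.val) := by
  ext x
  simp only [Set.mem_preimage, cyl, Set.mem_setOf_eq, Set.mem_iUnion]
  constructor
  · intro hx
    have hfib : wmap w f (s+1) (fun i : Fin ((s+1)+(w-1)) => x (a + l + (i:ℤ)))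
        = fun t : Fin (s+1) => j (t:ℕ) := by
      funext tt
      have h1 := hx (tt:ℕ) (Nat.lt_succ_iff.mp tt.2)
      rw [hT] at h1
      rw [← h1]
      simp only [wmap]
      congr 1
      funext t'
      congr 1
      push_cast
      ring
    refine ⟨⟨_, hfib⟩, ?_⟩
    intro t ht
    have hlt : t < (s+1)+(w-1) := by omega
    simp only [extF, dif_pos hlt]
  · rintro ⟨⟨u, hu⟩, hx⟩ t ht
    have hux : (fun i : Fin ((s+1)+(w-1)) => x (a + l + (i:ℤ))) = u := by
      funext i
      have hile : (i:ℕ) ≤ s+(w-1) := by have := i.2; omega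
      have h1 := hx (i:ℕ) hile
      rw [h1]
      simp [extF, dif_pos i.2]
    rw [hT]
    have h2 := congrFun hu ⟨t, by omega⟩
    rw [← hux] at h2
    have h2' : wmap w f (s+1) (fun i : Fin ((s+1)+(w-1)) => x (a + l + (i:ℤ))) ⟨t, by omega⟩
        = j t := h2
    rw [← h2']
    simp only [wmap]
    congr 1
    funext t'
    congr 1
    push_cast
    ring


end CAProof

open CAProof

/-- Any surjective cellular automaton `T_{f[l,r]}` on `(ZMod m)^ℤ` preserves the uniform
Bernoulli measure `μ` (the probability measure giving each cylinder of length `s+1` the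
measure `m^{-(s+1)}`): for every Borel set `A`, `μ(T⁻¹A) = μ(A)`. -/
theorem stmt9 (m : ℕ) (hm : 2 ≤ m) (l r : ℤ) (hlr : l ≤ r)
    (f : (Fin (r - l + 1).toNat → ZMod m) → ZMod m)
    (T : (ℤ → ZMod m) → ℤ → ZMod m)
    (hT : ∀ x n, T x n = f fun i => x (n + l + (i : ℤ)))
    (hsurj : Function.Surjective T)
    (μ : Measure (ℤ → ZMod m)) [IsProbabilityMeasure μ]
    (hμ : ∀ (a : ℤ) (s : ℕ) (j : ℕ → ZMod m),
      μ {x | ∀ t : ℕ, t ≤ s → x (a + (t : ℤ)) = j t} = ((m : ℝ≥0∞))⁻¹ ^ (s + 1)) :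
    MeasurePreserving T μ μ := by
  haveI : NeZero m := ⟨by omega⟩
  haveI : Inhabited (ZMod m) := ⟨0⟩
  have hms : ∀ s : Set (ZMod m), MeasurableSet s := fun _ => trivial
  have hw1 : 1 ≤ (r - l + 1).toNat := by omega
  -- measurability of T
  haveI : MeasurableSingletonClass (Fin (r-l+1).toNat → ZMod m) := ⟨fun g => by
    have h : {g} = ⋂ i, (fun h : Fin (r-l+1).toNat → ZMod m => h i) ⁻¹' {g i} := by
      ext h; simp [funext_iff]
    rw [h]
    exact MeasurableSet.iInter fun i => measurable_pi_apply i (hms _)⟩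
  have hTm : Measurable T := by
    apply measurable_pi_lambda
    intro n
    have he : (fun x : ℤ → ZMod m => T x n)
        = (f ∘ fun x => (fun i : Fin (r-l+1).toNat => x (n + l + (i:ℤ)))) :=
      funext fun x => hT x n
    rw [he]
    exact (measurable_of_countable f).comp (measurable_pi_lambda _ fun i => measurable_pi_apply _)
  -- surjectivity of the finite word maps
  have hs : ∀ n, Function.Surjective (wmap (r-l+1).toNat f n) := by
    intro n v
    obtain ⟨x, hx⟩ := hsurj (fun z : ℤ =>
      if h : 0 ≤ z ∧ z < n then v ⟨z.toNat, by omega⟩ else 0)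
    refine ⟨fun q => x (l + (q:ℤ)), ?_⟩
    funext i
    have h1 := congrFun hx ((i:ℕ):ℤ)
    rw [hT] at h1
    calc wmap (r-l+1).toNat f n (fun q => x (l+(q:ℤ))) i
        = f (fun t => x (((i:ℕ):ℤ) + l + (t:ℤ))) := by
          simp only [wmap]
          congr 1
          funext t
          congr 1
          push_cast
          ring
      _ = (if h : 0 ≤ ((i:ℕ):ℤ) ∧ ((i:ℕ):ℤ) < n then v ⟨((i:ℕ):ℤ).toNat, by omega⟩ else 0) := h1
      _ = v i := by
          rw [dif_pos ⟨Int.natCast_nonneg _, by exact_mod_cast i.2⟩]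
          exact congrArg v (Fin.ext (by simp))
  -- balance
  have hbal : ∀ (s : ℕ) (v : Fin (s+1) → ZMod m),
      Fintype.card {u // wmap (r-l+1).toNat f (s+1) u = v} = m ^ ((r-l+1).toNat - 1) := by
    intro s v
    rw [balance _ f hs (s+1) (by omega) v, ZMod.card]
  haveI := Measure.isProbabilityMeasure_map (μ := μ) hTm.aemeasurable
  -- cylinder property of the pushforward
  have hmap : ∀ (a : ℤ) (s : ℕ) (j : ℕ → ZMod m),
      (μ.map T) (cyl a s j) = ((m:ENNReal))⁻¹ ^ (s+1) := by
    intro a s j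
    rw [Measure.map_apply hTm (cyl_measurable hms a s j)]
    rw [preimage_cyl _ hw1 f l T hT a s j]
    have hdisj : Pairwise (Function.onFun Disjoint
        (fun u : {u : Fin ((s+1)+((r-l+1).toNat-1)) → ZMod m //
            wmap (r-l+1).toNat f (s+1) u = fun t : Fin (s+1) => j (t:ℕ)} =>
          cyl (a+l) (s+((r-l+1).toNat-1)) (extF ((s+1)+((r-l+1).toNat-1)) u.val))) := by
      intro u1 u2 hne
      rw [Function.onFun, Set.disjoint_left]
      intro x hx1 hx2
      apply hne
      apply Subtype.ext
      funext i
      have hile : (i:ℕ) ≤ s+((r-l+1).toNat-1) := by have := i.2; omega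
      have e1 := hx1 (i:ℕ) hile
      have e2 := hx2 (i:ℕ) hile
      have e3 := e1.symm.trans e2
      simpa [extF, dif_pos i.2] using e3
    have hμ' : ∀ (a' : ℤ) (s' : ℕ) (j' : ℕ → ZMod m),
        μ (cyl a' s' j') = ((m:ENNReal))⁻¹ ^ (s'+1) := hμ
    rw [measure_iUnion hdisj (fun u => cyl_measurable hms _ _ _), tsum_fintype]
    rw [Finset.sum_congr rfl (fun u _ => hμ' (a+l) (s+((r-l+1).toNat-1)) _)]
    rw [Finset.sum_const, Finset.card_univ, nsmul_eq_mul, hbal s _]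
    have hmm0 : (m:ENNReal) ≠ 0 := by
      simp only [ne_eq, Nat.cast_eq_zero]; omega
    have hmmtop : (m:ENNReal) ≠ ⊤ := ENNReal.natCast_ne_top m
    have hexp : s + ((r-l+1).toNat - 1) + 1 = ((r-l+1).toNat - 1) + (s+1) := by omega
    rw [hexp, pow_add, Nat.cast_pow, ← mul_assoc, ← mul_pow,
      ENNReal.mul_inv_cancel hmm0 hmmtop, one_pow, one_mul]
  refine ⟨hTm, ?_⟩
  exact ext_of_generate_finite (Cfam (ZMod m)) (gen_cyl hms) piSystem_Cfam
    (fun S hS => by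
      obtain ⟨a, s, P, rfl⟩ := hS
      exact eq_on_cylP hms (μ.map T) μ (fun s' => ((m:ENNReal))⁻¹ ^ (s'+1)) hmap
        (fun a' s' j' => hμ a' s' j') a s P)
    (by simp [measure_univ])
end

section
/- Let T_{f[l,r]} be a right permutative linear cellular automaton over Z_m with 0 < l ≤ r (i.e., gcd(λ_r, m) = 1 and l > 0). Then T_{f[l,r]} is strong mixing with respect to the uniform Bernoulli measure: for any two cylinder sets A, B, lim_{n→∞} μ(A ∩ T^{-n}B) = μ(A)μ(B). -/
open MeasureTheory Filter
open scoped ENNReal Topology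

def extFun (m : ℕ) (a : ℤ) (M : ℕ) (g : Fin M → ZMod m) : ℤ → ZMod m :=
  fun q => if h : 0 ≤ q - a ∧ (q - a).toNat < M then g ⟨(q - a).toNat, h.2⟩ else 0

theorem extFun_apply_cast {m : ℕ} (a : ℤ) (M : ℕ) (g : Fin M → ZMod m) (j : ℕ) (hj : j < M) :
    extFun m a M g (a + (j : ℤ)) = g ⟨j, hj⟩ := by
  rw [extFun, dif_pos ⟨by omega, by omega⟩]
  congr 1
  simp only [Fin.mk.injEq]
  omega

theorem extFun_proj {m : ℕ} (a : ℤ) (M : ℕ) (x : ℤ → ZMod m) (q : ℤ)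
    (h1 : a ≤ q) (h2 : q - a < (M : ℤ)) :
    extFun m a M (fun i : Fin M => x (a + (i : ℤ))) q = x q := by
  rw [extFun, dif_pos ⟨by omega, by omega⟩]
  show x (a + ((q - a).toNat : ℤ)) = x q
  congr 1
  omega

theorem aux_perm {m : ℕ} (l r : ℤ) (hlr : l ≤ r) (lam : ℤ → ZMod m)
    (T : (ℤ → ZMod m) → ℤ → ZMod m)
    (hT : ∀ x n, T x n = ∑ i ∈ Finset.Icc l r, lam i * x (n + i)) :
    ∀ (n : ℕ) (x y : ℤ → ZMod m) (p : ℤ),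
      (∀ q : ℤ, p + (n : ℤ) * l ≤ q → q < p + (n : ℤ) * r → x q = y q) →
      T^[n] x p - T^[n] y p = (lam r) ^ n * (x (p + (n : ℤ) * r) - y (p + (n : ℤ) * r)) := by
  intro n
  induction n with
  | zero => intro x y p h; simp
  | succ n IH =>
    intro x y p h
    have hnl : (n : ℤ) * l ≤ (n : ℤ) * r := mul_le_mul_of_nonneg_left hlr (by positivity)
    have h' : ∀ q : ℤ, p + ((n : ℤ) + 1) * l ≤ q → q < p + ((n : ℤ) + 1) * r → x q = y q := by
      intro q a1 a2
      exact h q (by push_cast; linarith) (by push_cast; linarith)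
    have hstep : ∀ q : ℤ, p + (n : ℤ) * l ≤ q → q < p + (n : ℤ) * r → T x q = T y q := by
      intro q h1 h2
      rw [hT, hT]
      refine Finset.sum_congr rfl fun i hi => ?_
      rw [Finset.mem_Icc] at hi
      rw [h' (q + i) (by nlinarith [hi.1]) (by nlinarith [hi.2])]
    have hmain := IH (T x) (T y) p hstep
    have hdiff : T x (p + (n : ℤ) * r) - T y (p + (n : ℤ) * r)
        = lam r * (x (p + (n : ℤ) * r + r) - y (p + (n : ℤ) * r + r)) := by
      rw [hT, hT, ← Finset.sum_sub_distrib]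
      rw [Finset.sum_eq_single_of_mem r (Finset.mem_Icc.mpr ⟨hlr, le_refl r⟩)]
      · rw [mul_sub]
      · intro i hi hne
        rw [Finset.mem_Icc] at hi
        have hir : i < r := lt_of_le_of_ne hi.2 hne
        rw [h' (p + (n : ℤ) * r + i) (by nlinarith [hi.1]) (by nlinarith), sub_self]
    calc T^[n+1] x p - T^[n+1] y p
        = T^[n] (T x) p - T^[n] (T y) p := by
          rw [Function.iterate_succ_apply, Function.iterate_succ_apply]
      _ = (lam r) ^ n * (T x (p + (n : ℤ) * r) - T y (p + (n : ℤ) * r)) := hmain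
      _ = (lam r) ^ n * (lam r * (x (p + (n : ℤ) * r + r) - y (p + (n : ℤ) * r + r))) := by
          rw [hdiff]
      _ = (lam r) ^ (n + 1) * (x (p + ((n + 1 : ℕ) : ℤ) * r) - y (p + ((n + 1 : ℕ) : ℤ) * r)) := by
          rw [show p + ((n + 1 : ℕ) : ℤ) * r = p + (n : ℤ) * r + r by push_cast; ring]
          ring

theorem aux_local {m : ℕ} (l r : ℤ) (hlr : l ≤ r) (lam : ℤ → ZMod m)
    (T : (ℤ → ZMod m) → ℤ → ZMod m)
    (hT : ∀ x n, T x n = ∑ i ∈ Finset.Icc l r, lam i * x (n + i))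
    (n : ℕ) (x y : ℤ → ZMod m) (p : ℤ)
    (h : ∀ q : ℤ, p + (n : ℤ) * l ≤ q → q ≤ p + (n : ℤ) * r → x q = y q) :
    T^[n] x p = T^[n] y p := by
  have hnl : (n : ℤ) * l ≤ (n : ℤ) * r := mul_le_mul_of_nonneg_left hlr (by positivity)
  have h2 := aux_perm l r hlr lam T hT n x y p (fun q a1 a2 => h q a1 (le_of_lt a2))
  rw [h (p + (n : ℤ) * r) (by linarith) le_rfl] at h2
  simpa [sub_eq_zero] using h2

theorem aux_count {m : ℕ} [NeZero m] (μ : Measure (ℤ → ZMod m))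
    (hμ : ∀ (a : ℤ) (s : ℕ) (j : ℕ → ZMod m),
      μ {x | ∀ t : ℕ, t ≤ s → x (a + (t : ℤ)) = j t} = ((m : ℝ≥0∞))⁻¹ ^ (s + 1))
    (c : ℤ) (L : ℕ) (hL : 0 < L) (P : (Fin L → ZMod m) → Prop) [DecidablePred P] :
    μ {x | P (fun i => x (c + (i : ℤ)))}
      = (Finset.univ.filter P).card * ((m : ℝ≥0∞))⁻¹ ^ L := by
  obtain ⟨s, rfl⟩ : ∃ s, L = s + 1 := ⟨L - 1, by omega⟩
  have hset : {x : ℤ → ZMod m | P (fun i => x (c + (i : ℤ)))}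
      = ⋃ g ∈ Finset.univ.filter P,
          {x : ℤ → ZMod m | ∀ u : ℕ, u ≤ s →
            x (c + (u : ℤ)) = if h : u < s + 1 then g ⟨u, h⟩ else 0} := by
    ext x
    simp only [Set.mem_setOf_eq, Set.mem_iUnion, Finset.mem_filter, Finset.mem_univ, true_and,
      exists_prop]
    constructor
    · intro hx
      refine ⟨fun i => x (c + (i : ℤ)), hx, fun u hu => ?_⟩
      rw [dif_pos (by omega : u < s + 1)]
    · rintro ⟨g, hg, hx⟩
      have hgx : (fun i : Fin (s + 1) => x (c + (i : ℤ))) = g := by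
        funext i
        have h2 := hx i (by omega : (i : ℕ) ≤ s)
        rwa [dif_pos i.isLt, Fin.eta] at h2
      rwa [hgx]
  have hd : (↑(Finset.univ.filter P) : Set (Fin (s+1) → ZMod m)).PairwiseDisjoint
      (fun g => {x : ℤ → ZMod m | ∀ u : ℕ, u ≤ s →
            x (c + (u : ℤ)) = if h : u < s + 1 then g ⟨u, h⟩ else 0}) := by
    intro g hg g' hg' hne
    simp only [Function.onFun]
    rw [Set.disjoint_left]
    intro x hx hx'
    refine hne (funext fun i : Fin (s + 1) => ?_)
    have h1 := hx i (by omega : (i : ℕ) ≤ s)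
    have h2 := hx' i (by omega : (i : ℕ) ≤ s)
    rw [dif_pos i.isLt, Fin.eta] at h1 h2
    rw [← h1, h2]
  have hmeas : ∀ g ∈ Finset.univ.filter P, MeasurableSet
      {x : ℤ → ZMod m | ∀ u : ℕ, u ≤ s →
            x (c + (u : ℤ)) = if h : u < s + 1 then g ⟨u, h⟩ else 0} := by
    intro g _
    have : {x : ℤ → ZMod m | ∀ u : ℕ, u ≤ s →
            x (c + (u : ℤ)) = if h : u < s + 1 then g ⟨u, h⟩ else 0}
        = ⋂ u ∈ Set.Iic s, (fun x : ℤ → ZMod m => x (c + (u : ℤ))) ⁻¹'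
            {if h : u < s + 1 then g ⟨u, h⟩ else 0} := by
      ext x
      simp [Set.mem_iInter]
    rw [this]
    exact MeasurableSet.biInter (Set.to_countable _) fun u _ =>
      (measurable_pi_apply (c + (u : ℤ))) (MeasurableSpace.measurableSet_top)
  rw [hset, measure_biUnion_finset hd hmeas]
  rw [Finset.sum_congr rfl (fun g _ => hμ c s _), Finset.sum_const, nsmul_eq_mul]


/-- A right permutative linear cellular automaton `T_{f[l,r]}` over `ZMod m` with
`0 < l ≤ r` (i.e. `gcd(λ_r, m) = 1`, so `λ_r` is a unit, and `l > 0`) is strong mixing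
for the uniform Bernoulli measure: for any two cylinder sets `A`, `B`,
`lim_{n→∞} μ(A ∩ T^{-n}B) = μ(A)·μ(B)`. -/
theorem stmt11 (m : ℕ) (hm : 2 ≤ m) (l r : ℤ) (hl : 0 < l) (hlr : l ≤ r)
    (lam : ℤ → ZMod m) (hperm : IsUnit (lam r))
    (T : (ℤ → ZMod m) → ℤ → ZMod m)
    (hT : ∀ x n, T x n = ∑ i ∈ Finset.Icc l r, lam i * x (n + i))
    (μ : Measure (ℤ → ZMod m)) [IsProbabilityMeasure μ]
    (hμ : ∀ (a : ℤ) (s : ℕ) (j : ℕ → ZMod m),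
      μ {x | ∀ t : ℕ, t ≤ s → x (a + (t : ℤ)) = j t} = ((m : ℝ≥0∞))⁻¹ ^ (s + 1)) :
    ∀ (a b : ℤ) (s t : ℕ) (iv jv : ℕ → ZMod m),
      Tendsto
        (fun n : ℕ =>
          μ ({x | ∀ u : ℕ, u ≤ s → x (a + (u : ℤ)) = iv u} ∩
             T^[n] ⁻¹' {x | ∀ u : ℕ, u ≤ t → x (b + (u : ℤ)) = jv u}))
        atTop
        (𝓝 (μ {x | ∀ u : ℕ, u ≤ s → x (a + (u : ℤ)) = iv u} *
            μ {x | ∀ u : ℕ, u ≤ t → x (b + (u : ℤ)) = jv u})) := by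
  classical
  intro a b s t iv jv
  haveI : NeZero m := ⟨by omega⟩
  have hm0 : (m : ℝ≥0∞) ≠ 0 := by
    simp only [ne_eq, Nat.cast_eq_zero]; omega
  have hmtop : (m : ℝ≥0∞) ≠ ⊤ := ENNReal.natCast_ne_top m
  have hinv0 : ((m : ℝ≥0∞))⁻¹ ≠ 0 := ENNReal.inv_ne_zero.mpr hmtop
  have hinvtop : ((m : ℝ≥0∞))⁻¹ ≠ ⊤ := ENNReal.inv_ne_top.mpr hm0
  rw [hμ a s iv, hμ b t jv]
  refine Tendsto.congr' ?_ tendsto_const_nhds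
  filter_upwards [eventually_ge_atTop ((a + s - b).toNat + 1)] with n hn
  -- arithmetic
  have hs0 : (0 : ℤ) ≤ (s : ℤ) := Int.natCast_nonneg s
  have ht0 : (0 : ℤ) ≤ (t : ℤ) := Int.natCast_nonneg t
  have hnl1 : (n : ℤ) ≤ (n : ℤ) * l := le_mul_of_one_le_right (by positivity) hl
  have hnlr : (n : ℤ) * l ≤ (n : ℤ) * r := mul_le_mul_of_nonneg_left hlr (by positivity)
  have hwin : a + (s : ℤ) < b + (n : ℤ) * l := by
    have h1 : ((a + (s : ℤ) - b).toNat : ℤ) + 1 ≤ (n : ℤ) := by exact_mod_cast hn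
    have h2 : a + (s : ℤ) - b ≤ ((a + (s : ℤ) - b).toNat : ℤ) := Int.self_le_toNat _
    linarith
  set W : ℤ := b + (t : ℤ) + (n : ℤ) * r - a with hWdef
  have hWbig : (s : ℤ) + (t : ℤ) + 1 ≤ W := by rw [hWdef]; linarith
  set M : ℕ := W.toNat + 1 with hMdef
  have hMcast : (M : ℤ) = W + 1 := by omega
  set K : ℕ := M - (t + 1) with hKdef
  have hKcast : (K : ℤ) = W - t := by omega
  have hsK : s + 1 ≤ K := by omega
  have hKM : K ≤ M := by omega
  have hMK : M = K + (t + 1) := by omega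
  have hMpos : 0 < M := by omega
  have hbnr : b + (n : ℤ) * r = a + (K : ℤ) := by rw [hKcast, hWdef]; ring
  -- counting lemma for pure "fix" windows (uses only the measure)
  have hAcount : ∀ L : ℕ, s < L →
      ((Finset.univ.filter
        (fun g : Fin L → ZMod m => ∀ (u : ℕ) (h : u < L), u ≤ s → g ⟨u, h⟩ = iv u)).card : ℝ≥0∞)
        * ((m : ℝ≥0∞))⁻¹ ^ L = ((m : ℝ≥0∞))⁻¹ ^ (s + 1) := by
    intro L hL
    have h1 := aux_count μ hμ a L (by omega)
      (fun g : Fin L → ZMod m => ∀ (u : ℕ) (h : u < L), u ≤ s → g ⟨u, h⟩ = iv u)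
    have h2 : {x : ℤ → ZMod m |
        (fun g : Fin L → ZMod m => ∀ (u : ℕ) (h : u < L), u ≤ s → g ⟨u, h⟩ = iv u)
          (fun i => x (a + (i : ℤ)))}
        = {x : ℤ → ZMod m | ∀ u : ℕ, u ≤ s → x (a + (u : ℤ)) = iv u} := by
      ext x
      simp only [Set.mem_setOf_eq]
      constructor
      · intro h u hu
        exact h u (by omega) hu
      · intro h u hlt hu
        exact h u hu
    rw [h2, hμ a s iv] at h1
    exact h1.symm
  have hQM := hAcount M (by omega)
  have hQK := hAcount K (by omega)
  -- locality bridge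
  have hbridge : ∀ (x : ℤ → ZMod m) (u : ℕ), u ≤ t →
      T^[n] (extFun m a M (fun i : Fin M => x (a + (i : ℤ)))) (b + (u : ℤ))
        = T^[n] x (b + (u : ℤ)) := by
    intro x u hu
    apply aux_local l r hlr lam T hT n _ _ (b + (u : ℤ))
    intro q h1 h2
    have hu0 : (0 : ℤ) ≤ (u : ℤ) := Int.natCast_nonneg u
    have hut : (u : ℤ) ≤ (t : ℤ) := by exact_mod_cast hu
    have ha : a ≤ q := by linarith
    have hb : q - a < (M : ℤ) := by rw [hMcast, hWdef]; linarith
    exact extFun_proj a M x q ha hb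
  -- the main set identity
  have hsetEq : ({x : ℤ → ZMod m | ∀ u : ℕ, u ≤ s → x (a + (u : ℤ)) = iv u} ∩
      T^[n] ⁻¹' {x : ℤ → ZMod m | ∀ u : ℕ, u ≤ t → x (b + (u : ℤ)) = jv u})
      = {x : ℤ → ZMod m |
          (fun g : Fin M → ZMod m =>
            (∀ (u : ℕ) (h : u < M), u ≤ s → g ⟨u, h⟩ = iv u) ∧
            (fun u : Fin (t + 1) => T^[n] (extFun m a M g) (b + ((u : ℕ) : ℤ)))
              = (fun u : Fin (t + 1) => jv (u : ℕ)))
            (fun i => x (a + (i : ℤ)))} := by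
    ext x
    simp only [Set.mem_inter_iff, Set.mem_setOf_eq, Set.mem_preimage]
    constructor
    · rintro ⟨h1, h2⟩
      refine ⟨fun u hlt hu => h1 u hu, funext fun u => ?_⟩
      have hu : (u : ℕ) ≤ t := Nat.lt_succ_iff.mp u.isLt
      show T^[n] (extFun m a M (fun i : Fin M => x (a + (i : ℤ)))) (b + ((u : ℕ) : ℤ)) = jv u
      rw [hbridge x u hu]
      exact h2 u hu
    · rintro ⟨hf, hc⟩
      refine ⟨fun u hu => hf u (by omega) hu, fun u hu => ?_⟩
      have := congrFun hc ⟨u, by omega⟩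
      simp only at this
      rw [← hbridge x u hu]
      exact this
  -- fibrewise decomposition
  have hfib : ((Finset.univ.filter
      (fun g : Fin M → ZMod m => ∀ (u : ℕ) (h : u < M), u ≤ s → g ⟨u, h⟩ = iv u)).card)
      = ∑ v : Fin (t + 1) → ZMod m,
        (Finset.univ.filter (fun g : Fin M → ZMod m =>
          (∀ (u : ℕ) (h : u < M), u ≤ s → g ⟨u, h⟩ = iv u) ∧
          (fun u : Fin (t + 1) => T^[n] (extFun m a M g) (b + ((u : ℕ) : ℤ))) = v)).card := by
    rw [Finset.card_eq_sum_card_fiberwise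
      (f := fun g : Fin M → ZMod m =>
        fun u : Fin (t + 1) => T^[n] (extFun m a M g) (b + ((u : ℕ) : ℤ)))
      (t := Finset.univ) (fun g _ => Finset.mem_univ _)]
    refine Finset.sum_congr rfl fun v _ => ?_
    rw [Finset.filter_filter]
  -- injectivity bound
  have hle : ∀ v : Fin (t + 1) → ZMod m,
      (Finset.univ.filter (fun g : Fin M → ZMod m =>
          (∀ (u : ℕ) (h : u < M), u ≤ s → g ⟨u, h⟩ = iv u) ∧
          (fun u : Fin (t + 1) => T^[n] (extFun m a M g) (b + ((u : ℕ) : ℤ))) = v)).card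
      ≤ (Finset.univ.filter
        (fun g : Fin K → ZMod m => ∀ (u : ℕ) (h : u < K), u ≤ s → g ⟨u, h⟩ = iv u)).card := by
    intro v
    apply Finset.card_le_card_of_injOn
      (fun (g : Fin M → ZMod m) (i : Fin K) => g (Fin.castLE hKM i))
    · intro g hg
      simp only [Finset.mem_coe, Finset.mem_filter, Finset.mem_univ, true_and] at hg ⊢
      intro u hu hus
      exact hg.1 u (by clear hAcount hQM hQK hbridge hsetEq hfib; omega) hus
    · intro g hgmem g' hgmem' hρ
      simp only [Finset.coe_filter, Set.mem_setOf_eq, Finset.mem_univ, true_and] at hgmem hgmem'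
      have key : ∀ j : ℕ, ∀ hj : j < M, g ⟨j, hj⟩ = g' ⟨j, hj⟩ := by
        intro j
        induction j using Nat.strong_induction_on with
        | _ j IH =>
          intro hj
          by_cases hjK : j < K
          · exact congrFun hρ ⟨j, hjK⟩
          · set u : ℕ := j - K with hudef
            have hut : u ≤ t := by clear hAcount hQM hQK hbridge hsetEq hfib; omega
            have hju : (j : ℤ) = (K : ℤ) + (u : ℤ) := by clear hAcount hQM hQK hbridge hsetEq hfib; omega
            have hpos : b + (u : ℤ) + (n : ℤ) * r = a + (j : ℤ) := by
              rw [hju]; linarith [hbnr]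
            have hagree : ∀ q : ℤ, b + (u : ℤ) + (n : ℤ) * l ≤ q →
                q < b + (u : ℤ) + (n : ℤ) * r →
                extFun m a M g q = extFun m a M g' q := by
              intro q h1 h2
              simp only [extFun]
              split_ifs with hcond
              · have hidx : (q - a).toNat < j := by
                  have h3 : q < a + (j : ℤ) := by rw [← hpos]; exact h2
                  clear hAcount hQM hQK hbridge hsetEq hfib; omega
                exact IH _ hidx hcond.2
              · rfl
            have hperm' := aux_perm l r hlr lam T hT n
              (extFun m a M g) (extFun m a M g') (b + (u : ℤ)) hagree
            have e1 : T^[n] (extFun m a M g) (b + (u : ℤ)) = v ⟨u, Nat.lt_succ_of_le hut⟩ :=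
              congrFun hgmem.2 ⟨u, Nat.lt_succ_of_le hut⟩
            have e2 : T^[n] (extFun m a M g') (b + (u : ℤ)) = v ⟨u, Nat.lt_succ_of_le hut⟩ :=
              congrFun hgmem'.2 ⟨u, Nat.lt_succ_of_le hut⟩
            rw [e1, e2, sub_self] at hperm'
            have hΔ : extFun m a M g (b + (u : ℤ) + (n : ℤ) * r)
                - extFun m a M g' (b + (u : ℤ) + (n : ℤ) * r) = 0 :=
              ((hperm.pow n).mul_right_eq_zero).mp hperm'.symm
            rw [hpos, extFun_apply_cast a M g j hj, extFun_apply_cast a M g' j hj] at hΔ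
            exact sub_eq_zero.mp hΔ
      funext i
      have := key (i : ℕ) i.isLt
      simpa [Fin.eta] using this
  -- total count identity over ℕ
  have hcancelK : ∀ x y : ℝ≥0∞,
      x * ((m : ℝ≥0∞))⁻¹ ^ K = y * ((m : ℝ≥0∞))⁻¹ ^ K → x = y := by
    intro x y h
    have h0 : ((m : ℝ≥0∞))⁻¹ ^ K ≠ 0 := pow_ne_zero _ hinv0
    have htp : ((m : ℝ≥0∞))⁻¹ ^ K ≠ ⊤ := ENNReal.pow_ne_top hinvtop
    calc x = x * (((m : ℝ≥0∞))⁻¹ ^ K * (((m : ℝ≥0∞))⁻¹ ^ K)⁻¹) := by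
          rw [ENNReal.mul_inv_cancel h0 htp, mul_one]
      _ = (x * ((m : ℝ≥0∞))⁻¹ ^ K) * (((m : ℝ≥0∞))⁻¹ ^ K)⁻¹ := by rw [mul_assoc]
      _ = (y * ((m : ℝ≥0∞))⁻¹ ^ K) * (((m : ℝ≥0∞))⁻¹ ^ K)⁻¹ := by rw [h]
      _ = y * (((m : ℝ≥0∞))⁻¹ ^ K * (((m : ℝ≥0∞))⁻¹ ^ K)⁻¹) := by rw [mul_assoc]
      _ = y := by rw [ENNReal.mul_inv_cancel h0 htp, mul_one]
  set cM : ℕ := (Finset.univ.filter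
      (fun g : Fin M → ZMod m => ∀ (u : ℕ) (h : u < M), u ≤ s → g ⟨u, h⟩ = iv u)).card with hcM
  set cK : ℕ := (Finset.univ.filter
      (fun g : Fin K → ZMod m => ∀ (u : ℕ) (h : u < K), u ≤ s → g ⟨u, h⟩ = iv u)).card with hcK
  have e3 : (cM : ℝ≥0∞) * ((m : ℝ≥0∞))⁻¹ ^ (t + 1) * ((m : ℝ≥0∞))⁻¹ ^ K
      = (cK : ℝ≥0∞) * ((m : ℝ≥0∞))⁻¹ ^ K := by
    calc (cM : ℝ≥0∞) * ((m : ℝ≥0∞))⁻¹ ^ (t + 1) * ((m : ℝ≥0∞))⁻¹ ^ K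
        = (cM : ℝ≥0∞) * ((m : ℝ≥0∞))⁻¹ ^ M := by rw [hMK, pow_add]; ring
      _ = ((m : ℝ≥0∞))⁻¹ ^ (s + 1) := hQM
      _ = (cK : ℝ≥0∞) * ((m : ℝ≥0∞))⁻¹ ^ K := hQK.symm
  have e4 : (cM : ℝ≥0∞) * ((m : ℝ≥0∞))⁻¹ ^ (t + 1) = (cK : ℝ≥0∞) := hcancelK _ _ e3
  have e5 : (cM : ℝ≥0∞) = (cK : ℝ≥0∞) * (m : ℝ≥0∞) ^ (t + 1) := by
    have hone : ((m : ℝ≥0∞))⁻¹ ^ (t + 1) * (m : ℝ≥0∞) ^ (t + 1) = 1 := by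
      rw [← mul_pow, ENNReal.inv_mul_cancel hm0 hmtop, one_pow]
    calc (cM : ℝ≥0∞) = (cM : ℝ≥0∞) * (((m : ℝ≥0∞))⁻¹ ^ (t + 1) * (m : ℝ≥0∞) ^ (t + 1)) := by
          rw [hone, mul_one]
      _ = ((cM : ℝ≥0∞) * ((m : ℝ≥0∞))⁻¹ ^ (t + 1)) * (m : ℝ≥0∞) ^ (t + 1) := by ring
      _ = (cK : ℝ≥0∞) * (m : ℝ≥0∞) ^ (t + 1) := by rw [e4]
  have hnat : cM = cK * m ^ (t + 1) := by exact_mod_cast e5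
  -- every fiber has full cardinality
  have hall : ∀ v : Fin (t + 1) → ZMod m,
      (Finset.univ.filter (fun g : Fin M → ZMod m =>
          (∀ (u : ℕ) (h : u < M), u ≤ s → g ⟨u, h⟩ = iv u) ∧
          (fun u : Fin (t + 1) => T^[n] (extFun m a M g) (b + ((u : ℕ) : ℤ))) = v)).card
      = cK := by
    intro v0
    by_contra hne
    have hlt : (Finset.univ.filter (fun g : Fin M → ZMod m =>
          (∀ (u : ℕ) (h : u < M), u ≤ s → g ⟨u, h⟩ = iv u) ∧
          (fun u : Fin (t + 1) => T^[n] (extFun m a M g) (b + ((u : ℕ) : ℤ))) = v0)).card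
        < cK := lt_of_le_of_ne (hle v0) hne
    have hsum : (∑ v : Fin (t + 1) → ZMod m,
        (Finset.univ.filter (fun g : Fin M → ZMod m =>
          (∀ (u : ℕ) (h : u < M), u ≤ s → g ⟨u, h⟩ = iv u) ∧
          (fun u : Fin (t + 1) => T^[n] (extFun m a M g) (b + ((u : ℕ) : ℤ))) = v)).card)
        < ∑ _v : Fin (t + 1) → ZMod m, cK :=
      Finset.sum_lt_sum (fun i _ => hle i) ⟨v0, Finset.mem_univ _, hlt⟩
    rw [← hfib, Finset.sum_const, smul_eq_mul] at hsum
    have hcu : (Finset.univ : Finset (Fin (t + 1) → ZMod m)).card = m ^ (t + 1) := by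
      rw [Finset.card_univ, Fintype.card_fun, ZMod.card, Fintype.card_fin]
    rw [hcu, hnat, mul_comm] at hsum
    exact lt_irrefl _ hsum
  -- final computation
  have hμAB : μ ({x : ℤ → ZMod m | ∀ u : ℕ, u ≤ s → x (a + (u : ℤ)) = iv u} ∩
      T^[n] ⁻¹' {x : ℤ → ZMod m | ∀ u : ℕ, u ≤ t → x (b + (u : ℤ)) = jv u})
      = ((m : ℝ≥0∞))⁻¹ ^ (s + 1) * ((m : ℝ≥0∞))⁻¹ ^ (t + 1) := by
    calc μ ({x : ℤ → ZMod m | ∀ u : ℕ, u ≤ s → x (a + (u : ℤ)) = iv u} ∩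
        T^[n] ⁻¹' {x : ℤ → ZMod m | ∀ u : ℕ, u ≤ t → x (b + (u : ℤ)) = jv u})
        = μ {x : ℤ → ZMod m |
          (fun g : Fin M → ZMod m =>
            (∀ (u : ℕ) (h : u < M), u ≤ s → g ⟨u, h⟩ = iv u) ∧
            (fun u : Fin (t + 1) => T^[n] (extFun m a M g) (b + ((u : ℕ) : ℤ)))
              = (fun u : Fin (t + 1) => jv (u : ℕ)))
            (fun i => x (a + (i : ℤ)))} := by rw [hsetEq]
      _ = ((Finset.univ.filter (fun g : Fin M → ZMod m =>
            (∀ (u : ℕ) (h : u < M), u ≤ s → g ⟨u, h⟩ = iv u) ∧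
            (fun u : Fin (t + 1) => T^[n] (extFun m a M g) (b + ((u : ℕ) : ℤ)))
              = (fun u : Fin (t + 1) => jv (u : ℕ)))).card : ℝ≥0∞)
            * ((m : ℝ≥0∞))⁻¹ ^ M :=
          aux_count μ hμ a M hMpos
            (fun g : Fin M → ZMod m =>
              (∀ (u : ℕ) (h : u < M), u ≤ s → g ⟨u, h⟩ = iv u) ∧
              (fun u : Fin (t + 1) => T^[n] (extFun m a M g) (b + ((u : ℕ) : ℤ)))
                = (fun u : Fin (t + 1) => jv (u : ℕ)))
      _ = (cK : ℝ≥0∞) * ((m : ℝ≥0∞))⁻¹ ^ M := by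
          rw [hall (fun u : Fin (t + 1) => jv (u : ℕ))]
      _ = ((cK : ℝ≥0∞) * ((m : ℝ≥0∞))⁻¹ ^ K) * ((m : ℝ≥0∞))⁻¹ ^ (t + 1) := by
          rw [hMK, pow_add]; ring
      _ = ((m : ℝ≥0∞))⁻¹ ^ (s + 1) * ((m : ℝ≥0∞))⁻¹ ^ (t + 1) := by rw [hQK]
  exact hμAB.symm
end

section
/- For a linear cellular automaton T_{f[l,r]} over Z_m with r < 0 or l > 0 (strictly one-sided neighborhood) that is surjective, T_{f[l,r]} is strong mixing with respect to the uniform Bernoulli measure. -/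
open MeasureTheory Filter
open scoped ENNReal Topology symmDiff

instance (m k : ℕ) [NeZero m] : DiscreteMeasurableSpace (Fin k → ZMod m) :=
  MeasurableSingletonClass.toDiscreteMeasurableSpace

namespace Stmt12

variable {m : ℕ}

/-- Cylinder set: configurations whose pattern on `[a, a+s]` lies in `S`. -/
def cyl (a : ℤ) (s : ℕ) (S : Set (Fin (s+1) → ZMod m)) : Set (ℤ → ZMod m) :=
  (fun (x : ℤ → ZMod m) (t : Fin (s+1)) => x (a + (t : ℕ))) ⁻¹' S

lemma mem_cyl {a : ℤ} {s : ℕ} {S : Set (Fin (s+1) → ZMod m)} {x : ℤ → ZMod m} :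
    x ∈ cyl a s S ↔ (fun t : Fin (s+1) => x (a + (t : ℕ))) ∈ S := Iff.rfl

lemma measurable_pattern (a : ℤ) (s : ℕ) :
    Measurable (fun (x : ℤ → ZMod m) (t : Fin (s+1)) => x (a + (t : ℕ))) := by
  apply measurable_pi_iff.2
  intro t
  exact measurable_pi_apply _

lemma measurableSet_cyl [NeZero m] (a : ℤ) (s : ℕ) (S : Set (Fin (s+1) → ZMod m)) :
    MeasurableSet (cyl a s S) :=
  (measurable_pattern a s) MeasurableSet.of_discrete

/-- The family of all cylinder sets. -/
def Alg (m : ℕ) : Set (Set (ℤ → ZMod m)) :=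
  {E | ∃ a s S, E = cyl a s S}

lemma cyl_rebase {a' a : ℤ} {s' s : ℕ} (h1 : a' ≤ a) (h2 : a + s ≤ a' + s')
    (S : Set (Fin (s+1) → ZMod m)) :
    ∃ S' : Set (Fin (s'+1) → ZMod m), cyl a s S = cyl a' s' S' := by
  have hd : (a - a').toNat + s ≤ s' := by omega
  refine ⟨(fun (w : Fin (s'+1) → ZMod m) (t : Fin (s+1)) =>
    w ⟨(a - a').toNat + t, by omega⟩) ⁻¹' S, ?_⟩
  ext x
  simp only [mem_cyl, Set.mem_preimage]
  constructor <;> intro hx <;> [skip; skip] <;>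
  · convert hx using 2 with t
    congr 1
    push_cast
    omega

lemma isSetAlgebra_Alg : IsSetAlgebra (Alg m) := by
  constructor
  · exact ⟨0, 0, ∅, by simp [cyl]⟩
  · rintro _ ⟨a, s, S, rfl⟩
    exact ⟨a, s, Sᶜ, rfl⟩
  · rintro _ _ ⟨a, s, S, rfl⟩ ⟨b, u, Q, rfl⟩
    obtain ⟨c, v, h1, h2, h3, h4⟩ :
        ∃ (c : ℤ) (v : ℕ), c ≤ a ∧ a + s ≤ c + v ∧ c ≤ b ∧ b + u ≤ c + v := by
      refine ⟨min a b, ((max (a+s) (b+u)) - min a b).toNat, ?_, ?_, ?_, ?_⟩ <;> omega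
    obtain ⟨S', hS'⟩ := cyl_rebase h1 h2 S
    obtain ⟨Q', hQ'⟩ := cyl_rebase h3 h4 Q
    exact ⟨c, v, S' ∪ Q', by rw [hS', hQ']; rfl⟩

lemma isPiSystem_Alg : IsPiSystem (Alg m) := fun s hs t ht _ =>
  (isSetAlgebra_Alg.inter_mem hs ht)

lemma generateFrom_Alg [NeZero m] :
    (by infer_instance : MeasurableSpace (ℤ → ZMod m)) =
      MeasurableSpace.generateFrom (Alg m) := by
  apply le_antisymm
  · have h : ∀ n : ℤ, @Measurable _ _ (MeasurableSpace.generateFrom (Alg m)) _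
        (fun x : ℤ → ZMod m => x n) := by
      intro n s _
      have : (fun x : ℤ → ZMod m => x n) ⁻¹' s =
          cyl n 0 ((fun v : Fin 1 → ZMod m => v 0) ⁻¹' s) := by
        ext x
        simp [mem_cyl, cyl]
      rw [this]
      exact MeasurableSpace.measurableSet_generateFrom ⟨n, 0, _, rfl⟩
    exact iSup_le fun n => measurable_iff_comap_le.mp (h n)
  · apply MeasurableSpace.generateFrom_le
    rintro _ ⟨a, s, S, rfl⟩
    exact measurableSet_cyl a s S

section Measure

variable {μ : Measure (ℤ → ZMod m)}

/-- The hypothesis on the measure of basic interval cylinders. -/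
def Hmu (m : ℕ) (μ : Measure (ℤ → ZMod m)) : Prop :=
  ∀ (a : ℤ) (s : ℕ) (j : ℕ → ZMod m),
    μ {x | ∀ t : ℕ, t ≤ s → x (a + (t : ℤ)) = j t} = ((m : ℝ≥0∞))⁻¹ ^ (s + 1)

lemma measure_cyl_singleton (hμ : Hmu m μ) (a : ℤ) (s : ℕ) (v : Fin (s+1) → ZMod m) :
    μ (cyl a s {v}) = ((m : ℝ≥0∞))⁻¹ ^ (s + 1) := by
  have hset : cyl a s {v} = {x : ℤ → ZMod m | ∀ t : ℕ, t ≤ s →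
      x (a + (t : ℤ)) = (fun u : ℕ => if h : u < s+1 then v ⟨u, h⟩ else 0) t} := by
    ext x
    simp only [mem_cyl, Set.mem_singleton_iff, funext_iff, Set.mem_setOf_eq]
    constructor
    · intro h t ht
      rw [dif_pos (by omega : t < s+1)]
      exact h ⟨t, by omega⟩
    · intro h t
      have := h t (by omega : (t : ℕ) ≤ s)
      rw [dif_pos t.2] at this
      simpa using this
  rw [hset, hμ]

lemma cyl_singleton_disjoint (a : ℤ) (s : ℕ) {v w : Fin (s+1) → ZMod m} (hvw : v ≠ w) :
    Disjoint (cyl a s {v} : Set (ℤ → ZMod m)) (cyl a s {w}) := by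
  rw [Set.disjoint_left]
  intro x hxv hxw
  exact hvw (hxv.symm.trans hxw)

lemma measure_cyl [NeZero m] (hμ : Hmu m μ) (a : ℤ) (s : ℕ) (S : Set (Fin (s+1) → ZMod m)) :
    μ (cyl a s S) = (S.toFinite.toFinset.card : ℝ≥0∞) * ((m : ℝ≥0∞))⁻¹ ^ (s + 1) := by
  have hdecomp : cyl a s S = ⋃ v ∈ S.toFinite.toFinset, cyl a s {v} := by
    ext x
    simp only [Set.mem_iUnion, mem_cyl, Set.Finite.mem_toFinset, Set.mem_singleton_iff]
    exact ⟨fun h => ⟨_, h, rfl⟩, fun ⟨v, hv, h⟩ => h ▸ hv⟩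
  rw [hdecomp, measure_biUnion_finset ?_ (fun v _ => measurableSet_cyl a s {v})]
  · rw [Finset.sum_congr rfl (fun v _ => measure_cyl_singleton hμ a s v)]
    simp [Finset.sum_const, mul_comm]
  · intro v hv w hw hvw
    exact cyl_singleton_disjoint a s hvw

/-- Gluing three words into one. -/
def glue (s k s' : ℕ) (v : Fin (s+1) → ZMod m) (g : Fin k → ZMod m)
    (w : Fin (s'+1) → ZMod m) (t : Fin (s + k + s' + 1 + 1)) : ZMod m :=
  if h1 : (t : ℕ) < s+1 then v ⟨t, h1⟩
  else if h2 : (t : ℕ) < s+1+k then g ⟨(t : ℕ) - (s+1), by omega⟩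
  else w ⟨(t : ℕ) - (s+1+k), by have := t.2; omega⟩

lemma measure_cyl_inter_singleton [NeZero m] (hμ : Hmu m μ) (a : ℤ) (s k s' : ℕ)
    (v : Fin (s+1) → ZMod m) (w : Fin (s'+1) → ZMod m) :
    μ (cyl a s {v} ∩ cyl (a + (s+1+k : ℕ)) s' {w}) =
      ((m : ℝ≥0∞))⁻¹ ^ (s + 1) * ((m : ℝ≥0∞))⁻¹ ^ (s' + 1) := by
  have hm0 : (m : ℝ≥0∞) ≠ 0 := by
    exact_mod_cast Nat.cast_ne_zero.2 (NeZero.ne m)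
  set n := s + k + s' + 1 with hn
  have hsplit : cyl a s {v} ∩ cyl (a + (s+1+k : ℕ)) s' {w} =
      ⋃ g ∈ (Finset.univ : Finset (Fin k → ZMod m)), cyl a n {glue s k s' v g w} := by
    ext x
    simp only [Set.mem_inter_iff, mem_cyl, Set.mem_singleton_iff, funext_iff,
      Set.mem_iUnion, Finset.mem_univ, true_and, exists_prop, exists_true_left]
    constructor
    · rintro ⟨hv, hw⟩
      refine ⟨fun i => x (a + (s+1+(i:ℕ) : ℕ)), fun t => ?_⟩
      unfold glue
      split_ifs with h1 h2
      · have := hv ⟨(t:ℕ), h1⟩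
        simpa using this
      · congr 1
        push_cast
        omega
      · have := hw ⟨(t:ℕ) - (s+1+k), by have := t.2; omega⟩
        rw [← this]
        congr 1
        push_cast
        have := t.2
        omega
    · rintro ⟨g, hg⟩
      constructor
      · intro t
        have := hg ⟨(t:ℕ), by omega⟩
        unfold glue at this
        rw [dif_pos (by simpa using t.2 : ((⟨(t:ℕ), by omega⟩ : Fin (n+1)) : ℕ) < s+1)] at this
        simpa using this
      · intro t
        have := hg ⟨s+1+k+(t:ℕ), by have := t.2; omega⟩
        unfold glue at this
        rw [dif_neg (by simp only [Fin.val_mk]; omega), dif_neg (by simp only [Fin.val_mk]; omega)] at this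
        rw [show a + ((s+1+k : ℕ) : ℤ) + ((t:ℕ) : ℤ)
              = a + ((s+1+k+(t:ℕ) : ℕ) : ℤ) by push_cast; omega]
        rw [this]
        congr 1
        apply Fin.ext
        simp
  rw [hsplit, measure_biUnion_finset ?_ (fun g _ => measurableSet_cyl a n _)]
  · rw [Finset.sum_congr rfl (fun g _ => measure_cyl_singleton hμ a n _)]
    rw [Finset.sum_const]
    have hcard : (Finset.univ : Finset (Fin k → ZMod m)).card = m ^ k := by
      simp [ZMod.card]
    rw [hcard, nsmul_eq_mul]
    have hnk : (n+1) = k + ((s+1) + (s'+1)) := by omega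
    rw [hnk, pow_add, pow_add, ← mul_assoc]
    push_cast
    rw [← mul_pow, ENNReal.mul_inv_cancel hm0 (by simp), one_pow, one_mul]
  · intro g _ g' _ hgg'
    apply cyl_singleton_disjoint
    intro hEq
    apply hgg'
    funext i
    have h2 := congrFun hEq ⟨s+1+(i:ℕ), by have := i.2; omega⟩
    unfold glue at h2
    rw [dif_neg (by simp only [Fin.val_mk]; omega),
      dif_pos (by simp only [Fin.val_mk]; have := i.2; omega)] at h2
    have hn : ¬ (s + 1 + (i:ℕ) ≤ s) := by omega
    simpa [hn] using h2

lemma measure_cyl_inter [NeZero m] (hμ : Hmu m μ) {a b : ℤ} {s s' : ℕ} (hab : a + s < b)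
    (S : Set (Fin (s+1) → ZMod m)) (S' : Set (Fin (s'+1) → ZMod m)) :
    μ (cyl a s S ∩ cyl b s' S') = μ (cyl a s S) * μ (cyl b s' S') := by
  obtain ⟨k, hk⟩ : ∃ k : ℕ, b = a + (s+1+k : ℕ) :=
    ⟨(b - a - s - 1).toNat, by push_cast; omega⟩
  subst hk
  have hdecomp : cyl a s S ∩ cyl (a + (s+1+k:ℕ)) s' S' =
      ⋃ p ∈ S.toFinite.toFinset ×ˢ S'.toFinite.toFinset,
        (cyl a s {p.1} ∩ cyl (a + (s+1+k:ℕ)) s' {p.2}) := by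
    ext x
    simp only [Set.mem_iUnion, Set.mem_inter_iff, mem_cyl, Finset.mem_product,
      Set.Finite.mem_toFinset, Set.mem_singleton_iff, exists_prop, Prod.exists]
    constructor
    · rintro ⟨h1, h2⟩; exact ⟨_, _, ⟨h1, h2⟩, rfl, rfl⟩
    · rintro ⟨p, q, ⟨hp, hq⟩, rfl, rfl⟩; exact ⟨hp, hq⟩
  rw [hdecomp, measure_biUnion_finset ?_
      (fun p _ => ((measurableSet_cyl _ _ _).inter (measurableSet_cyl _ _ _)))]
  · rw [Finset.sum_congr rfl (fun p _ => measure_cyl_inter_singleton hμ a s k s' p.1 p.2)]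
    rw [Finset.sum_const, Finset.card_product, measure_cyl hμ, measure_cyl hμ, nsmul_eq_mul]
    push_cast
    ring
  · intro p hp q hq hpq
    by_cases h1 : p.1 = q.1
    · have h2 : p.2 ≠ q.2 := fun h2 => hpq (by cases p; cases q; simp_all)
      exact Disjoint.mono inf_le_right inf_le_right (cyl_singleton_disjoint _ _ h2)
    · exact Disjoint.mono inf_le_left inf_le_left (cyl_singleton_disjoint _ _ h1)

end Measure

open Function in
lemma card_preimage_mul {G H : Type*} [AddCommGroup G] [AddCommGroup H]
    [Fintype G] [Fintype H] (f : G →+ H) (hf : Surjective f) (S : Set H) :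
    (f ⁻¹' S).ncard * Fintype.card H = S.ncard * Fintype.card G := by
  classical
  have hfiber : ∀ v : H, (f ⁻¹' {v}).ncard = (f ⁻¹' {0}).ncard := by
    intro v
    obtain ⟨w0, hw0⟩ := hf v
    have himg : f ⁻¹' {v} = (fun g => g + w0) '' (f ⁻¹' {0}) := by
      ext g
      simp only [Set.mem_preimage, Set.mem_singleton_iff, Set.mem_image]
      constructor
      · intro h; exact ⟨g - w0, by simp [map_sub, h, hw0], by simp⟩
      · rintro ⟨g', hg', rfl⟩; simp [map_add, hg', hw0]
    rw [himg, Set.ncard_image_of_injective _ (add_left_injective w0)]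
  have hsplit : ∀ Q : Set H, (f ⁻¹' Q).ncard = Q.ncard * (f ⁻¹' {0}).ncard := by
    intro Q
    have hQ : (f ⁻¹' Q).toFinset = Q.toFinset.biUnion (fun v => (f ⁻¹' {v}).toFinset) := by
      ext g
      simp only [Set.mem_toFinset, Set.mem_preimage, Finset.mem_biUnion,
        Set.mem_singleton_iff]
      exact ⟨fun h => ⟨f g, h, rfl⟩, fun ⟨v, hv, he⟩ => he ▸ hv⟩
    rw [Set.ncard_eq_toFinset_card', hQ, Finset.card_biUnion]
    · rw [Finset.sum_congr rfl (fun v _ => by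
        rw [← Set.ncard_eq_toFinset_card', hfiber v, Set.ncard_eq_toFinset_card']),
        Finset.sum_const, smul_eq_mul, Set.ncard_eq_toFinset_card' Q,
        Set.ncard_eq_toFinset_card']
    · intro v _ w _ hvw
      simp only [Finset.disjoint_left, Set.mem_toFinset, Set.mem_preimage,
        Set.mem_singleton_iff]
      rintro g rfl h
      exact hvw h
  rw [hsplit S]
  have h2 := hsplit Set.univ
  simp only [Set.preimage_univ, Set.ncard_univ, Nat.card_eq_fintype_card] at h2
  rw [mul_assoc, mul_comm ((f ⁻¹' {0}).ncard), ← h2]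

section Automaton

variable {l r : ℤ} {lam : ℤ → ZMod m} {T : (ℤ → ZMod m) → ℤ → ZMod m}
variable {μ : Measure (ℤ → ZMod m)}

instance [NeZero m] : MeasurableAdd₂ (ZMod m) := ⟨Measurable.of_discrete⟩

def ext' (N : ℕ) (w : Fin N → ZMod m) (u : ℕ) : ZMod m :=
  if h : u < N then w ⟨u, h⟩ else 0

/-- The local map of the automaton on words, as an additive monoid hom. -/
noncomputable def Phi (lam : ℤ → ZMod m) (l r : ℤ) (s : ℕ) :
    (Fin (s + (r-l).toNat + 1) → ZMod m) →+ (Fin (s+1) → ZMod m) where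
  toFun w t := ∑ i ∈ Finset.Icc l r, lam i * ext' _ w ((t : ℕ) + (i - l).toNat)
  map_zero' := by
    funext t
    have : ∀ u, ext' (s + (r-l).toNat + 1) (0 : Fin _ → ZMod m) u = 0 := by
      intro u; unfold ext'; split_ifs <;> simp
    simp [this]
  map_add' w w' := by
    funext t
    simp only [Pi.add_apply]
    rw [← Finset.sum_add_distrib]
    refine Finset.sum_congr rfl fun i hi => ?_
    have : ext' _ (w + w') ((t:ℕ) + (i - l).toNat)
        = ext' _ w ((t:ℕ) + (i - l).toNat) + ext' _ w' ((t:ℕ) + (i - l).toNat) := by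
      unfold ext'; split_ifs <;> simp
    rw [this, mul_add]

lemma pattern_T (hlr : l ≤ r)
    (hT : ∀ x n, T x n = ∑ i ∈ Finset.Icc l r, lam i * x (n + i))
    (x : ℤ → ZMod m) (a : ℤ) (s : ℕ) :
    (fun t : Fin (s+1) => T x (a + ((t:ℕ) : ℤ))) =
      Phi lam l r s (fun u : Fin (s + (r-l).toNat + 1) => x (a + l + ((u:ℕ) : ℤ))) := by
  funext t
  rw [hT]
  show _ = ∑ i ∈ Finset.Icc l r, lam i * ext' _ _ ((t : ℕ) + (i - l).toNat)
  refine Finset.sum_congr rfl fun i hi => ?_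
  rw [Finset.mem_Icc] at hi
  have hb : (t:ℕ) + (i - l).toNat < s + (r-l).toNat + 1 := by
    have := t.2; omega
  unfold ext'
  rw [dif_pos hb]
  congr 1
  have h3 : ((i - l).toNat : ℤ) = i - l := Int.toNat_of_nonneg (by omega)
  push_cast [h3]
  ring

lemma preimage_cyl (hlr : l ≤ r)
    (hT : ∀ x n, T x n = ∑ i ∈ Finset.Icc l r, lam i * x (n + i))
    (a : ℤ) (s : ℕ) (S : Set (Fin (s+1) → ZMod m)) :
    T ⁻¹' cyl a s S = cyl (a + l) (s + (r-l).toNat) (Phi lam l r s ⁻¹' S) := by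
  ext x
  simp only [Set.mem_preimage, mem_cyl]
  rw [← pattern_T hlr hT x a s]

lemma Phi_surjective (hlr : l ≤ r)
    (hT : ∀ x n, T x n = ∑ i ∈ Finset.Icc l r, lam i * x (n + i))
    (hsurj : Function.Surjective T) (a : ℤ) (s : ℕ) :
    Function.Surjective (Phi lam l r s (m := m)) := by
  intro v
  set y : ℤ → ZMod m := fun n =>
    if h : 0 ≤ n - a ∧ (n - a).toNat < s + 1 then v ⟨(n-a).toNat, h.2⟩ else 0 with hy
  obtain ⟨x, hx⟩ := hsurj y
  refine ⟨fun u => x (a + l + ((u:ℕ):ℤ)), ?_⟩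
  funext t
  have h1 := congrFun (pattern_T hlr hT x a s) t
  rw [← h1, hx]
  simp only [hy]
  have h2 : (0:ℤ) ≤ (a + ((t:ℕ):ℤ)) - a ∧ ((a + ((t:ℕ):ℤ)) - a).toNat < s + 1 := by
    constructor
    · omega
    · have := t.2; omega
  rw [dif_pos h2]
  congr 1
  apply Fin.ext
  simp only [Fin.val_mk]
  omega

lemma measurable_T (hT : ∀ x n, T x n = ∑ i ∈ Finset.Icc l r, lam i * x (n + i))
    [NeZero m] : Measurable T := by
  apply measurable_pi_iff.2
  intro n
  have h : (fun x : ℤ → ZMod m => T x n)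
      = fun x => ∑ i ∈ Finset.Icc l r, lam i * x (n + i) := funext fun x => hT x n
  rw [h]
  exact Finset.measurable_sum _
    (fun i _ => (Measurable.of_discrete (f := fun c => lam i * c)).comp
      (measurable_pi_apply (n+i)))

lemma ennreal_cancel (m : ℕ) (hm : m ≠ 0) (P Q A B : ℕ) (h : P * m ^ A = Q * m ^ B) :
    (P : ℝ≥0∞) * ((m:ℝ≥0∞))⁻¹ ^ B = (Q : ℝ≥0∞) * ((m:ℝ≥0∞))⁻¹ ^ A := by
  have hm0 : (m : ℝ≥0∞) ≠ 0 := Nat.cast_ne_zero.2 hm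
  have hmt : (m : ℝ≥0∞) ≠ ∞ := ENNReal.natCast_ne_top m
  have hcan : ∀ k : ℕ, ((m:ℝ≥0∞))^k * ((m:ℝ≥0∞))⁻¹^k = 1 := fun k => by
    rw [← mul_pow, ENNReal.mul_inv_cancel hm0 hmt, one_pow]
  have hc : (P : ℝ≥0∞) * (m:ℝ≥0∞) ^ A = (Q : ℝ≥0∞) * (m:ℝ≥0∞) ^ B := by
    exact_mod_cast congrArg (Nat.cast : ℕ → ℝ≥0∞) h
  calc (P : ℝ≥0∞) * (↑m)⁻¹ ^ B
      = ((P : ℝ≥0∞) * (↑m)^A * (↑m)⁻¹^A) * (↑m)⁻¹ ^ B := by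
        rw [mul_assoc (P:ℝ≥0∞), hcan A, mul_one]
    _ = ((Q : ℝ≥0∞) * (↑m)^B * (↑m)⁻¹^B) * (↑m)⁻¹ ^ A := by rw [hc]; ring
    _ = (Q : ℝ≥0∞) * (↑m)⁻¹ ^ A := by
        rw [mul_assoc (Q:ℝ≥0∞), hcan B, mul_one]

lemma measure_preimage_cyl [NeZero m] (hμ : Hmu m μ) (hlr : l ≤ r)
    (hT : ∀ x n, T x n = ∑ i ∈ Finset.Icc l r, lam i * x (n + i))
    (hsurj : Function.Surjective T) (a : ℤ) (s : ℕ) (S : Set (Fin (s+1) → ZMod m)) :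
    μ (T ⁻¹' cyl a s S) = μ (cyl a s S) := by
  rw [preimage_cyl hlr hT, measure_cyl hμ, measure_cyl hμ]
  rw [← Set.ncard_eq_toFinset_card _ (Set.toFinite _),
    ← Set.ncard_eq_toFinset_card _ (Set.toFinite _)]
  have hcount := card_preimage_mul (Phi lam l r s) (Phi_surjective hlr hT hsurj a s) S
  simp only [ZMod.card, Fintype.card_fun, Fintype.card_fin] at hcount
  exact ennreal_cancel m (NeZero.ne m) _ _ _ _ hcount

lemma map_T_eq [NeZero m] [IsProbabilityMeasure μ] (hμ : Hmu m μ) (hlr : l ≤ r)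
    (hT : ∀ x n, T x n = ∑ i ∈ Finset.Icc l r, lam i * x (n + i))
    (hsurj : Function.Surjective T) :
    MeasurePreserving T μ μ := by
  have hTm : Measurable T := measurable_T hT
  refine ⟨hTm, ?_⟩
  haveI : IsProbabilityMeasure (μ.map T) := Measure.isProbabilityMeasure_map hTm.aemeasurable
  refine MeasureTheory.ext_of_generate_finite (Alg m) generateFrom_Alg isPiSystem_Alg ?_ ?_
  · rintro _ ⟨a, s, S, rfl⟩
    rw [Measure.map_apply hTm (measurableSet_cyl a s S)]
    exact measure_preimage_cyl hμ hlr hT hsurj a s S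
  · simp

lemma iterate_preimage_cyl [NeZero m] (hlr : l ≤ r)
    (hT : ∀ x n, T x n = ∑ i ∈ Finset.Icc l r, lam i * x (n + i))
    (a : ℤ) (s : ℕ) (S : Set (Fin (s+1) → ZMod m)) (n : ℕ) :
    ∃ (s' : ℕ) (S' : Set (Fin (s'+1) → ZMod m)),
      T^[n] ⁻¹' cyl a s S = cyl (a + n * l) s' S' ∧ (s' : ℤ) = s + n * (r - l) := by
  induction n with
  | zero => exact ⟨s, S, by simp, by simp⟩
  | succ n ih =>
    obtain ⟨s', S', hE, hs'⟩ := ih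
    refine ⟨s' + (r-l).toNat, Phi lam l r s' ⁻¹' S', ?_, ?_⟩
    · rw [Function.iterate_succ, Set.preimage_comp, hE, preimage_cyl hlr hT]
      have : a + n * l + l = a + (n+1 : ℕ) * l := by push_cast; ring
      rw [this]
    · have h3 : (((r - l).toNat : ℤ)) = r - l := Int.toNat_of_nonneg (by omega)
      push_cast [h3]
      rw [hs']
      ring

lemma eventually_indep [NeZero m] [IsProbabilityMeasure μ] (hμ : Hmu m μ) (hlr : l ≤ r)
    (hside : r < 0 ∨ 0 < l)
    (hT : ∀ x n, T x n = ∑ i ∈ Finset.Icc l r, lam i * x (n + i))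
    (hsurj : Function.Surjective T)
    (a b : ℤ) (sA sB : ℕ) (SA : Set (Fin (sA+1) → ZMod m)) (SB : Set (Fin (sB+1) → ZMod m)) :
    ∀ᶠ n : ℕ in atTop, μ (T^[n] ⁻¹' cyl a sA SA ∩ cyl b sB SB)
      = μ (cyl a sA SA) * μ (cyl b sB SB) := by
  have hmp := map_T_eq hμ hlr hT hsurj
  rw [eventually_atTop]
  refine ⟨(a + sA - b).toNat + (b + sB - a).toNat + 1, fun n hn => ?_⟩
  obtain ⟨s', S', hE, hs'⟩ := iterate_preimage_cyl hlr hT a sA SA n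
  have hpre : μ (T^[n] ⁻¹' cyl a sA SA) = μ (cyl a sA SA) :=
    (hmp.iterate n).measure_preimage (measurableSet_cyl a sA SA).nullMeasurableSet
  have hncast : ((a + sA - b).toNat : ℤ) + ((b + sB - a).toNat : ℤ) + 1 ≤ (n : ℤ) := by
    exact_mod_cast hn
  have ht1 : (a + (sA:ℤ) - b) ≤ ((a + sA - b).toNat : ℤ) := Int.self_le_toNat _
  have ht2 : (b + (sB:ℤ) - a) ≤ ((b + sB - a).toNat : ℤ) := Int.self_le_toNat _
  have key : (a + n * l) + (s' : ℤ) = a + sA + n * r := by rw [hs']; ring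
  rw [hE]
  rcases hside with hr | hl
  · have hmul : (n : ℤ) * r ≤ (n : ℤ) * (-1) :=
      mul_le_mul_of_nonneg_left (by omega) (by positivity)
    have hord : (a + n * l) + (s' : ℤ) < b := by
      rw [key]
      linarith
    rw [measure_cyl_inter hμ hord, ← hE, hpre]
  · have hmul : (n : ℤ) * 1 ≤ (n : ℤ) * l :=
      mul_le_mul_of_nonneg_left (by omega) (by positivity)
    have hord : b + (sB : ℤ) < a + n * l := by linarith
    rw [Set.inter_comm, measure_cyl_inter hμ hord, ← hE, hpre, mul_comm]

end Automaton

lemma le_add_symmDiff {X : Type*} [MeasurableSpace X] (μ : Measure X) (E F : Set X) :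
    μ E ≤ μ F + μ (E ∆ F) := by
  have hsub : E ⊆ F ∪ (E ∆ F) := by
    intro x hx
    by_cases hF : x ∈ F
    · exact Or.inl hF
    · exact Or.inr (Set.mem_symmDiff.2 (Or.inl ⟨hx, hF⟩))
  exact (measure_mono hsub).trans (measure_union_le _ _)

end Stmt12

open Stmt12 in
/-- A surjective linear cellular automaton `T_{f[l,r]}` over `ZMod m` with strictly
one-sided neighborhood (`r < 0` or `l > 0`) is strong mixing with respect to the uniform
Bernoulli measure: `lim_{n→∞} μ(T^{-n}A ∩ B) = μ(A)·μ(B)` for all measurable `A`, `B`. -/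
theorem stmt12 (m : ℕ) (hm : 2 ≤ m) (l r : ℤ) (hlr : l ≤ r) (hside : r < 0 ∨ 0 < l)
    (lam : ℤ → ZMod m)
    (T : (ℤ → ZMod m) → ℤ → ZMod m)
    (hT : ∀ x n, T x n = ∑ i ∈ Finset.Icc l r, lam i * x (n + i))
    (hsurj : Function.Surjective T)
    (μ : Measure (ℤ → ZMod m)) [IsProbabilityMeasure μ]
    (hμ : ∀ (a : ℤ) (s : ℕ) (j : ℕ → ZMod m),
      μ {x | ∀ t : ℕ, t ≤ s → x (a + (t : ℤ)) = j t} = ((m : ℝ≥0∞))⁻¹ ^ (s + 1)) :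
    ∀ A B : Set (ℤ → ZMod m), MeasurableSet A → MeasurableSet B →
      Tendsto (fun n : ℕ => μ (T^[n] ⁻¹' A ∩ B)) atTop (𝓝 (μ A * μ B)) := by
  haveI : NeZero m := ⟨by omega⟩
  have hmu : Hmu m μ := hμ
  have hmp : MeasurePreserving T μ μ := map_T_eq hmu hlr hT hsurj
  have hdense : μ.MeasureDense (Alg m) :=
    Measure.MeasureDense.of_generateFrom_isSetAlgebra_finite μ isSetAlgebra_Alg generateFrom_Alg
  intro A B hA hB
  rw [ENNReal.tendsto_atTop (by finiteness)]
  intro ε hε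
  set ε' := min ε 1 with hε'def
  have hε'0 : 0 < ε' := lt_min hε zero_lt_one
  have hε't : ε' ≠ ∞ := ne_top_of_le_ne_top ENNReal.one_ne_top (min_le_right _ _)
  set η := ε' / 8 with hηdef
  have hη0 : η ≠ 0 := by
    rw [hηdef]
    simp [ENNReal.div_eq_zero_iff, hε'0.ne']
  have hηle : η ≤ ε' := by
    rw [hηdef]
    exact ENNReal.div_le_of_le_mul (le_mul_of_one_le_right zero_le (by norm_num))
  have hηt : η ≠ ∞ := ne_top_of_le_ne_top hε't hηle
  have hη1 : η ≤ 1 := le_trans hηle (min_le_right _ _)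
  set δ : ℝ := η.toReal with hδdef
  have hδ0 : 0 < δ := ENNReal.toReal_pos hη0 hηt
  have hofReal : ENNReal.ofReal δ = η := ENNReal.ofReal_toReal hηt
  obtain ⟨EA, hEA𝒜, hEA⟩ := hdense.approx A hA (measure_ne_top μ A) δ hδ0
  obtain ⟨EB, hEB𝒜, hEB⟩ := hdense.approx B hB (measure_ne_top μ B) δ hδ0
  rw [hofReal] at hEA hEB
  have hEAm : MeasurableSet EA := by
    obtain ⟨a, sA, SA, rfl⟩ := hEA𝒜; exact measurableSet_cyl _ _ _
  have hEBm : MeasurableSet EB := by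
    obtain ⟨b, sB, SB, rfl⟩ := hEB𝒜; exact measurableSet_cyl _ _ _
  -- the eventual exact independence for the approximating cylinders
  have hev : ∀ᶠ n : ℕ in atTop, μ (T^[n] ⁻¹' EA ∩ EB) = μ EA * μ EB := by
    obtain ⟨a, sA, SA, rfl⟩ := hEA𝒜
    obtain ⟨b, sB, SB, rfl⟩ := hEB𝒜
    exact eventually_indep hmu hlr hside hT hsurj a b sA sB SA SB
  rw [eventually_atTop] at hev
  obtain ⟨N, hN⟩ := hev
  refine ⟨N, fun n hn => ?_⟩
  have hval := hN n hn
  -- symmetric-difference estimates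
  have hsymA : ∀ k : ℕ, μ (T^[k] ⁻¹' (A ∆ EA)) = μ (A ∆ EA) := fun k =>
    (hmp.iterate k).measure_preimage (hA.symmDiff hEAm).nullMeasurableSet
  have hcomp1 : ∀ k : ℕ, μ (T^[k] ⁻¹' A ∩ B) ≤ μ (T^[k] ⁻¹' EA ∩ EB) + η + η := by
    intro k
    have hsub : T^[k] ⁻¹' A ∩ B ⊆ (T^[k] ⁻¹' EA ∩ EB) ∪ (T^[k] ⁻¹' (A ∆ EA) ∪ (B ∆ EB)) := by
      rintro x ⟨hxA, hxB⟩
      by_cases h1 : T^[k] x ∈ EA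
      · by_cases h2 : x ∈ EB
        · exact Or.inl ⟨h1, h2⟩
        · exact Or.inr (Or.inr (Set.mem_symmDiff.2 (Or.inl ⟨hxB, h2⟩)))
      · exact Or.inr (Or.inl (Set.mem_symmDiff.2 (Or.inl ⟨hxA, h1⟩)))
    calc μ (T^[k] ⁻¹' A ∩ B)
        ≤ μ (T^[k] ⁻¹' EA ∩ EB) + (μ (T^[k] ⁻¹' (A ∆ EA)) + μ (B ∆ EB)) :=
          (measure_mono hsub).trans ((measure_union_le _ _).trans
            (add_le_add le_rfl (measure_union_le _ _)))
      _ ≤ μ (T^[k] ⁻¹' EA ∩ EB) + η + η := by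
          rw [hsymA k, add_assoc]
          exact add_le_add le_rfl (add_le_add hEA.le hEB.le)
  have hcomp2 : ∀ k : ℕ, μ (T^[k] ⁻¹' EA ∩ EB) ≤ μ (T^[k] ⁻¹' A ∩ B) + η + η := by
    intro k
    have hsub : T^[k] ⁻¹' EA ∩ EB ⊆ (T^[k] ⁻¹' A ∩ B) ∪ (T^[k] ⁻¹' (A ∆ EA) ∪ (B ∆ EB)) := by
      rintro x ⟨hxA, hxB⟩
      by_cases h1 : T^[k] x ∈ A
      · by_cases h2 : x ∈ B
        · exact Or.inl ⟨h1, h2⟩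
        · exact Or.inr (Or.inr (Set.mem_symmDiff.2 (Or.inr ⟨hxB, h2⟩)))
      · exact Or.inr (Or.inl (Set.mem_symmDiff.2 (Or.inr ⟨hxA, h1⟩)))
    calc μ (T^[k] ⁻¹' EA ∩ EB)
        ≤ μ (T^[k] ⁻¹' A ∩ B) + (μ (T^[k] ⁻¹' (A ∆ EA)) + μ (B ∆ EB)) :=
          (measure_mono hsub).trans ((measure_union_le _ _).trans
            (add_le_add le_rfl (measure_union_le _ _)))
      _ ≤ μ (T^[k] ⁻¹' A ∩ B) + η + η := by
          rw [hsymA k, add_assoc]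
          exact add_le_add le_rfl (add_le_add hEA.le hEB.le)
  -- product estimates
  have hprod_le : ∀ (s t s' t' : Set (ℤ → ZMod m)), μ (s ∆ s') ≤ η → μ (t ∆ t') ≤ η →
      μ s' * μ t' ≤ μ s * μ t + 3 * η := by
    intro s t s' t' hs ht
    have h1 : μ s' ≤ μ s + η := (le_add_symmDiff μ s' s).trans
      (add_le_add le_rfl (le_trans (le_of_eq (by rw [symmDiff_comm])) hs))
    have h2 : μ t' ≤ μ t + η := (le_add_symmDiff μ t' t).trans
      (add_le_add le_rfl (le_trans (le_of_eq (by rw [symmDiff_comm])) ht))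
    calc μ s' * μ t' ≤ (μ s + η) * (μ t + η) := mul_le_mul' h1 h2
      _ = μ s * μ t + (μ s * η + η * μ t + η * η) := by ring
      _ ≤ μ s * μ t + (1 * η + η * 1 + η * 1) := by
          gcongr <;> first
            | exact prob_le_one
            | exact hη1
      _ = μ s * μ t + 3 * η := by ring
  have hAB_le : μ A * μ B ≤ μ EA * μ EB + 3 * η := by
    refine hprod_le EA EB A B ?_ ?_
    · rw [symmDiff_comm]; exact hEA.le
    · rw [symmDiff_comm]; exact hEB.le
  have hEAB_le : μ EA * μ EB ≤ μ A * μ B + 3 * η := hprod_le A B EA EB hEA.le hEB.le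
  have h8η : 8 * η = ε' := ENNReal.mul_div_cancel' (by norm_num) (by norm_num)
  have h5η : 5 * η ≤ ε := by
    calc (5:ℝ≥0∞) * η ≤ 8 * η := by gcongr; norm_num
      _ = ε' := h8η
      _ ≤ ε := min_le_left _ _
  constructor
  · -- lower bound: μ A * μ B - ε ≤ μ (T^[n]⁻¹ A ∩ B)
    rw [tsub_le_iff_right]
    calc μ A * μ B ≤ μ EA * μ EB + 3 * η := hAB_le
      _ = μ (T^[n] ⁻¹' EA ∩ EB) + 3 * η := by rw [hval]
      _ ≤ (μ (T^[n] ⁻¹' A ∩ B) + η + η) + 3 * η := by gcongr; exact hcomp2 n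
      _ = μ (T^[n] ⁻¹' A ∩ B) + 5 * η := by ring
      _ ≤ μ (T^[n] ⁻¹' A ∩ B) + ε := by gcongr
  · calc μ (T^[n] ⁻¹' A ∩ B) ≤ μ (T^[n] ⁻¹' EA ∩ EB) + η + η := hcomp1 n
      _ = μ EA * μ EB + η + η := by rw [hval]
      _ ≤ (μ A * μ B + 3 * η) + η + η := by gcongr
      _ = μ A * μ B + 5 * η := by ring
      _ ≤ μ A * μ B + ε := by gcongr
end

section
/- Let p be prime and T_{f[l,r]} the invertible linear CA over Z_{p²} with local rule f(x_l,...,x_r) = p·Σ_{i=l}^{r-1} β_i x_i + λ_r x_r (mod p²), gcd(p, λ_r) = 1, and 0 < l < r. Then both T_{f[l,r]} and its inverse T_{g[-(2r-l),-r]} are strong mixing with respect to the uniform Bernoulli measure. -/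
open MeasureTheory Filter
open scoped ENNReal Topology
open scoped symmDiff

namespace Stmt13

variable {p : ℕ}

/-- restriction of a configuration to the window `[a,b]`, zero outside. -/
def resz (a b : ℤ) (x : ℤ → ZMod (p ^ 2)) : ℤ → ZMod (p ^ 2) :=
  fun i => if a ≤ i ∧ i ≤ b then x i else 0

/-- patterns supported on `[a,b]`. -/
def patt (p : ℕ) (a b : ℤ) : Set (ℤ → ZMod (p ^ 2)) :=
  {j | ∀ i, ¬(a ≤ i ∧ i ≤ b) → j i = 0}

lemma resz_apply_of_mem {a b i : ℤ} (h : a ≤ i ∧ i ≤ b) (x : ℤ → ZMod (p ^ 2)) :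
    resz a b x i = x i := if_pos h

lemma resz_resz {a b a' b' : ℤ} (h1 : a' ≤ a) (h2 : b ≤ b') (x : ℤ → ZMod (p ^ 2)) :
    resz a b (resz a' b' x) = resz a b x := by
  funext i
  simp only [resz]
  split_ifs with h h'
  · rfl
  · exact absurd ⟨h1.trans h.1, h.2.trans h2⟩ h'
  · rfl

lemma resz_mem_patt (a b : ℤ) (x : ℤ → ZMod (p ^ 2)) : resz a b x ∈ patt p a b := by
  intro i hi; simp only [resz, if_neg hi]

lemma resz_of_mem_patt {a b : ℤ} {j : ℤ → ZMod (p ^ 2)} (hj : j ∈ patt p a b) :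
    resz a b j = j := by
  funext i
  by_cases h : a ≤ i ∧ i ≤ b
  · exact resz_apply_of_mem h j
  · simp only [resz, if_neg h]; exact (hj i h).symm

lemma cyl_mono {a b a' b' : ℤ} (h1 : a' ≤ a) (h2 : b ≤ b') (E : Set (ℤ → ZMod (p ^ 2))) :
    resz a b ⁻¹' E = resz a' b' ⁻¹' (resz a b ⁻¹' E) := by
  ext x
  simp only [Set.mem_preimage, resz_resz h1 h2]

/-- the pattern set of `j`: configurations agreeing with `j` on `[a,b]`. -/
lemma pattSet_eq {a b : ℤ} {j : ℤ → ZMod (p ^ 2)} (hj : j ∈ patt p a b) :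
    {x | resz a b x = j} = ⋂ i ∈ Finset.Icc a b, {x : ℤ → ZMod (p ^ 2) | x i = j i} := by
  ext x
  simp only [Set.mem_setOf_eq, Set.mem_iInter, Finset.mem_Icc]
  constructor
  · intro h i hi
    rw [← h]; exact (resz_apply_of_mem hi x).symm
  · intro h
    funext i
    by_cases hi : a ≤ i ∧ i ≤ b
    · rw [resz_apply_of_mem hi]; exact h i hi
    · simp only [resz, if_neg hi]; exact (hj i hi).symm

lemma measurableSet_pattSet {a b : ℤ} {j : ℤ → ZMod (p ^ 2)} (hj : j ∈ patt p a b) :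
    MeasurableSet {x | resz a b x = j} := by
  rw [pattSet_eq hj]
  refine MeasurableSet.biInter (Finset.Icc a b).countable_toSet (fun i _ => ?_)
  have : {x : ℤ → ZMod (p ^ 2) | x i = j i} = (fun x : ℤ → ZMod (p ^ 2) => x i) ⁻¹' {j i} := rfl
  rw [this]
  exact measurable_pi_apply i (by trivial)


noncomputable def pattFun (a b : ℤ) (g : { i // i ∈ Finset.Icc a b } → ZMod (p ^ 2)) : ℤ → ZMod (p ^ 2) :=
  fun i => if h : i ∈ Finset.Icc a b then g ⟨i, h⟩ else 0

lemma patt_eq_range (a b : ℤ) :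
    patt p a b = Set.range (pattFun (p := p) a b) := by
  ext j
  constructor
  · intro hj
    refine ⟨fun i => j i.1, ?_⟩
    funext i
    by_cases h : i ∈ Finset.Icc a b
    · simp only [pattFun, dif_pos h]
    · simp only [pattFun, dif_neg h]
      exact (hj i (by simpa [Finset.mem_Icc] using h)).symm
  · rintro ⟨g, rfl⟩ i hi
    have : i ∉ Finset.Icc a b := by simpa [Finset.mem_Icc] using hi
    simp only [pattFun, dif_neg this]

lemma pattFun_injective (a b : ℤ) : Function.Injective (pattFun (p := p) a b) := by
  intro g g' h
  funext i
  have := congrFun h i.1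
  simpa only [pattFun, dif_pos i.2] using this

lemma patt_finite (hp : p ≠ 0) (a b : ℤ) : (patt p a b).Finite := by
  haveI : NeZero (p ^ 2) := ⟨by positivity⟩
  rw [patt_eq_range]
  exact Set.finite_range _

lemma patt_ncard (hp : p ≠ 0) (a b : ℤ) :
    (patt p a b).ncard = (p ^ 2) ^ (b + 1 - a).toNat := by
  haveI : NeZero (p ^ 2) := ⟨by positivity⟩
  rw [patt_eq_range, ← Nat.card_coe_set_eq,
    Nat.card_range_of_injective (pattFun_injective a b)]
  rw [Nat.card_eq_fintype_card, Fintype.card_fun]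
  congr 1
  · exact ZMod.card _
  · rw [Fintype.card_coe, Int.card_Icc]


section Measure

variable (μ : Measure (ℤ → ZMod (p ^ 2)))
variable (hμ : ∀ (a : ℤ) (s : ℕ) (j : ℕ → ZMod (p ^ 2)),
    μ {x | ∀ t : ℕ, t ≤ s → x (a + (t : ℤ)) = j t} = (((p ^ 2 : ℕ) : ℝ≥0∞))⁻¹ ^ (s + 1))

include hμ

lemma measure_pattSet {a b : ℤ} (hab : a ≤ b) {j : ℤ → ZMod (p ^ 2)} (hj : j ∈ patt p a b) :
    μ {x | resz a b x = j} = (((p ^ 2 : ℕ) : ℝ≥0∞))⁻¹ ^ (b + 1 - a).toNat := by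
  have hset : {x | resz a b x = j}
      = {x : ℤ → ZMod (p ^ 2) | ∀ t : ℕ, t ≤ (b - a).toNat → x (a + (t : ℤ)) = j (a + (t : ℤ))} := by
    rw [pattSet_eq hj]
    ext x
    simp only [Set.mem_iInter, Finset.mem_Icc, Set.mem_setOf_eq]
    constructor
    · intro h t ht
      exact h (a + t) ⟨by omega, by omega⟩
    · intro h i hi
      have hkey := h (i - a).toNat (by omega)
      rwa [Int.toNat_of_nonneg (by omega), add_sub_cancel] at hkey
  rw [hset, hμ a (b - a).toNat (fun t => j (a + (t : ℤ)))]
  congr 1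
  omega

lemma measure_cyl (hp : p ≠ 0) {a b : ℤ} (hab : a ≤ b) (E : Set (ℤ → ZMod (p ^ 2))) :
    μ (resz a b ⁻¹' E)
      = ((patt p a b ∩ E).ncard : ℝ≥0∞) * (((p ^ 2 : ℕ) : ℝ≥0∞))⁻¹ ^ (b + 1 - a).toNat := by
  have hfin : (patt p a b ∩ E).Finite := (patt_finite hp a b).inter_of_left E
  have hdecomp : resz a b ⁻¹' E = ⋃ j ∈ hfin.toFinset, {x | resz a b x = j} := by
    ext x
    simp only [Set.mem_preimage, Set.mem_iUnion, Set.Finite.mem_toFinset, Set.mem_inter_iff,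
      Set.mem_setOf_eq]
    constructor
    · intro hx
      exact ⟨resz a b x, ⟨resz_mem_patt a b x, hx⟩, rfl⟩
    · rintro ⟨j, ⟨-, hjE⟩, rfl⟩
      exact hjE
  rw [hdecomp, measure_biUnion_finset ?_ ?_]
  · rw [Finset.sum_congr rfl (fun j hj => measure_pattSet μ hμ hab
      (Set.Finite.mem_toFinset hfin |>.mp hj).1)]
    rw [Finset.sum_const, nsmul_eq_mul]
    congr 2
    rw [Set.ncard_eq_toFinset_card _ hfin]
  · intro j hj j' hj' hne
    simp only [Function.onFun]
    refine Set.disjoint_left.mpr ?_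
    rintro x (rfl : resz a b x = j) (h' : resz a b x = j')
    exact hne h'
  · intro j hj
    exact measurableSet_pattSet ((Set.Finite.mem_toFinset hfin).mp hj).1

end Measure

/-- the algebra of interval cylinders. -/
def cylAlg (p : ℕ) : Set (Set (ℤ → ZMod (p ^ 2))) :=
  {S | ∃ a b : ℤ, ∃ E : Set (ℤ → ZMod (p ^ 2)), a ≤ b ∧ S = resz a b ⁻¹' E}

lemma mem_cylAlg_mono {a b a' b' : ℤ} (h1 : a' ≤ a) (h2 : b ≤ b') (hab : a' ≤ b')
    (E : Set (ℤ → ZMod (p ^ 2))) : resz a b ⁻¹' E ∈ cylAlg p :=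
  ⟨a', b', resz a b ⁻¹' E, hab, cyl_mono h1 h2 E⟩

lemma measurableSet_cyl (hp : p ≠ 0) (a b : ℤ) (E : Set (ℤ → ZMod (p ^ 2))) :
    MeasurableSet (resz a b ⁻¹' E) := by
  have hfin : (patt p a b ∩ E).Finite := (patt_finite hp a b).inter_of_left E
  have hdecomp : resz a b ⁻¹' E = ⋃ j ∈ hfin.toFinset, {x | resz a b x = j} := by
    ext x
    simp only [Set.mem_preimage, Set.mem_iUnion, Set.Finite.mem_toFinset, Set.mem_inter_iff,
      Set.mem_setOf_eq]
    constructor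
    · intro hx
      exact ⟨resz a b x, ⟨resz_mem_patt a b x, hx⟩, rfl⟩
    · rintro ⟨j, ⟨-, hjE⟩, rfl⟩
      exact hjE
  rw [hdecomp]
  exact (hfin.toFinset : Finset _).measurableSet_biUnion
    (fun j hj => measurableSet_pattSet ((Set.Finite.mem_toFinset hfin).mp hj).1)

lemma isSetAlgebra_cylAlg : IsSetAlgebra (cylAlg p) where
  empty_mem := ⟨0, 0, ∅, le_refl 0, by simp⟩
  compl_mem := by
    rintro S ⟨a, b, E, hab, rfl⟩
    exact ⟨a, b, Eᶜ, hab, by rw [Set.preimage_compl]⟩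
  union_mem := by
    rintro S S' ⟨a, b, E, hab, rfl⟩ ⟨c, d, E', hcd, rfl⟩
    refine ⟨min a c, max b d, resz a b ⁻¹' E ∪ resz c d ⁻¹' E', le_trans (min_le_left a c) (le_trans hab (le_max_left b d)), ?_⟩
    rw [Set.preimage_union, ← cyl_mono (min_le_left a c) (le_max_left b d),
      ← cyl_mono (min_le_right a c) (le_max_right b d)]

lemma isPiSystem_cylAlg : IsPiSystem (cylAlg p) :=
  fun _ hs _ ht _ => isSetAlgebra_cylAlg.inter_mem hs ht

lemma generateFrom_cylAlg (hp : p ≠ 0) :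
    (MeasurableSpace.pi : MeasurableSpace (ℤ → ZMod (p ^ 2)))
      = MeasurableSpace.generateFrom (cylAlg p) := by
  apply le_antisymm
  · refine iSup_le fun i => ?_
    rw [MeasurableSpace.comap_le_iff_le_map]
    intro U _
    apply MeasurableSpace.measurableSet_generateFrom
    refine ⟨i, i, {j | j i ∈ U}, le_refl i, ?_⟩
    ext x
    simp only [Set.mem_preimage, Set.mem_setOf_eq, resz_apply_of_mem ⟨le_refl i, le_refl i⟩]
  · rw [MeasurableSpace.generateFrom_le_iff]
    rintro S ⟨a, b, E, hab, rfl⟩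
    exact measurableSet_cyl hp a b E


lemma bijOn_image_inter {α β : Type*} {f : α → β} {s : Set α} {t : Set β}
    (h : Set.BijOn f s t) (P : Set β) : f '' (s ∩ f ⁻¹' P) = t ∩ P := by
  apply Set.Subset.antisymm
  · rintro y ⟨x, ⟨hxs, hxP⟩, rfl⟩
    exact ⟨h.mapsTo hxs, hxP⟩
  · rintro y ⟨hyt, hyP⟩
    obtain ⟨x, hxs, rfl⟩ := h.surjOn hyt
    exact ⟨x, ⟨hxs, hyP⟩, rfl⟩

lemma ncard_prod {α β : Type*} (s : Set α) (t : Set β) :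
    (s ×ˢ t).ncard = s.ncard * t.ncard := by
  rw [← Nat.card_coe_set_eq, ← Nat.card_coe_set_eq, ← Nat.card_coe_set_eq,
    Nat.card_congr (Equiv.Set.prod s t), Nat.card_prod]

lemma patt_split {a m b : ℤ} (h1 : a ≤ m) (h2 : m < b) :
    Set.BijOn (fun z => (resz a m z, resz (m + 1) b z)) (patt p a b)
      ((patt p a m) ×ˢ (patt p (m + 1) b)) := by
  refine ⟨fun z _ => ⟨resz_mem_patt a m z, resz_mem_patt (m + 1) b z⟩, ?_, ?_⟩
  · intro z hz z' hz' h
    have h1' := congrArg Prod.fst h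
    have h2' := congrArg Prod.snd h
    simp only at h1' h2'
    funext i
    by_cases hi : a ≤ i ∧ i ≤ b
    · by_cases him : i ≤ m
      · have := congrFun h1' i
        rwa [resz_apply_of_mem ⟨hi.1, him⟩, resz_apply_of_mem ⟨hi.1, him⟩] at this
      · have := congrFun h2' i
        rwa [resz_apply_of_mem ⟨by omega, hi.2⟩, resz_apply_of_mem ⟨by omega, hi.2⟩] at this
    · rw [hz i hi, hz' i hi]
  · rintro ⟨w₁, w₂⟩ ⟨hw₁, hw₂⟩
    simp only at hw₁ hw₂
    refine ⟨fun i => w₁ i + w₂ i, ?_, ?_⟩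
    · intro i hi
      show w₁ i + w₂ i = 0
      rw [hw₁ i (by omega), hw₂ i (by omega), add_zero]
    · have e1 : resz a m (fun i => w₁ i + w₂ i) = w₁ := by
        funext i
        by_cases hi : a ≤ i ∧ i ≤ m
        · rw [resz_apply_of_mem hi, hw₂ i (by omega), add_zero]
        · simp only [resz, if_neg hi]; exact (hw₁ i hi).symm
      have e2 : resz (m + 1) b (fun i => w₁ i + w₂ i) = w₂ := by
        funext i
        by_cases hi : m + 1 ≤ i ∧ i ≤ b
        · rw [resz_apply_of_mem hi, hw₁ i (by omega), zero_add]
        · simp only [resz, if_neg hi]; exact (hw₂ i hi).symm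
      simp only [e1, e2]

section Indep

variable (μ : Measure (ℤ → ZMod (p ^ 2)))
variable (hμ : ∀ (a : ℤ) (s : ℕ) (j : ℕ → ZMod (p ^ 2)),
    μ {x | ∀ t : ℕ, t ≤ s → x (a + (t : ℤ)) = j t} = (((p ^ 2 : ℕ) : ℝ≥0∞))⁻¹ ^ (s + 1))

include hμ

lemma measure_cyl_inter_cyl (hp : p ≠ 0) {a₁ b₁ a₂ b₂ : ℤ}
    (h1 : a₁ ≤ b₁) (h12 : b₁ < a₂) (h2 : a₂ ≤ b₂) (E₁ E₂ : Set (ℤ → ZMod (p ^ 2))) :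
    μ (resz a₁ b₁ ⁻¹' E₁ ∩ resz a₂ b₂ ⁻¹' E₂)
      = μ (resz a₁ b₁ ⁻¹' E₁) * μ (resz a₂ b₂ ⁻¹' E₂) := by
  have hb12 : b₁ ≤ b₂ := by omega
  have ha12 : a₁ ≤ a₂ := by omega
  have hinter : resz a₁ b₁ ⁻¹' E₁ ∩ resz a₂ b₂ ⁻¹' E₂
      = resz a₁ b₂ ⁻¹' (resz a₁ b₁ ⁻¹' E₁ ∩ resz a₂ b₂ ⁻¹' E₂) := by
    rw [Set.preimage_inter, ← cyl_mono (le_refl a₁) hb12, ← cyl_mono ha12 (le_refl b₂)]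
  have hcyl2 : resz a₂ b₂ ⁻¹' E₂ = resz (b₁ + 1) b₂ ⁻¹' (resz a₂ b₂ ⁻¹' E₂) :=
    cyl_mono (by omega) (le_refl b₂) E₂
  have hfeq : resz a₁ b₁ ⁻¹' E₁ ∩ resz a₂ b₂ ⁻¹' E₂
      = (fun z => (resz a₁ b₁ z, resz (b₁ + 1) b₂ z)) ⁻¹' (E₁ ×ˢ (resz a₂ b₂ ⁻¹' E₂)) := by
    ext z
    simp only [Set.mem_inter_iff, Set.mem_preimage, Set.mem_prod,
      resz_resz (by omega : b₁ + (1:ℤ) ≤ a₂) (le_refl b₂)]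
  have hbij := patt_split (p := p) h1 (show b₁ < b₂ by omega)
  have himg := bijOn_image_inter hbij (E₁ ×ˢ (resz a₂ b₂ ⁻¹' E₂))
  rw [Set.prod_inter_prod] at himg
  have hcard : (patt p a₁ b₂ ∩ (resz a₁ b₁ ⁻¹' E₁ ∩ resz a₂ b₂ ⁻¹' E₂)).ncard
      = (patt p a₁ b₁ ∩ E₁).ncard * (patt p (b₁ + 1) b₂ ∩ resz a₂ b₂ ⁻¹' E₂).ncard := by
    rw [← ncard_prod, ← himg, hfeq]
    exact (Set.ncard_image_of_injOn (hbij.injOn.mono Set.inter_subset_left)).symm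
  rw [hinter]
  conv_rhs => rw [hcyl2]
  rw [measure_cyl μ hμ hp (le_trans h1 hb12) _,
    measure_cyl μ hμ hp h1 E₁, measure_cyl μ hμ hp (by omega : b₁ + 1 ≤ b₂) _, hcard]
  push_cast
  rw [show (b₂ + 1 - a₁).toNat = (b₁ + 1 - a₁).toNat + (b₂ + 1 - (b₁ + 1)).toNat by omega,
    pow_add]
  ring

end Indep


section Engine

variable {u v : ℤ} {cf : ℤ → ZMod (p ^ 2)} {e : ZMod (p ^ 2)}
variable {U : (ℤ → ZMod (p ^ 2)) → ℤ → ZMod (p ^ 2)}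

lemma U_local (huv : u < v)
    (hU : ∀ x n, U x n = ∑ i ∈ Finset.Icc u (v - 1), cf i * x (n + i) + e * x (n + v))
    {a b : ℤ} (x : ℤ → ZMod (p ^ 2)) :
    resz a b (U x) = resz a b (U (resz (a + u) (b + v) x)) := by
  funext i
  by_cases hi : a ≤ i ∧ i ≤ b
  · rw [resz_apply_of_mem hi, resz_apply_of_mem hi, hU, hU]
    congr 1
    · refine Finset.sum_congr rfl fun k hk => ?_
      rw [Finset.mem_Icc] at hk
      rw [resz_apply_of_mem ⟨by omega, by omega⟩]
    · rw [resz_apply_of_mem ⟨by omega, by omega⟩]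
  · simp only [resz, if_neg hi]

lemma U_preimage_cyl (huv : u < v)
    (hU : ∀ x n, U x n = ∑ i ∈ Finset.Icc u (v - 1), cf i * x (n + i) + e * x (n + v))
    {a b : ℤ} (E : Set (ℤ → ZMod (p ^ 2))) :
    U ⁻¹' (resz a b ⁻¹' E) = resz (a + u) (b + v) ⁻¹' {y | resz a b (U y) ∈ E} := by
  ext x
  simp only [Set.mem_preimage, Set.mem_setOf_eq]
  rw [← U_local huv hU]

lemma U_measurable (hp : p ≠ 0)
    (hU : ∀ x n, U x n = ∑ i ∈ Finset.Icc u (v - 1), cf i * x (n + i) + e * x (n + v)) :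
    Measurable U := by
  haveI : NeZero (p ^ 2) := ⟨by positivity⟩
  haveI : DiscreteMeasurableSpace (ZMod (p ^ 2)) := ⟨fun _ => trivial⟩
  haveI : DiscreteMeasurableSpace (ZMod (p ^ 2) × ZMod (p ^ 2)) :=
    MeasurableSingletonClass.toDiscreteMeasurableSpace
  rw [measurable_pi_iff]
  intro n
  have : (fun x => U x n)
      = fun x : ℤ → ZMod (p ^ 2) =>
        ∑ i ∈ Finset.Icc u (v - 1), cf i * x (n + i) + e * x (n + v) := by
    funext x; exact hU x n
  rw [this]
  refine Measurable.add ?_ ?_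
  · refine Finset.measurable_sum _ fun i _ => ?_
    exact Measurable.of_discrete.comp (measurable_pi_apply (n + i))
  · exact Measurable.of_discrete.comp (measurable_pi_apply (n + v))

/-- recursive solver for the preimage of a pattern under the CA. -/
noncomputable def solveVal (u v : ℤ) (huv : u < v) (cf : ℤ → ZMod (p ^ 2)) (e : ZMod (p ^ 2))
    (y w : ℤ → ZMod (p ^ 2)) (a : ℤ) : ℕ → ZMod (p ^ 2)
  | n =>
    if h : (n : ℤ) < v - u then w (a + u + n)
    else
      Ring.inverse e * (y (a + u + n - v) - ∑ k ∈ (Finset.Icc u (v - 1)).attach,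
        cf k.1 * solveVal u v huv cf e y w a (n - (v - k.1).toNat))
  termination_by n => n
  decreasing_by
    have hk := k.2
    rw [Finset.mem_Icc] at hk
    omega

lemma solveVal_init {huv : u < v} {y w : ℤ → ZMod (p ^ 2)} {a : ℤ} {n : ℕ}
    (h : (n : ℤ) < v - u) : solveVal u v huv cf e y w a n = w (a + u + n) := by
  rw [solveVal, dif_pos h]

lemma solveVal_rec (he : IsUnit e) {huv : u < v} {y w : ℤ → ZMod (p ^ 2)} {a : ℤ} {n : ℕ}
    (h : ¬ ((n : ℤ) < v - u)) :
    e * solveVal u v huv cf e y w a n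
      + ∑ k ∈ Finset.Icc u (v - 1), cf k * solveVal u v huv cf e y w a (n - (v - k).toNat)
      = y (a + u + n - v) := by
  conv_lhs => rw [solveVal, dif_neg h]
  rw [← mul_assoc, Ring.mul_inverse_cancel e he, one_mul, ← Finset.sum_attach (Finset.Icc u (v-1))
    (fun k => cf k * solveVal u v huv cf e y w a (n - (v - k).toNat))]
  ring

lemma solve_bijOn (huv : u < v) (he : IsUnit e)
    (hU : ∀ x n, U x n = ∑ i ∈ Finset.Icc u (v - 1), cf i * x (n + i) + e * x (n + v))
    {a b : ℤ} (hab : a ≤ b) :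
    Set.BijOn (fun z => (resz a b (U z), resz (a + u) (a + v - 1) z))
      (patt p (a + u) (b + v)) ((patt p a b) ×ˢ (patt p (a + u) (a + v - 1))) := by
  refine ⟨fun z _ => ⟨resz_mem_patt _ _ _, resz_mem_patt _ _ _⟩, ?_, ?_⟩
  · intro z hz z' hz' heq
    have h1 := congrArg Prod.fst heq
    have h2 := congrArg Prod.snd heq
    simp only at h1 h2
    have key : ∀ n : ℕ, ∀ i : ℤ, i < a + u + n → z i = z' i := by
      intro n
      induction n with
      | zero =>
        intro i hi
        rw [hz i (by omega), hz' i (by omega)]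
      | succ n ih =>
        intro i hi
        by_cases hlt : i < a + u + n
        · exact ih i hlt
        have hieq : i = a + u + n := by omega
        by_cases hc1 : i ≤ a + v - 1
        · have := congrFun h2 i
          rwa [resz_apply_of_mem ⟨by omega, hc1⟩, resz_apply_of_mem ⟨by omega, hc1⟩] at this
        by_cases hc2 : i ≤ b + v
        · have hm : a ≤ i - v ∧ i - v ≤ b := ⟨by omega, by omega⟩
          have hUeq := congrFun h1 (i - v)
          rw [resz_apply_of_mem hm, resz_apply_of_mem hm, hU, hU] at hUeq
          have hsum : ∑ k ∈ Finset.Icc u (v - 1), cf k * z (i - v + k)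
              = ∑ k ∈ Finset.Icc u (v - 1), cf k * z' (i - v + k) := by
            refine Finset.sum_congr rfl fun k hk => ?_
            rw [Finset.mem_Icc] at hk
            rw [ih (i - v + k) (by omega)]
          rw [hsum] at hUeq
          have hcancel := add_left_cancel hUeq
          have := he.mul_left_cancel hcancel
          simpa [sub_add_cancel] using this
        · rw [hz i (by omega), hz' i (by omega)]
    funext i
    exact key ((i - (a + u)).toNat + 1) i (by omega)
  · rintro ⟨y, w⟩ ⟨hy, hw⟩
    simp only at hy hw
    refine ⟨fun i => if a + u ≤ i ∧ i ≤ b + v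
      then solveVal u v huv cf e y w a ((i - (a + u)).toNat) else 0, ?_, ?_⟩
    · intro i hi
      simp only [if_neg hi]
    · have comp2 : resz (a + u) (a + v - 1)
          (fun i => if a + u ≤ i ∧ i ≤ b + v
            then solveVal u v huv cf e y w a ((i - (a + u)).toNat) else 0) = w := by
        funext i
        by_cases hi : a + u ≤ i ∧ i ≤ a + v - 1
        · rw [resz_apply_of_mem hi]
          rw [if_pos ⟨hi.1, by omega⟩, solveVal_init (by omega)]
          congr 1
          omega
        · simp only [resz, if_neg hi]
          exact (hw i hi).symm
      have comp1 : resz a b (U (fun i => if a + u ≤ i ∧ i ≤ b + v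
            then solveVal u v huv cf e y w a ((i - (a + u)).toNat) else 0)) = y := by
        funext m
        by_cases hm : a ≤ m ∧ m ≤ b
        · rw [resz_apply_of_mem hm, hU]
          have hzv : (if a + u ≤ m + v ∧ m + v ≤ b + v
              then solveVal u v huv cf e y w a ((m + v - (a + u)).toNat) else 0)
              = solveVal u v huv cf e y w a ((m + v - (a + u)).toNat) :=
            if_pos ⟨by omega, by omega⟩
          have hrec := solveVal_rec (cf := cf) he (huv := huv) (y := y) (w := w) (a := a)
            (n := (m + v - (a + u)).toNat) (by omega)
          have hterm : ∀ k ∈ Finset.Icc u (v - 1),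
              cf k * (if a + u ≤ m + k ∧ m + k ≤ b + v
                then solveVal u v huv cf e y w a ((m + k - (a + u)).toNat) else 0)
              = cf k * solveVal u v huv cf e y w a
                  ((m + v - (a + u)).toNat - (v - k).toNat) := by
            intro k hk
            rw [Finset.mem_Icc] at hk
            rw [if_pos ⟨by omega, by omega⟩]
            congr 2
            omega
          rw [Finset.sum_congr rfl hterm, hzv]
          have hidx : a + u + ((m + v - (a + u)).toNat : ℤ) - v = m := by omega
          rw [hidx] at hrec
          rw [add_comm]
          exact hrec
        · simp only [resz, if_neg hm]
          exact (hy m hm).symm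
      show (_, _) = (y, w)
      rw [comp1, comp2]

section MeasureEngine

variable (μ : Measure (ℤ → ZMod (p ^ 2)))
variable (hμ : ∀ (a : ℤ) (s : ℕ) (j : ℕ → ZMod (p ^ 2)),
    μ {x | ∀ t : ℕ, t ≤ s → x (a + (t : ℤ)) = j t} = (((p ^ 2 : ℕ) : ℝ≥0∞))⁻¹ ^ (s + 1))

include hμ

lemma measure_preimage_cyl (hp : p ≠ 0) (huv : u < v) (he : IsUnit e)
    (hU : ∀ x n, U x n = ∑ i ∈ Finset.Icc u (v - 1), cf i * x (n + i) + e * x (n + v))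
    {a b : ℤ} (hab : a ≤ b) (E : Set (ℤ → ZMod (p ^ 2))) :
    μ (U ⁻¹' (resz a b ⁻¹' E)) = μ (resz a b ⁻¹' E) := by
  rw [U_preimage_cyl huv hU, measure_cyl μ hμ hp (by omega : a + u ≤ b + v),
    measure_cyl μ hμ hp hab]
  have hbij := solve_bijOn (U := U) huv he hU hab
  have hfeq : {y | resz a b (U y) ∈ E}
      = (fun z => (resz a b (U z), resz (a + u) (a + v - 1) z)) ⁻¹'
          (E ×ˢ (Set.univ : Set (ℤ → ZMod (p ^ 2)))) := by
    ext z
    simp [Set.mem_prod]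
  have himg := bijOn_image_inter hbij (E ×ˢ (Set.univ : Set (ℤ → ZMod (p ^ 2))))
  rw [Set.prod_inter_prod, Set.inter_univ] at himg
  have hcard : (patt p (a + u) (b + v) ∩ {y | resz a b (U y) ∈ E}).ncard
      = (patt p a b ∩ E).ncard * (patt p (a + u) (a + v - 1)).ncard := by
    rw [← ncard_prod, ← himg, hfeq]
    exact (Set.ncard_image_of_injOn (hbij.injOn.mono Set.inter_subset_left)).symm
  rw [hcard, patt_ncard hp, show (a + v - 1 + 1 - (a + u)).toNat = (v - u).toNat by omega,
    show (b + v + 1 - (a + u)).toNat = (b + 1 - a).toNat + (v - u).toNat by omega, pow_add,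
    Nat.cast_mul, Nat.cast_pow]
  have h1 : (((p ^ 2 : ℕ) : ℝ≥0∞)) ^ ((v - u).toNat)
      * ((((p ^ 2 : ℕ) : ℝ≥0∞))⁻¹) ^ ((v - u).toNat) = 1 := by
    rw [← mul_pow, ENNReal.mul_inv_cancel (Nat.cast_ne_zero.mpr (by positivity))
      (ENNReal.natCast_ne_top _), one_pow]
  calc ((patt p a b ∩ E).ncard : ℝ≥0∞) * (((p ^ 2 : ℕ) : ℝ≥0∞)) ^ ((v - u).toNat)
        * ((((p ^ 2 : ℕ) : ℝ≥0∞))⁻¹ ^ (b + 1 - a).toNat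
          * (((p ^ 2 : ℕ) : ℝ≥0∞))⁻¹ ^ ((v - u).toNat))
      = ((patt p a b ∩ E).ncard : ℝ≥0∞) * (((p ^ 2 : ℕ) : ℝ≥0∞))⁻¹ ^ (b + 1 - a).toNat
        * ((((p ^ 2 : ℕ) : ℝ≥0∞)) ^ ((v - u).toNat)
          * ((((p ^ 2 : ℕ) : ℝ≥0∞))⁻¹) ^ ((v - u).toNat)) := by ring
    _ = ((patt p a b ∩ E).ncard : ℝ≥0∞) * (((p ^ 2 : ℕ) : ℝ≥0∞))⁻¹ ^ (b + 1 - a).toNat := by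
        rw [h1, mul_one]

lemma U_measure_preserving [IsProbabilityMeasure μ] (hp : p ≠ 0) (huv : u < v) (he : IsUnit e)
    (hU : ∀ x n, U x n = ∑ i ∈ Finset.Icc u (v - 1), cf i * x (n + i) + e * x (n + v))
    {A : Set (ℤ → ZMod (p ^ 2))} (hA : MeasurableSet A) : μ (U ⁻¹' A) = μ A := by
  have hmeas : Measurable U := U_measurable hp hU
  haveI := Measure.isProbabilityMeasure_map (μ := μ) hmeas.aemeasurable
  have hmap : μ.map U = μ := by
    refine ext_of_generate_finite (cylAlg p) (generateFrom_cylAlg hp) isPiSystem_cylAlg ?_ ?_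
    · rintro s ⟨a, b, E, hab, rfl⟩
      rw [Measure.map_apply hmeas (measurableSet_cyl hp a b E)]
      exact measure_preimage_cyl μ hμ hp huv he hU hab E
    · simp [measure_univ]
  rw [← Measure.map_apply hmeas hA, hmap]

lemma U_iter_measure_preserving [IsProbabilityMeasure μ] (hp : p ≠ 0) (huv : u < v)
    (he : IsUnit e)
    (hU : ∀ x n, U x n = ∑ i ∈ Finset.Icc u (v - 1), cf i * x (n + i) + e * x (n + v))
    (n : ℕ) {A : Set (ℤ → ZMod (p ^ 2))} (hA : MeasurableSet A) :
    μ (U^[n] ⁻¹' A) = μ A := by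
  induction n with
  | zero => simp
  | succ n ih =>
    rw [Function.iterate_succ, Set.preimage_comp,
      U_measure_preserving μ hμ hp huv he hU (((U_measurable hp hU).iterate n) hA), ih]

omit hμ in
lemma iterate_preimage_cyl (huv : u < v)
    (hU : ∀ x n, U x n = ∑ i ∈ Finset.Icc u (v - 1), cf i * x (n + i) + e * x (n + v))
    (n : ℕ) (a b : ℤ) (E : Set (ℤ → ZMod (p ^ 2))) :
    ∃ E' : Set (ℤ → ZMod (p ^ 2)),
      U^[n] ⁻¹' (resz a b ⁻¹' E) = resz (a + (n : ℤ) * u) (b + (n : ℤ) * v) ⁻¹' E' := by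
  induction n with
  | zero => exact ⟨E, by simp⟩
  | succ n ih =>
    obtain ⟨E', hE'⟩ := ih
    refine ⟨{y | resz (a + (n : ℤ) * u) (b + (n : ℤ) * v) (U y) ∈ E'}, ?_⟩
    rw [Function.iterate_succ, Set.preimage_comp, hE', U_preimage_cyl huv hU,
      show a + (n : ℤ) * u + u = a + ((n + 1 : ℕ) : ℤ) * u by push_cast; ring,
      show b + (n : ℤ) * v + v = b + ((n + 1 : ℕ) : ℤ) * v by push_cast; ring]

lemma mix_cyl [IsProbabilityMeasure μ] (hp : p ≠ 0) (huv : u < v) (he : IsUnit e)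
    (hU : ∀ x n, U x n = ∑ i ∈ Finset.Icc u (v - 1), cf i * x (n + i) + e * x (n + v))
    (hside : 0 < u ∨ v < 0) {a b c' d : ℤ} (hab : a ≤ b) (hcd : c' ≤ d)
    (E E' : Set (ℤ → ZMod (p ^ 2))) :
    ∀ᶠ n in atTop, μ (U^[n] ⁻¹' (resz a b ⁻¹' E) ∩ resz c' d ⁻¹' E')
      = μ (resz a b ⁻¹' E) * μ (resz c' d ⁻¹' E') := by
  have hwin : ∀ n : ℕ, a + (n : ℤ) * u ≤ b + (n : ℤ) * v := by
    intro n
    have : (n : ℤ) * u ≤ (n : ℤ) * v :=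
      mul_le_mul_of_nonneg_left (by omega) (by positivity)
    omega
  rcases hside with hu | hv
  · refine Filter.eventually_atTop.mpr ⟨(d - a + 1).toNat, fun n hn => ?_⟩
    obtain ⟨E₂, hE₂⟩ := iterate_preimage_cyl huv hU n a b E
    have hnu : (n : ℤ) ≤ (n : ℤ) * u := le_mul_of_one_le_right (by positivity) (by omega)
    have hwindow : d < a + (n : ℤ) * u := by omega
    rw [hE₂, Set.inter_comm, measure_cyl_inter_cyl μ hμ hp hcd hwindow (hwin n) E' E₂, ← hE₂,
      mul_comm]
    congr 1
    exact U_iter_measure_preserving μ hμ hp huv he hU n (measurableSet_cyl hp a b E)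
  · refine Filter.eventually_atTop.mpr ⟨(b - c' + 1).toNat, fun n hn => ?_⟩
    obtain ⟨E₂, hE₂⟩ := iterate_preimage_cyl huv hU n a b E
    have hnv : (n : ℤ) * v ≤ -(n : ℤ) := by
      have : (n : ℤ) * v ≤ (n : ℤ) * (-1) :=
        mul_le_mul_of_nonneg_left (by omega) (by positivity)
      omega
    have hwindow : b + (n : ℤ) * v < c' := by omega
    rw [hE₂, measure_cyl_inter_cyl μ hμ hp (hwin n) hwindow hcd E₂ E', ← hE₂]
    congr 1
    exact U_iter_measure_preserving μ hμ hp huv he hU n (measurableSet_cyl hp a b E)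

set_option maxHeartbeats 1000000 in
lemma mix_full [IsProbabilityMeasure μ] (hp : p ≠ 0) (huv : u < v) (he : IsUnit e)
    (hU : ∀ x n, U x n = ∑ i ∈ Finset.Icc u (v - 1), cf i * x (n + i) + e * x (n + v))
    (hside : 0 < u ∨ v < 0) {A B : Set (ℤ → ZMod (p ^ 2))}
    (hA : MeasurableSet A) (hB : MeasurableSet B) :
    Tendsto (fun n : ℕ => μ (U^[n] ⁻¹' A ∩ B)) atTop (𝓝 (μ A * μ B)) := by
  have hdense : μ.MeasureDense (cylAlg p) :=
    Measure.MeasureDense.of_generateFrom_isSetAlgebra_finite μ isSetAlgebra_cylAlg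
      (generateFrom_cylAlg hp)
  rw [ENNReal.tendsto_nhds (ENNReal.mul_ne_top (measure_ne_top μ A) (measure_ne_top μ B))]
  intro ε hε
  set δ : ℝ≥0∞ := min ε 1 / 5 with hδdef
  have hδ0 : δ ≠ 0 :=
    (ENNReal.div_pos (lt_min hε one_pos).ne' (by norm_num)).ne'
  have hδ1 : δ ≤ 1 := by
    calc δ ≤ 1 / 5 := ENNReal.div_le_div (min_le_right ε 1) (le_refl 5)
      _ ≤ 1 / 1 := ENNReal.div_le_div (le_refl 1) (by norm_num)
      _ = 1 := by rw [div_one]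
  have hδtop : δ ≠ ⊤ := ne_top_of_le_ne_top ENNReal.one_ne_top hδ1
  have h5 : δ + δ + (δ + δ + δ) ≤ ε := by
    have : δ + δ + (δ + δ + δ) = 5 * δ := by ring
    rw [this, hδdef, ENNReal.mul_div_cancel' (by norm_num) (by norm_num)]
    exact min_le_left _ _
  have hδreal : 0 < δ.toReal := ENNReal.toReal_pos hδ0 hδtop
  obtain ⟨CA, hCAmem, hCAd⟩ := hdense.approx A hA (measure_ne_top μ A) δ.toReal hδreal
  obtain ⟨CB, hCBmem, hCBd⟩ := hdense.approx B hB (measure_ne_top μ B) δ.toReal hδreal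
  rw [ENNReal.ofReal_toReal hδtop] at hCAd hCBd
  have hdA : μ (A ∆ CA) ≤ δ := hCAd.le
  have hdB : μ (B ∆ CB) ≤ δ := hCBd.le
  obtain ⟨a, b, E, hab, rfl⟩ := hCAmem
  obtain ⟨c', d, E', hcd, rfl⟩ := hCBmem
  set CA := resz (p := p) a b ⁻¹' E with hCAdef
  set CB := resz (p := p) c' d ⁻¹' E' with hCBdef
  have hmCA : MeasurableSet CA := measurableSet_cyl hp a b E
  have hmCB : MeasurableSet CB := measurableSet_cyl hp c' d E'
  filter_upwards [mix_cyl μ hμ hp huv he hU hside hab hcd E E'] with n hn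
  have hUn : Measurable (U^[n]) := (U_measurable hp hU).iterate n
  have hpresd : μ (U^[n] ⁻¹' (A ∆ CA)) = μ (A ∆ CA) :=
    U_iter_measure_preserving μ hμ hp huv he hU n (hA.symmDiff hmCA)
  have key1 : μ (U^[n] ⁻¹' A ∩ B) ≤ μ (U^[n] ⁻¹' CA ∩ CB) + (δ + δ) := by
    have hsub : U^[n] ⁻¹' A ∩ B
        ⊆ (U^[n] ⁻¹' CA ∩ CB) ∪ (U^[n] ⁻¹' (A ∆ CA) ∪ (B ∆ CB)) := by
      intro x hx
      rcases hx with ⟨hxA, hxB⟩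
      simp only [Set.mem_union, Set.mem_inter_iff, Set.mem_preimage, Set.mem_symmDiff] at *
      tauto
    calc μ (U^[n] ⁻¹' A ∩ B) ≤ μ ((U^[n] ⁻¹' CA ∩ CB) ∪ (U^[n] ⁻¹' (A ∆ CA) ∪ (B ∆ CB))) :=
          measure_mono hsub
      _ ≤ μ (U^[n] ⁻¹' CA ∩ CB) + μ (U^[n] ⁻¹' (A ∆ CA) ∪ (B ∆ CB)) := measure_union_le _ _
      _ ≤ μ (U^[n] ⁻¹' CA ∩ CB) + (μ (U^[n] ⁻¹' (A ∆ CA)) + μ (B ∆ CB)) :=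
          add_le_add le_rfl (measure_union_le _ _)
      _ ≤ μ (U^[n] ⁻¹' CA ∩ CB) + (δ + δ) := by
          refine add_le_add le_rfl (add_le_add ?_ hdB)
          rw [hpresd]; exact hdA
  have key2 : μ (U^[n] ⁻¹' CA ∩ CB) ≤ μ (U^[n] ⁻¹' A ∩ B) + (δ + δ) := by
    have hsub : U^[n] ⁻¹' CA ∩ CB
        ⊆ (U^[n] ⁻¹' A ∩ B) ∪ (U^[n] ⁻¹' (A ∆ CA) ∪ (B ∆ CB)) := by
      intro x hx
      rcases hx with ⟨hxA, hxB⟩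
      simp only [Set.mem_union, Set.mem_inter_iff, Set.mem_preimage, Set.mem_symmDiff] at *
      tauto
    calc μ (U^[n] ⁻¹' CA ∩ CB) ≤ μ ((U^[n] ⁻¹' A ∩ B) ∪ (U^[n] ⁻¹' (A ∆ CA) ∪ (B ∆ CB))) :=
          measure_mono hsub
      _ ≤ μ (U^[n] ⁻¹' A ∩ B) + μ (U^[n] ⁻¹' (A ∆ CA) ∪ (B ∆ CB)) := measure_union_le _ _
      _ ≤ μ (U^[n] ⁻¹' A ∩ B) + (μ (U^[n] ⁻¹' (A ∆ CA)) + μ (B ∆ CB)) :=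
          add_le_add le_rfl (measure_union_le _ _)
      _ ≤ μ (U^[n] ⁻¹' A ∩ B) + (δ + δ) := by
          refine add_le_add le_rfl (add_le_add ?_ hdB)
          rw [hpresd]; exact hdA
  have hCAle : μ CA ≤ μ A + δ := by
    calc μ CA ≤ μ (A ∪ A ∆ CA) := by
          refine measure_mono fun x hx => ?_
          simp only [Set.mem_union, Set.mem_symmDiff]
          tauto
      _ ≤ μ A + μ (A ∆ CA) := measure_union_le _ _
      _ ≤ μ A + δ := add_le_add le_rfl hdA
  have hAle : μ A ≤ μ CA + δ := by
    calc μ A ≤ μ (CA ∪ A ∆ CA) := by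
          refine measure_mono fun x hx => ?_
          simp only [Set.mem_union, Set.mem_symmDiff]
          tauto
      _ ≤ μ CA + μ (A ∆ CA) := measure_union_le _ _
      _ ≤ μ CA + δ := add_le_add le_rfl hdA
  have hCBle : μ CB ≤ μ B + δ := by
    calc μ CB ≤ μ (B ∪ B ∆ CB) := by
          refine measure_mono fun x hx => ?_
          simp only [Set.mem_union, Set.mem_symmDiff]
          tauto
      _ ≤ μ B + μ (B ∆ CB) := measure_union_le _ _
      _ ≤ μ B + δ := add_le_add le_rfl hdB
  have hBle : μ B ≤ μ CB + δ := by
    calc μ B ≤ μ (CB ∪ B ∆ CB) := by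
          refine measure_mono fun x hx => ?_
          simp only [Set.mem_union, Set.mem_symmDiff]
          tauto
      _ ≤ μ CB + μ (B ∆ CB) := measure_union_le _ _
      _ ≤ μ CB + δ := add_le_add le_rfl hdB
  have hxy : ∀ x y : ℝ≥0∞, x ≤ 1 → y ≤ 1 → (x + δ) * (y + δ) ≤ x * y + (δ + δ + δ) := by
    intro x y hx hy
    calc (x + δ) * (y + δ) = x * y + (x * δ + δ * y + δ * δ) := by ring
      _ ≤ x * y + (1 * δ + δ * 1 + δ * 1) := by gcongr
      _ = x * y + (δ + δ + δ) := by rw [one_mul, mul_one]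
  have upper : μ (U^[n] ⁻¹' A ∩ B) ≤ μ A * μ B + ε := by
    calc μ (U^[n] ⁻¹' A ∩ B) ≤ μ (U^[n] ⁻¹' CA ∩ CB) + (δ + δ) := key1
      _ = μ CA * μ CB + (δ + δ) := by rw [hn]
      _ ≤ (μ A + δ) * (μ B + δ) + (δ + δ) := add_le_add (mul_le_mul' hCAle hCBle) le_rfl
      _ ≤ (μ A * μ B + (δ + δ + δ)) + (δ + δ) :=
          add_le_add (hxy (μ A) (μ B) prob_le_one prob_le_one) le_rfl
      _ = μ A * μ B + (δ + δ + (δ + δ + δ)) := by ring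
      _ ≤ μ A * μ B + ε := add_le_add le_rfl h5
  have lower : μ A * μ B ≤ μ (U^[n] ⁻¹' A ∩ B) + ε := by
    calc μ A * μ B ≤ (μ CA + δ) * (μ CB + δ) := mul_le_mul' hAle hBle
      _ ≤ μ CA * μ CB + (δ + δ + δ) := hxy (μ CA) (μ CB) prob_le_one prob_le_one
      _ = μ (U^[n] ⁻¹' CA ∩ CB) + (δ + δ + δ) := by rw [hn]
      _ ≤ (μ (U^[n] ⁻¹' A ∩ B) + (δ + δ)) + (δ + δ + δ) := add_le_add key2 le_rfl
      _ = μ (U^[n] ⁻¹' A ∩ B) + (δ + δ + (δ + δ + δ)) := by ring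
      _ ≤ μ (U^[n] ⁻¹' A ∩ B) + ε := add_le_add le_rfl h5
  exact ⟨tsub_le_iff_right.mpr lower, upper⟩

end MeasureEngine

end Engine


lemma alg1 {R : Type*} [CommRing R] (P L lam S1 S2 xm : R) (hL : L * lam = 1)
    (hpp : P * P = 0) :
    L * (P * S1 + lam * xm) - P * L * L * (P * S2 + lam * S1) = xm := by
  linear_combination (xm - P * L * S1) * hL - L * L * S2 * hpp

lemma alg2 {R : Type*} [CommRing R] (P L lam S1 S2 yn : R) (hL : lam * L = 1)
    (hpp : P * P = 0) :
    P * (L * S1 - P * L * L * S2) + lam * (L * yn - P * L * L * S1) = yn := by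
  linear_combination (yn - P * L * S1) * hL - L * L * S2 * hpp

/-- the explicit inverse of the CA `T`. -/
noncomputable def Sinv (p : ℕ) (l r : ℤ) (β : ℤ → ZMod (p ^ 2)) (L : ZMod (p ^ 2))
    (y : ℤ → ZMod (p ^ 2)) (m : ℤ) : ZMod (p ^ 2) :=
  L * y (m - r) - (p : ZMod (p ^ 2)) * L * L
    * ∑ i ∈ Finset.Icc l (r - 1), β i * y (m + (i - 2 * r))

lemma hpp_self (p : ℕ) : (p : ZMod (p ^ 2)) * (p : ZMod (p ^ 2)) = 0 := by
  have : ((p * p : ℕ) : ZMod (p ^ 2)) = 0 := by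
    rw [← pow_two]
    exact ZMod.natCast_self _
  push_cast at this
  exact this

section Inverse

variable {l r : ℤ} {β : ℤ → ZMod (p ^ 2)} {lamr L : ZMod (p ^ 2)}
variable {T : (ℤ → ZMod (p ^ 2)) → ℤ → ZMod (p ^ 2)}

lemma Sinv_apply (y : ℤ → ZMod (p ^ 2)) (m : ℤ) :
    Sinv p l r β L y m = L * y (m - r) - (p : ZMod (p ^ 2)) * L * L
      * ∑ i ∈ Finset.Icc l (r - 1), β i * y (m + (i - 2 * r)) := rfl

lemma Sinv_comp
    (hT : ∀ x n, T x n
      = (p : ZMod (p ^ 2)) * ∑ i ∈ Finset.Icc l (r - 1), β i * x (n + i) + lamr * x (n + r))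
    (hL : L * lamr = 1) (x : ℤ → ZMod (p ^ 2)) : Sinv p l r β L (T x) = x := by
  funext m
  rw [Sinv_apply, hT x (m - r), show m - r + r = m by ring]
  have hterm : ∀ i ∈ Finset.Icc l (r - 1), β i * (T x) (m + (i - 2 * r))
      = β i * ((p : ZMod (p ^ 2))
          * (∑ j ∈ Finset.Icc l (r - 1), β j * x (m + (i - 2 * r) + j))
        + lamr * x (m + i - r)) := by
    intro i _
    rw [hT, show m + (i - 2 * r) + r = m + i - r by ring]
  rw [Finset.sum_congr rfl hterm]
  have hsplit : ∑ i ∈ Finset.Icc l (r - 1), (β i * ((p : ZMod (p ^ 2))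
          * (∑ j ∈ Finset.Icc l (r - 1), β j * x (m + (i - 2 * r) + j))
        + lamr * x (m + i - r)))
      = (p : ZMod (p ^ 2)) * (∑ i ∈ Finset.Icc l (r - 1), β i
            * (∑ j ∈ Finset.Icc l (r - 1), β j * x (m + (i - 2 * r) + j)))
        + lamr * ∑ i ∈ Finset.Icc l (r - 1), β i * x (m + i - r) := by
    rw [Finset.mul_sum, Finset.mul_sum, ← Finset.sum_add_distrib]
    exact Finset.sum_congr rfl fun i _ => by ring
  rw [hsplit]
  have hsums : ∑ i ∈ Finset.Icc l (r - 1), β i * x (m - r + i)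
      = ∑ i ∈ Finset.Icc l (r - 1), β i * x (m + i - r) :=
    Finset.sum_congr rfl fun i _ => by rw [show m - r + i = m + i - r by ring]
  rw [hsums]
  exact alg1 _ _ _ _ _ _ hL (hpp_self p)

lemma comp_Sinv
    (hT : ∀ x n, T x n
      = (p : ZMod (p ^ 2)) * ∑ i ∈ Finset.Icc l (r - 1), β i * x (n + i) + lamr * x (n + r))
    (hL : lamr * L = 1) (y : ℤ → ZMod (p ^ 2)) : T (Sinv p l r β L y) = y := by
  funext n
  rw [hT]
  simp only [Sinv_apply]
  rw [show n + r - r = n by ring]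
  have hlast : ∑ j ∈ Finset.Icc l (r - 1), β j * y (n + r + (j - 2 * r))
      = ∑ j ∈ Finset.Icc l (r - 1), β j * y (n + j - r) :=
    Finset.sum_congr rfl fun j _ => by rw [show n + r + (j - 2 * r) = n + j - r by ring]
  rw [hlast]
  have hargs : ∀ i ∈ Finset.Icc l (r - 1),
      β i * (L * y (n + i - r) - (p : ZMod (p ^ 2)) * L * L
        * ∑ j ∈ Finset.Icc l (r - 1), β j * y (n + i + (j - 2 * r)))
      = L * (β i * y (n + i - r)) - (p : ZMod (p ^ 2)) * L * L
          * (β i * ∑ j ∈ Finset.Icc l (r - 1), β j * y (n + i + (j - 2 * r))) := by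
    intro i _
    ring
  rw [Finset.sum_congr rfl hargs, Finset.sum_sub_distrib, ← Finset.mul_sum, ← Finset.mul_sum]
  exact alg2 _ _ _ _ _ _ hL (hpp_self p)

end Inverse

end Stmt13

/-- Let `p` be prime and `T_{f[l,r]}` the invertible linear CA over `ZMod p²` with local
rule `f(x_l,...,x_r) = p·Σ_{i=l}^{r-1} β_i x_i + λ_r x_r (mod p²)`, `λ_r` a unit
(`gcd(p,λ_r) = 1`), `0 < l < r`. Then `T_{f[l,r]}` is bijective, and both `T_{f[l,r]}` and
its inverse are strong mixing with respect to the uniform Bernoulli measure. -/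
theorem stmt13 (p : ℕ) (hp : p.Prime) (l r : ℤ) (hl : 0 < l) (hlr : l < r)
    (β : ℤ → ZMod (p ^ 2)) (lamr : ZMod (p ^ 2)) (hunit : IsUnit lamr)
    (T : (ℤ → ZMod (p ^ 2)) → ℤ → ZMod (p ^ 2))
    (hT : ∀ x n, T x n =
      (p : ZMod (p ^ 2)) * ∑ i ∈ Finset.Icc l (r - 1), β i * x (n + i) + lamr * x (n + r))
    (μ : Measure (ℤ → ZMod (p ^ 2))) [IsProbabilityMeasure μ]
    (hμ : ∀ (a : ℤ) (s : ℕ) (j : ℕ → ZMod (p ^ 2)),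
      μ {x | ∀ t : ℕ, t ≤ s → x (a + (t : ℤ)) = j t} = (((p ^ 2 : ℕ) : ℝ≥0∞))⁻¹ ^ (s + 1)) :
    Function.Bijective T ∧
    (∀ A B : Set (ℤ → ZMod (p ^ 2)), MeasurableSet A → MeasurableSet B →
      Tendsto (fun n : ℕ => μ (T^[n] ⁻¹' A ∩ B)) atTop (𝓝 (μ A * μ B))) ∧
    (∀ S : (ℤ → ZMod (p ^ 2)) → ℤ → ZMod (p ^ 2),
      (∀ x, S (T x) = x) → (∀ x, T (S x) = x) →
      ∀ A B : Set (ℤ → ZMod (p ^ 2)), MeasurableSet A → MeasurableSet B →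
        Tendsto (fun n : ℕ => μ (S^[n] ⁻¹' A ∩ B)) atTop (𝓝 (μ A * μ B))) := by
  have hp0 : p ≠ 0 := hp.ne_zero
  set L : ZMod (p ^ 2) := Ring.inverse lamr with hLdef
  have hL1 : L * lamr = 1 := Ring.inverse_mul_cancel lamr hunit
  have hL2 : lamr * L = 1 := Ring.mul_inverse_cancel lamr hunit
  have hST := Stmt13.Sinv_comp hT hL1
  have hTS := Stmt13.comp_Sinv hT hL2
  refine ⟨⟨fun x y hxy => ?_, fun y => ⟨Stmt13.Sinv p l r β L y, hTS y⟩⟩, ?_, ?_⟩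
  · have := congrArg (Stmt13.Sinv p l r β L) hxy
    rwa [hST, hST] at this
  · intro A B hA hB
    have hUT : ∀ x n, T x n = ∑ i ∈ Finset.Icc l (r - 1),
        ((p : ZMod (p ^ 2)) * β i) * x (n + i) + lamr * x (n + r) := by
      intro x n
      rw [hT x n]
      congr 1
      rw [Finset.mul_sum]
      exact Finset.sum_congr rfl fun i _ => by ring
    exact Stmt13.mix_full μ hμ hp0 hlr hunit hUT (Or.inl hl) hA hB
  · intro S hS1 hS2 A B hA hB
    have hSeq : ∀ y, S y = Stmt13.Sinv p l r β L y := by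
      intro y
      calc S y = S (T (Stmt13.Sinv p l r β L y)) := by rw [hTS y]
        _ = Stmt13.Sinv p l r β L y := hS1 _
    have hUS : ∀ y m, S y m = ∑ j ∈ Finset.Icc (l - 2 * r) (-r - 1),
        (-((p : ZMod (p ^ 2)) * L * L * β (j + 2 * r))) * y (m + j) + L * y (m + -r) := by
      intro y m
      rw [hSeq y, Stmt13.Sinv_apply, show m + -r = m - r by ring]
      have hsum : ∑ j ∈ Finset.Icc (l - 2 * r) (-r - 1),
          (-((p : ZMod (p ^ 2)) * L * L * β (j + 2 * r))) * y (m + j)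
          = -((p : ZMod (p ^ 2)) * L * L
              * ∑ i ∈ Finset.Icc l (r - 1), β i * y (m + (i - 2 * r))) := by
        rw [show Finset.Icc (l - 2 * r) (-r - 1)
              = (Finset.Icc l (r - 1)).map (addRightEmbedding (-(2 * r))) by
            rw [Finset.map_add_right_Icc]; congr 1 <;> ring,
          Finset.sum_map, Finset.mul_sum, ← Finset.sum_neg_distrib]
        refine Finset.sum_congr rfl fun i _ => ?_
        simp only [addRightEmbedding_apply]
        rw [show i + -(2 * r) + 2 * r = i by ring,
          show m + (i + -(2 * r)) = m + (i - 2 * r) by ring]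
        ring
      rw [hsum]
      ring
    exact Stmt13.mix_full μ hμ hp0 (show l - 2 * r < -r by omega)
      (IsUnit.of_mul_eq_one lamr hL1) hUS (Or.inr (by omega)) hA hB
end
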